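/- arXiv:2309.04983 — 4 statements merged into one kernel-verified Lean document; each statement's English description precedes it below -/
import Mathlib

section
/- Let F and G be non-zero polynomials in ℝ[x₁, x₂] of total degrees m and n, respectively. Then the set of real solutions (x₁, x₂) ∈ ℝ² of the system F = G = 0 is either infinite or has at most m·n elements. -/
set_option maxHeartbeats 1000000
set_option synthInstance.maxHeartbeats 1000000
open MvPolynomial

namespace RB


lemma sum_fin2 (s : Fin 2 →₀ ℕ) : (s.sum fun _ e => e) = s 0 + s 1 := by
  rw [Finsupp.sum_fintype _ _ (fun _ => rfl), Fin.sum_univ_two]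

/-- total degree is additive on products over ℝ -/
lemma td_mul_eq {p q : MvPolynomial (Fin 2) ℝ} (hp : p ≠ 0) (hq : q ≠ 0) :
    (p * q).totalDegree = p.totalDegree + q.totalDegree := by
  refine le_antisymm (totalDegree_mul p q) ?_
  classical
  -- pick top monomials with maximal first coordinate
  obtain ⟨u, hu, hutop⟩ := Finset.exists_max_image
    (p.support.filter fun s => (s.sum fun _ e => e) = p.totalDegree) (fun s => s 0)
    (by
      obtain ⟨s, hs, hstop⟩ := Finset.exists_mem_eq_sup p.support
        (by simpa using hp) (fun s => s.sum fun _ e => e)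
      exact ⟨s, Finset.mem_filter.2 ⟨hs, hstop.symm⟩⟩)
  obtain ⟨v, hv, hvtop⟩ := Finset.exists_max_image
    (q.support.filter fun s => (s.sum fun _ e => e) = q.totalDegree) (fun s => s 0)
    (by
      obtain ⟨s, hs, hstop⟩ := Finset.exists_mem_eq_sup q.support
        (by simpa using hq) (fun s => s.sum fun _ e => e)
      exact ⟨s, Finset.mem_filter.2 ⟨hs, hstop.symm⟩⟩)
  rw [Finset.mem_filter] at hu hv
  have hcoeff : (p * q).coeff (u + v) = p.coeff u * q.coeff v := by
    rw [coeff_mul]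
    rw [Finset.sum_eq_single_of_mem (u, v) (Finset.HasAntidiagonal.mem_antidiagonal.2 rfl)]
    · rintro ⟨A,B⟩ hab hne
      simp only at *
      have hab' : A + B = u + v := Finset.HasAntidiagonal.mem_antidiagonal.1 hab
      by_cases h1 : p.coeff A = 0
      · simp [h1]
      by_cases h2 : q.coeff B = 0
      · simp [h2]
      exfalso
      have hm1 : A ∈ p.support := mem_support_iff.2 h1
      have hm2 : B ∈ q.support := mem_support_iff.2 h2
      have d1 : (A.sum fun _ e => e) ≤ p.totalDegree := le_totalDegree hm1
      have d2 : (B.sum fun _ e => e) ≤ q.totalDegree := le_totalDegree hm2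
      have hsum : (A.sum fun _ e => e) + (B.sum fun _ e => e)
          = p.totalDegree + q.totalDegree := by
        have := congrArg (fun s : Fin 2 →₀ ℕ => s.sum fun _ e => e) hab'
        simp only [sum_fin2] at this ⊢
        have h0 : A 0 + B 0 = u 0 + v 0 := by
          have := congrArg (fun s : Fin 2 →₀ ℕ => s 0) hab'
          simpa [hu.2, hv.2] using this
        have h1' : A 1 + B 1 = u 1 + v 1 := by
          have := congrArg (fun s : Fin 2 →₀ ℕ => s 1) hab'
          simpa using this
        rw [← hu.2, ← hv.2, sum_fin2, sum_fin2]
        omega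
      have e1 : (A.sum fun _ e => e) = p.totalDegree := by omega
      have e2 : (B.sum fun _ e => e) = q.totalDegree := by omega
      have hab1 : A 0 ≤ u 0 := hutop _ (Finset.mem_filter.2 ⟨hm1, e1⟩)
      have hab2 : B 0 ≤ v 0 := hvtop _ (Finset.mem_filter.2 ⟨hm2, e2⟩)
      have h0 : A 0 + B 0 = u 0 + v 0 := by
        have := congrArg (fun s : Fin 2 →₀ ℕ => s 0) hab'
        simpa using this
      have hab1' : A 0 = u 0 := by omega
      have hab2' : B 0 = v 0 := by omega
      have hone1 : A 1 = u 1 := by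
        have := e1; rw [sum_fin2] at this
        have hu2 := hu.2; rw [sum_fin2] at hu2
        omega
      have hone2 : B 1 = v 1 := by
        have := e2; rw [sum_fin2] at this
        have hv2 := hv.2; rw [sum_fin2] at hv2
        omega
      apply hne
      have hA : A = u := by
        ext i; fin_cases i
        · exact hab1'
        · exact hone1
      have hB : B = v := by
        ext i; fin_cases i
        · exact hab2'
        · exact hone2
      rw [hA, hB]
  have hne : (p * q).coeff (u + v) ≠ 0 := by
    rw [hcoeff]
    exact mul_ne_zero (mem_support_iff.1 hu.1) (mem_support_iff.1 hv.1)
  calc p.totalDegree + q.totalDegree = ((u + v).sum fun _ e => e) := by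
        rw [sum_fin2, ← hu.2, ← hv.2, sum_fin2, sum_fin2]; simp; ring
    _ ≤ (p * q).totalDegree := le_totalDegree (mem_support_iff.2 hne)



def T (d : ℕ) : ℕ := ∑ i ∈ Finset.range (d + 1), (i + 1)

lemma two_T (d : ℕ) : 2 * T d = (d + 1) * (d + 2) := by
  induction d with
  | zero => rfl
  | succ n ih =>
    rw [T, Finset.sum_range_succ, Nat.mul_add, ← T, ih]; ring

/-- the exponent sets -/
def ES (d : ℕ) : Finset (ℕ × ℕ) := (Finset.range (d + 1)).biUnion Finset.HasAntidiagonal.antidiagonal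

lemma mem_ES {d : ℕ} {ab : ℕ × ℕ} : ab ∈ ES d ↔ ab.1 + ab.2 ≤ d := by
  simp only [ES, Finset.mem_biUnion, Finset.mem_range, Finset.HasAntidiagonal.mem_antidiagonal]
  constructor
  · rintro ⟨i, hi, rfl⟩; omega
  · intro h; exact ⟨ab.1 + ab.2, by omega, rfl⟩

lemma card_ES (d : ℕ) : (ES d).card = T d := by
  rw [ES, Finset.card_biUnion]
  · simp [T, Finset.Nat.card_antidiagonal]
  · intro i _ j _ hij
    simp only [Finset.disjoint_left, Finset.HasAntidiagonal.mem_antidiagonal]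
    rintro a rfl h; exact hij h

noncomputable def expEquiv (d : ℕ) :
    {s : Fin 2 →₀ ℕ | (s.sum fun _ e => e) ≤ d} ≃ ES d where
  toFun s := ⟨(s.1 0, s.1 1), by
    have := s.2
    simp only [Set.mem_setOf_eq] at this
    rw [Finsupp.sum_fintype _ _ (fun _ => rfl), Fin.sum_univ_two] at this
    exact mem_ES.2 this⟩
  invFun ab := ⟨Finsupp.equivFunOnFinite.symm ![ab.1.1, ab.1.2], by
    have := mem_ES.1 ab.2
    simp only [Set.mem_setOf_eq]
    rw [Finsupp.sum_fintype _ _ (fun _ => rfl), Fin.sum_univ_two]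
    simpa using this⟩
  left_inv s := by
    ext i
    fin_cases i <;> simp
  right_inv ab := by
    ext <;> simp

lemma finrank_V (d : ℕ) :
    Module.finrank ℝ (restrictTotalDegree (Fin 2) ℝ d) = T d := by
  classical
  have b := basisRestrictSupport ℝ {s : Fin 2 →₀ ℕ | (s.sum fun _ e => e) ≤ d}
  haveI : Fintype {s : Fin 2 →₀ ℕ | (s.sum fun _ e => e) ≤ d} :=
    Fintype.ofEquiv _ (expEquiv d).symm
  have : restrictTotalDegree (Fin 2) ℝ d
      = restrictSupport ℝ {s : Fin 2 →₀ ℕ | (s.sum fun _ e => e) ≤ d} := rfl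
  rw [this, Module.finrank_eq_card_basis b, Fintype.card_congr (expEquiv d), ← card_ES d,
    Fintype.card_coe]




-- interpolation
lemma interp (S : Finset (Fin 2 → ℝ)) (p : Fin 2 → ℝ) (hp : p ∈ S) :
    ∃ P : MvPolynomial (Fin 2) ℝ, P.totalDegree ≤ S.card ∧ eval p P ≠ 0 ∧
      ∀ q ∈ S, q ≠ p → eval q P = 0 := by
  classical
  refine ⟨∏ q ∈ S.erase p, (if q 0 = p 0 then (X 1 - C (q 1)) else (X 0 - C (q 0))), ?_, ?_, ?_⟩
  · refine (totalDegree_finset_prod _ _).trans ?_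
    calc ∑ q ∈ S.erase p, ((if q 0 = p 0 then (X 1 - C (q 1)) else (X 0 - C (q 0))) :
          MvPolynomial (Fin 2) ℝ).totalDegree
        ≤ ∑ _q ∈ S.erase p, 1 := by
          refine Finset.sum_le_sum fun q _ => ?_
          split <;>
            exact (totalDegree_sub _ _).trans (by simp [totalDegree_X])
      _ ≤ S.card := by simp [Finset.card_erase_of_mem hp]
  · rw [map_prod]
    refine Finset.prod_ne_zero_iff.2 fun q hq => ?_
    have hqp : q ≠ p := Finset.ne_of_mem_erase hq
    split
    · rename_i h0
      have : q 1 ≠ p 1 := by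
        intro h1; apply hqp; funext i; fin_cases i <;> simp [h0, h1]
      simp [sub_ne_zero]; exact fun hc => this hc.symm
    · rename_i h0
      simp [sub_ne_zero]; exact fun hc => h0 hc.symm
  · intro q hq hqp
    rw [map_prod]
    refine Finset.prod_eq_zero (Finset.mem_erase.2 ⟨hqp, hq⟩) ?_
    split <;> simp

noncomputable def evL (x : Fin 2 → ℝ) : MvPolynomial (Fin 2) ℝ →ₗ[ℝ] ℝ where
  toFun := eval x
  map_add' := by simp
  map_smul' := by simp [MvPolynomial.smul_eval]

lemma coprime_card (F G : MvPolynomial (Fin 2) ℝ) (hF : F ≠ 0) (hG : G ≠ 0)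
    (hrp : IsRelPrime F G) (S : Finset (Fin 2 → ℝ))
    (hS : ∀ p ∈ S, eval p F = 0 ∧ eval p G = 0) :
    S.card ≤ F.totalDegree * G.totalDegree := by
  classical
  set m := F.totalDegree with hm
  set n := G.totalDegree with hn
  set N := S.card with hN
  set d := m + n + N with hd
  set Vd := restrictTotalDegree (Fin 2) ℝ d with hVd
  set VF := restrictTotalDegree (Fin 2) ℝ (n + N) with hVF
  set VG := restrictTotalDegree (Fin 2) ℝ (m + N) with hVG
  set VN := restrictTotalDegree (Fin 2) ℝ N with hVN
  -- evaluation map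
  set ev : Vd →ₗ[ℝ] (S → ℝ) :=
    (LinearMap.pi fun p : S => evL p.1).comp Vd.subtype with hev
  -- surjectivity of ev
  have hsurj : Function.Surjective ev := by
    rw [← LinearMap.range_eq_top]
    rw [Submodule.eq_top_iff']
    intro v
    have hsingle : ∀ (p : S) (c : ℝ), (Pi.single p c : S → ℝ) ∈ LinearMap.range ev := by
      rintro ⟨p, hp⟩ c
      obtain ⟨P, hPd, hPp, hPq⟩ := interp S p hp
      refine ⟨⟨(c * (eval p P)⁻¹) • P, ?_⟩, ?_⟩
      · rw [mem_restrictTotalDegree]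
        exact (totalDegree_smul_le _ _).trans (hPd.trans (by omega))
      · funext q
        simp only [hev, LinearMap.comp_apply, LinearMap.pi_apply, Submodule.coe_subtype, evL,
          LinearMap.coe_mk, AddHom.coe_mk, MvPolynomial.smul_eval]
        rcases eq_or_ne q ⟨p, hp⟩ with rfl | hne
        · simp [Pi.single_apply, mul_assoc, inv_mul_cancel₀ hPp]
        · rw [hPq q.1 q.2 (by simpa [Subtype.ext_iff] using hne)]
          have hne' : ¬ (q = (⟨p, hp⟩ : S)) := hne
          rw [Pi.single_apply, if_neg hne', mul_zero]
    have : v = ∑ p : S, Pi.single p (v p) := by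
      rw [Finset.univ_sum_single]
    rw [this]
    exact Submodule.sum_mem _ fun p _ => hsingle p (v p)
  -- the multiplication map
  have memΦ : ∀ (A : VF) (B : VG), (A.1 * F + B.1 * G).totalDegree ≤ d := by
    rintro A B
    refine (totalDegree_add _ _).trans (max_le ?_ ?_)
    · exact (totalDegree_mul _ _).trans (by
        have := (mem_restrictTotalDegree _ _ _).1 A.2
        omega)
    · exact (totalDegree_mul _ _).trans (by
        have := (mem_restrictTotalDegree _ _ _).1 B.2
        omega)
  set Φ : (VF × VG) →ₗ[ℝ] Vd :=
    { toFun := fun AB => ⟨AB.1.1 * F + AB.2.1 * G, (mem_restrictTotalDegree _ _ _).2 (memΦ _ _)⟩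
      map_add' := by
        rintro ⟨A, B⟩ ⟨A', B'⟩
        apply Subtype.ext
        simp only [Prod.fst_add, Prod.snd_add, Submodule.coe_add]
        ring
      map_smul' := by
        rintro c ⟨A, B⟩
        apply Subtype.ext
        simp only [Prod.smul_fst, Prod.smul_snd, SetLike.val_smul, smul_eq_C_mul,
          RingHom.id_apply]
        ring } with hΦ
  -- the kernel injection
  have memι1 : ∀ (C : VN), ((C : MvPolynomial (Fin 2) ℝ) * G).totalDegree ≤ n + N := by
    intro C
    exact (totalDegree_mul _ _).trans (by
      have := (mem_restrictTotalDegree _ _ _).1 C.2; omega)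
  have memι2 : ∀ (C : VN), (-((C : MvPolynomial (Fin 2) ℝ) * F)).totalDegree ≤ m + N := by
    intro C
    rw [totalDegree_neg]
    exact (totalDegree_mul _ _).trans (by
      have := (mem_restrictTotalDegree _ _ _).1 C.2; omega)
  set ι : VN →ₗ[ℝ] (VF × VG) :=
    { toFun := fun C => (⟨C.1 * G, (mem_restrictTotalDegree _ _ _).2 (memι1 C)⟩,
        ⟨-(C.1 * F), (mem_restrictTotalDegree _ _ _).2 (memι2 C)⟩)
      map_add' := by
        rintro C C'
        apply Prod.ext <;> apply Subtype.ext <;>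
          simp only [Submodule.coe_add, Prod.fst_add, Prod.snd_add] <;> ring
      map_smul' := by
        rintro c C
        apply Prod.ext <;> apply Subtype.ext <;>
          simp only [SetLike.val_smul, smul_eq_C_mul, RingHom.id_apply, Prod.smul_fst,
            Prod.smul_snd] <;> ring } with hι
  have hι_inj : Function.Injective ι := by
    rw [injective_iff_map_eq_zero]
    intro C hC
    have h1 : (C : MvPolynomial (Fin 2) ℝ) * G = 0 := by
      have := congrArg (fun x : VF × VG => (x.1 : MvPolynomial (Fin 2) ℝ)) hC
      simpa [hι] using this
    rcases mul_eq_zero.1 h1 with h | h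
    · exact Subtype.ext h
    · exact absurd h hG
  have hkerΦ : LinearMap.ker Φ ≤ LinearMap.range ι := by
    rintro ⟨A, B⟩ hAB
    have h0 : A.1 * F + B.1 * G = 0 := by
      have := congrArg (fun x : Vd => (x : MvPolynomial (Fin 2) ℝ)) hAB
      simpa [hΦ] using this
    have hdvd : G ∣ A.1 := by
      refine hrp.symm.dvd_of_dvd_mul_right (y := A.1) ⟨-B.1, ?_⟩
      linear_combination h0
    obtain ⟨C0, hC0⟩ := hdvd
    rcases eq_or_ne C0 0 with rfl | hC0ne
    · rw [mul_zero] at hC0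
      have hB : B.1 * G = 0 := by rw [hC0] at h0; simpa using h0
      have hB0 : B.1 = 0 := by
        rcases mul_eq_zero.1 hB with h | h
        · exact h
        · exact absurd h hG
      refine ⟨0, ?_⟩
      apply Prod.ext <;> apply Subtype.ext <;> simp [hι, hC0, hB0]
    · have hdC : C0.totalDegree ≤ N := by
        have := td_mul_eq hG hC0ne
        have hA : A.1.totalDegree ≤ n + N := (mem_restrictTotalDegree _ _ _).1 A.2
        rw [← hC0] at this
        omega
      have hBval : B.1 = -(C0 * F) := by
        have hG0 : G * (C0 * F + B.1) = 0 := by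
          rw [hC0] at h0; ring_nf; ring_nf at h0; linear_combination h0
        rcases mul_eq_zero.1 hG0 with h | h
        · exact absurd h hG
        · linear_combination h
      refine ⟨⟨C0, (mem_restrictTotalDegree _ _ _).2 hdC⟩, ?_⟩
      apply Prod.ext <;> apply Subtype.ext
      · simp only [hι, LinearMap.coe_mk, AddHom.coe_mk]; rw [hC0]; ring
      · simp only [hι, LinearMap.coe_mk, AddHom.coe_mk]; rw [hBval]
  have hrangeΦ : LinearMap.range Φ ≤ LinearMap.ker ev := by
    rintro x ⟨⟨A, B⟩, rfl⟩
    rw [LinearMap.mem_ker]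
    funext p
    have := hS p.1 p.2
    simp [hΦ, hev, evL, this.1, this.2]
  -- rank computations
  have e1 : Module.finrank ℝ Vd = Module.finrank ℝ (LinearMap.ker ev) + N := by
    have := LinearMap.finrank_range_add_finrank_ker ev
    rw [LinearMap.range_eq_top.2 hsurj] at this
    rw [← this]
    have : Module.finrank ℝ (⊤ : Submodule ℝ (S → ℝ)) = N := by
      rw [finrank_top, Module.finrank_pi, Fintype.card_coe]
    omega
  have e2 : Module.finrank ℝ (VF × VG)
      = Module.finrank ℝ (LinearMap.range Φ) + Module.finrank ℝ (LinearMap.ker Φ) :=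
    (LinearMap.finrank_range_add_finrank_ker Φ).symm
  have e3 : Module.finrank ℝ (LinearMap.ker Φ) ≤ T N := by
    calc Module.finrank ℝ (LinearMap.ker Φ) ≤ Module.finrank ℝ (LinearMap.range ι) :=
          Submodule.finrank_mono hkerΦ
      _ = Module.finrank ℝ VN := LinearMap.finrank_range_of_inj hι_inj
      _ = T N := finrank_V N
  have e4 : Module.finrank ℝ (LinearMap.range Φ) ≤ Module.finrank ℝ (LinearMap.ker ev) :=
    Submodule.finrank_mono hrangeΦ
  have e5 : Module.finrank ℝ (VF × VG) = T (n + N) + T (m + N) := by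
    rw [Module.finrank_prod, finrank_V, finrank_V]
  have e6 : Module.finrank ℝ Vd = T d := finrank_V d
  -- the combinatorial identity
  have key : T (m + n + N) + T N = T (n + N) + T (m + N) + m * n := by
    have h2 : 2 * T (m + n + N) + 2 * T N = 2 * T (n + N) + 2 * T (m + N) + 2 * (m * n) := by
      rw [two_T, two_T, two_T, two_T]; ring
    obtain ⟨k, hk⟩ : ∃ k, m * n = k := ⟨_, rfl⟩
    rw [hk] at h2 ⊢
    generalize T (m + n + N) = a at h2 ⊢
    generalize T N = b at h2 ⊢
    generalize T (n + N) = c at h2 ⊢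
    generalize T (m + N) = e at h2 ⊢
    omega
  have h6 : Module.finrank ℝ Vd = T (m + n + N) := by rw [e6, hd]
  obtain ⟨k, hk⟩ : ∃ k, m * n = k := ⟨_, rfl⟩
  rw [hk] at key ⊢
  omega


end RB

namespace RB2


noncomputable def lineX (D : MvPolynomial (Fin 2) ℝ) (c : ℝ) : Polynomial ℝ :=
  MvPolynomial.aeval ![Polynomial.X, Polynomial.C c] D

noncomputable def lineY (D : MvPolynomial (Fin 2) ℝ) (c : ℝ) : Polynomial ℝ :=
  MvPolynomial.aeval ![Polynomial.C c, Polynomial.X] D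

lemma eval_lineX (D : MvPolynomial (Fin 2) ℝ) (c s : ℝ) :
    (lineX D c).eval s = MvPolynomial.eval ![s, c] D := by
  have h := congrArg (fun ψ => ψ D)
    (MvPolynomial.comp_aeval (R := ℝ) (φ := Polynomial.aeval s)
      (f := ![Polynomial.X, Polynomial.C c]))
  simp only [AlgHom.coe_comp, Function.comp_apply] at h
  have h2 : (MvPolynomial.aeval fun i => Polynomial.aeval s (![Polynomial.X, Polynomial.C c] i)) D
      = MvPolynomial.eval ![s, c] D := by
    have : (fun i => Polynomial.aeval s (![Polynomial.X, Polynomial.C c] i)) = ![s, c] := by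
      funext i; fin_cases i <;> simp
    rw [this, ← MvPolynomial.coe_aeval_eq_eval]
    rfl
  rw [lineX, ← h2, ← h, Polynomial.aeval_def]
  rfl

lemma eval_lineY (D : MvPolynomial (Fin 2) ℝ) (c s : ℝ) :
    (lineY D c).eval s = MvPolynomial.eval ![c, s] D := by
  have h := congrArg (fun ψ => ψ D)
    (MvPolynomial.comp_aeval (R := ℝ) (φ := Polynomial.aeval s)
      (f := ![Polynomial.C c, Polynomial.X]))
  simp only [AlgHom.coe_comp, Function.comp_apply] at h
  have h2 : (MvPolynomial.aeval fun i => Polynomial.aeval s (![Polynomial.C c, Polynomial.X] i)) D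
      = MvPolynomial.eval ![c, s] D := by
    have : (fun i => Polynomial.aeval s (![Polynomial.C c, Polynomial.X] i)) = ![c, s] := by
      funext i; fin_cases i <;> simp
    rw [this, ← MvPolynomial.coe_aeval_eq_eval]
    rfl
  rw [lineY, ← h2, ← h, Polynomial.aeval_def]
  rfl

lemma derivative_lineX (D : MvPolynomial (Fin 2) ℝ) (c : ℝ) :
    (lineX D c).derivative = lineX (pderiv 0 D) c := by
  induction D using MvPolynomial.induction_on with
  | C a => simp [lineX]
  | add p q hp hq => simp only [lineX, map_add, Polynomial.derivative_add] at *; rw [hp, hq]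
  | mul_X p i hp =>
    simp only [lineX, map_mul] at *
    rw [Polynomial.derivative_mul, hp, pderiv_mul, map_add, map_mul, map_mul]
    fin_cases i <;> simp [pderiv_X]


-- continuation of d (will be concatenated); assume inside namespace RB2 with d contents
lemma helper_pos (D : MvPolynomial (Fin 2) ℝ)
    (hfin : {x : Fin 2 → ℝ | MvPolynomial.eval x D = 0}.Finite)
    (p : Fin 2 → ℝ) (hp : MvPolynomial.eval p D = 0)
    (hpos : 0 < MvPolynomial.eval p (pderiv 0 D)) : False := by
  set a := p 0 with ha
  set b := p 1 with hb
  have hpab : p = ![a, b] := by funext i; fin_cases i <;> rfl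
  set q : Polynomial ℝ := lineX D b with hq
  have hq0 : q.eval a = 0 := by rw [eval_lineX, ← hpab, hp]
  have hqd : q.derivative.eval a = MvPolynomial.eval p (pderiv 0 D) := by
    rw [derivative_lineX, eval_lineX, ← hpab]
  -- derivative positive in a neighborhood
  have hcont : Continuous fun s => q.derivative.eval s := Polynomial.continuous _
  have hev : ∀ᶠ s in nhds a, 0 < q.derivative.eval s := by
    have : Filter.Tendsto (fun s => q.derivative.eval s) (nhds a)
        (nhds (q.derivative.eval a)) := hcont.continuousAt
    apply this.eventually
    apply eventually_gt_nhds
    rw [hqd]; exact hpos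
  obtain ⟨δ, hδpos, hδ⟩ := Metric.eventually_nhds_iff.mp hev
  set ε := δ / 2 with hε
  have hεpos : 0 < ε := by positivity
  have hmono : StrictMonoOn (fun s => q.eval s) (Set.Icc (a - ε) (a + ε)) := by
    apply strictMonoOn_of_deriv_pos (convex_Icc _ _) ((Polynomial.continuous q).continuousOn)
    intro x hx
    rw [interior_Icc, Set.mem_Ioo] at hx
    rw [Polynomial.deriv]
    apply hδ
    rw [Real.dist_eq, abs_lt]
    constructor <;> [linarith; linarith]
  have hlo : q.eval (a - ε) < 0 := by
    have := hmono (Set.mem_Icc.2 ⟨by linarith, by linarith⟩)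
      (Set.mem_Icc.2 ⟨by linarith, by linarith⟩) (show a - ε < a by linarith)
    simpa [hq0] using this
  have hhi : 0 < q.eval (a + ε) := by
    have := hmono (Set.mem_Icc.2 ⟨by linarith, by linarith⟩)
      (Set.mem_Icc.2 ⟨by linarith, by linarith⟩) (show a < a + ε by linarith)
    simpa [hq0] using this
  -- continuity in the second variable
  have hvhi : (lineY D (a + ε)).eval b = q.eval (a + ε) := by
    rw [eval_lineY, hq, eval_lineX]
  have hvlo : (lineY D (a - ε)).eval b = q.eval (a - ε) := by
    rw [eval_lineY, hq, eval_lineX]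
  have hfhi : ∀ᶠ t in nhds b, 0 < (lineY D (a + ε)).eval t := by
    have hc : Continuous fun t => (lineY D (a + ε)).eval t := Polynomial.continuous _
    have ht := hc.continuousAt (x := b)
    exact ht.eventually (eventually_gt_nhds (by show (0:ℝ) < Polynomial.eval b (lineY D (a + ε)); rw [hvhi]; exact hhi))
  have hflo : ∀ᶠ t in nhds b, (lineY D (a - ε)).eval t < 0 := by
    have hc : Continuous fun t => (lineY D (a - ε)).eval t := Polynomial.continuous _
    have ht := hc.continuousAt (x := b)
    exact ht.eventually (eventually_lt_nhds (by show Polynomial.eval b (lineY D (a - ε)) < 0; rw [hvlo]; exact hlo))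
  obtain ⟨η, hηpos, hη⟩ := Metric.eventually_nhds_iff.mp (hfhi.and hflo)
  -- infinite family of zeros
  set tk : ℕ → ℝ := fun k => b + η / (k + 2) with htk
  have htk_mem : ∀ k : ℕ, dist (tk k) b < η := by
    intro k
    rw [Real.dist_eq]
    have h1 : (0:ℝ) < (k:ℝ) + 2 := by positivity
    have h2 : 0 < η / ((k:ℝ) + 2) := by positivity
    rw [htk]
    simp only [add_sub_cancel_left]
    rw [abs_of_pos h2]
    rw [div_lt_iff₀ h1]
    nlinarith
  have hzero : ∀ k : ℕ, ∃ s ∈ Set.Icc (a - ε) (a + ε),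
      MvPolynomial.eval ![s, tk k] D = 0 := by
    intro k
    have hcont2 : ContinuousOn (fun s => (lineX D (tk k)).eval s) (Set.Icc (a - ε) (a + ε)) :=
      (Polynomial.continuous _).continuousOn
    have hiv := intermediate_value_Icc (show a - ε ≤ a + ε by linarith) hcont2
    have hzmem : (0:ℝ) ∈ Set.Icc ((lineX D (tk k)).eval (a - ε)) ((lineX D (tk k)).eval (a + ε)) := by
      have h1 := (hη (htk_mem k)).1
      have h2 := (hη (htk_mem k)).2
      rw [eval_lineY] at h1 h2
      rw [Set.mem_Icc]
      constructor
      · rw [eval_lineX]; linarith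
      · rw [eval_lineX]; linarith
    obtain ⟨s, hs, hs0⟩ := hiv hzmem
    exact ⟨s, hs, by rw [← eval_lineX]; exact hs0⟩
  choose sk hsk1 hsk2 using hzero
  have hinj : Function.Injective (fun k : ℕ => (![sk k, tk k] : Fin 2 → ℝ)) := by
    intro k l hkl
    have : tk k = tk l := by
      have := congrFun hkl 1
      simpa using this
    rw [htk] at this
    simp only [add_right_inj] at this
    have h1 : ((k:ℝ) + 2) ≠ 0 := by positivity
    have h2 : ((l:ℝ) + 2) ≠ 0 := by positivity
    rw [div_eq_div_iff h1 h2] at this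
    have hηne : η ≠ 0 := ne_of_gt hηpos
    have h3 : ((l:ℝ) + 2) = ((k:ℝ) + 2) := by
      apply mul_left_cancel₀ hηne
      linarith [this]
    have : (k:ℝ) = (l:ℝ) := by linarith
    exact_mod_cast this
  exact (Set.infinite_of_injective_forall_mem hinj (fun k => hsk2 k)) hfin

lemma pderiv0_at_iso (D : MvPolynomial (Fin 2) ℝ)
    (hfin : {x : Fin 2 → ℝ | MvPolynomial.eval x D = 0}.Finite)
    (p : Fin 2 → ℝ) (hp : MvPolynomial.eval p D = 0) :
    MvPolynomial.eval p (pderiv 0 D) = 0 := by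
  by_contra hne
  rcases lt_or_gt_of_ne hne with hlt | hgt
  · apply helper_pos (-D) (by simpa using hfin) p (by simpa using hp)
    rw [map_neg, map_neg]
    linarith
  · exact helper_pos D hfin p hp hgt

-- continuation: degree of pderiv, wrappers, induction, main theorem
lemma td_pderiv_le (D : MvPolynomial (Fin 2) ℝ) (h : pderiv 0 D ≠ 0) :
    (pderiv 0 D).totalDegree + 1 ≤ D.totalDegree := by
  classical
  obtain ⟨t, ht, htd⟩ := Finset.exists_mem_eq_sup (pderiv 0 D).support
    (by simpa using h) (fun s => s.sum fun _ e => e)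
  have key : ∃ s ∈ D.support, t = s - Finsupp.single 0 1 ∧ s 0 ≠ 0 := by
    have hco : MvPolynomial.coeff t (pderiv 0 D) ≠ 0 := MvPolynomial.mem_support_iff.1 ht
    have hrepr : pderiv 0 D
        = ∑ s ∈ D.support, MvPolynomial.monomial (s - Finsupp.single 0 1)
            (MvPolynomial.coeff s D * s 0) := by
      conv_lhs => rw [D.as_sum]
      rw [map_sum]
      refine Finset.sum_congr rfl fun s _ => ?_
      rw [pderiv_monomial]
    rw [hrepr, MvPolynomial.coeff_sum] at hco
    obtain ⟨s, hs, hsne⟩ := Finset.exists_ne_zero_of_sum_ne_zero hco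
    rw [MvPolynomial.coeff_monomial] at hsne
    by_cases he : s - Finsupp.single 0 1 = t
    · refine ⟨s, hs, he.symm, ?_⟩
      intro h0
      rw [if_pos he, h0] at hsne
      simp at hsne
    · rw [if_neg he] at hsne; exact absurd rfl hsne
  obtain ⟨s, hs, hts, hs0⟩ := key
  have hsum : (s.sum fun _ e => e) ≤ D.totalDegree := MvPolynomial.le_totalDegree hs
  have h0 : t 0 = s 0 - 1 := by rw [hts, Finsupp.tsub_apply]; simp
  have h1 : t 1 = s 1 := by rw [hts, Finsupp.tsub_apply]; simp [Finsupp.single_apply]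
  have htd2 : ((pderiv 0) D).totalDegree = t 0 + t 1 := by
    rw [MvPolynomial.totalDegree, htd, RB.sum_fin2]
  rw [htd2, h0, h1]
  rw [RB.sum_fin2] at hsum
  omega

lemma zeroset_empty_of_pderiv0 (D : MvPolynomial (Fin 2) ℝ)
    (h0 : pderiv 0 D = 0)
    (hfin : {x : Fin 2 → ℝ | MvPolynomial.eval x D = 0}.Finite) :
    {x : Fin 2 → ℝ | MvPolynomial.eval x D = 0} = ∅ := by
  by_contra hne
  obtain ⟨p, hp⟩ := Set.nonempty_iff_ne_empty.2 hne
  have hpab : p = ![p 0, p 1] := by funext i; fin_cases i <;> rfl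
  have hqd : (lineX D (p 1)).derivative = 0 := by
    rw [derivative_lineX, h0]
    simp [lineX]
  obtain ⟨c, hc⟩ : ∃ c, lineX D (p 1) = Polynomial.C c :=
    ⟨_, Polynomial.eq_C_of_derivative_eq_zero hqd⟩
  have hval : ∀ s : ℝ, MvPolynomial.eval ![s, p 1] D = 0 := by
    intro s
    have h1 : MvPolynomial.eval ![s, p 1] D = c := by
      rw [← eval_lineX, hc]; simp
    have h2 : MvPolynomial.eval ![p 0, p 1] D = c := by
      rw [← eval_lineX, hc]; simp
    rw [h1]
    rw [← h2, ← hpab]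
    exact hp
  have hinj : Function.Injective (fun s : ℝ => (![s, p 1] : Fin 2 → ℝ)) := by
    intro x y hxy
    have := congrFun hxy 0
    simpa using this
  exact (Set.infinite_of_injective_forall_mem hinj hval) hfin

lemma coprime_zero_set (F G : MvPolynomial (Fin 2) ℝ) (hF : F ≠ 0) (hG : G ≠ 0)
    (hrp : IsRelPrime F G) :
    {x : Fin 2 → ℝ | MvPolynomial.eval x F = 0 ∧ MvPolynomial.eval x G = 0}.Finite ∧
    {x : Fin 2 → ℝ | MvPolynomial.eval x F = 0 ∧ MvPolynomial.eval x G = 0}.ncard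
      ≤ F.totalDegree * G.totalDegree := by
  classical
  set Z := {x : Fin 2 → ℝ | MvPolynomial.eval x F = 0 ∧ MvPolynomial.eval x G = 0} with hZ
  have hfin : Z.Finite := by
    by_contra hinf
    have hinf' : Z.Infinite := hinf
    obtain ⟨t, htsub, htcard⟩ :=
      hinf'.exists_subset_card_eq (F.totalDegree * G.totalDegree + 1)
    have := RB.coprime_card F G hF hG hrp t (fun p hp => htsub hp)
    omega
  refine ⟨hfin, ?_⟩
  have := RB.coprime_card F G hF hG hrp hfin.toFinset
    (fun p hp => hfin.mem_toFinset.mp hp)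
  rwa [Set.ncard_eq_toFinset_card Z hfin]

lemma single_card : ∀ d : ℕ, ∀ D : MvPolynomial (Fin 2) ℝ, D ≠ 0 → D.totalDegree ≤ d →
    {x : Fin 2 → ℝ | MvPolynomial.eval x D = 0}.Finite →
    {x : Fin 2 → ℝ | MvPolynomial.eval x D = 0}.ncard ≤ d * d := by
  intro d
  induction d using Nat.strong_induction_on with
  | _ d IH =>
  intro D hD hdeg hfin
  by_cases h0 : pderiv 0 D = 0
  · rw [zeroset_empty_of_pderiv0 D h0 hfin]
    simp
  · -- E := pderiv 0 D is nonzero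
    set E := pderiv 0 D with hE
    obtain ⟨a, b, c, hab, hca, hcb⟩ :=
      UniqueFactorizationMonoid.exists_reduced_factors D hD E
    have hc : c ≠ 0 := fun h => hD (by rw [← hca, h, zero_mul])
    have ha : a ≠ 0 := fun h => hD (by rw [← hca, h, mul_zero])
    have hb : b ≠ 0 := fun h => h0 (by rw [← hcb, h, mul_zero])
    set Zc := {x : Fin 2 → ℝ | MvPolynomial.eval x c = 0} with hZc
    set Zab := {x : Fin 2 → ℝ | MvPolynomial.eval x a = 0 ∧ MvPolynomial.eval x b = 0} with hZab
    have hsub : {x : Fin 2 → ℝ | MvPolynomial.eval x D = 0} ⊆ Zc ∪ Zab := by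
      intro p hp
      have hpD : MvPolynomial.eval p D = 0 := hp
      have hpE : MvPolynomial.eval p E = 0 := pderiv0_at_iso D hfin p hpD
      have h1 : MvPolynomial.eval p c * MvPolynomial.eval p a = 0 := by
        rw [← map_mul, hca]; exact hpD
      have h2 : MvPolynomial.eval p c * MvPolynomial.eval p b = 0 := by
        rw [← map_mul, hcb]; exact hpE
      by_cases hcp : MvPolynomial.eval p c = 0
      · exact Or.inl hcp
      · right
        constructor
        · rcases mul_eq_zero.1 h1 with h | h
          · exact absurd h hcp
          · exact h
        · rcases mul_eq_zero.1 h2 with h | h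
          · exact absurd h hcp
          · exact h
    have hZcsub : Zc ⊆ {x : Fin 2 → ℝ | MvPolynomial.eval x D = 0} := by
      intro p hp
      show MvPolynomial.eval p D = 0
      rw [← hca, map_mul]
      rw [hZc] at hp
      rw [Set.mem_setOf_eq] at hp
      rw [hp, zero_mul]
    have hZcfin : Zc.Finite := hfin.subset hZcsub
    -- degrees
    have htd : c.totalDegree + a.totalDegree = D.totalDegree := by
      rw [← hca]; exact (RB.td_mul_eq hc ha).symm
    have htdE : c.totalDegree + b.totalDegree = E.totalDegree := by
      rw [← hcb]; exact (RB.td_mul_eq hc hb).symm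
    have hElt : E.totalDegree + 1 ≤ D.totalDegree := td_pderiv_le D h0
    have hclt : c.totalDegree < d := by omega
    have hZcbound : Zc.ncard ≤ c.totalDegree * c.totalDegree :=
      IH c.totalDegree hclt c hc le_rfl hZcfin
    obtain ⟨hZabfin, hZabbound⟩ := coprime_zero_set a b ha hb hab
    calc {x : Fin 2 → ℝ | MvPolynomial.eval x D = 0}.ncard
        ≤ (Zc ∪ Zab).ncard := Set.ncard_le_ncard hsub (hZcfin.union hZabfin)
      _ ≤ Zc.ncard + Zab.ncard := Set.ncard_union_le _ _
      _ ≤ c.totalDegree * c.totalDegree + a.totalDegree * b.totalDegree := by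
          exact Nat.add_le_add hZcbound hZabbound
      _ ≤ d * d := by nlinarith [hdeg, htd, htdE, hElt]

end RB2

theorem real_bezout_projective (F G : MvPolynomial (Fin 2) ℝ) (hF : F ≠ 0) (hG : G ≠ 0)
    (m n : ℕ) (hm : F.totalDegree = m) (hn : G.totalDegree = n) :
    {x : Fin 2 → ℝ | MvPolynomial.eval x F = 0 ∧ MvPolynomial.eval x G = 0}.Infinite ∨
    {x : Fin 2 → ℝ | MvPolynomial.eval x F = 0 ∧ MvPolynomial.eval x G = 0}.ncard ≤ m * n := by
  classical
  rcases {x : Fin 2 → ℝ | MvPolynomial.eval x F = 0 ∧ MvPolynomial.eval x G = 0}.finite_or_infinite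
    with hfin | hinf
  · right
    obtain ⟨a, b, c, hab, hca, hcb⟩ :=
      UniqueFactorizationMonoid.exists_reduced_factors F hF G
    have hc : c ≠ 0 := fun h => hF (by rw [← hca, h, zero_mul])
    have ha : a ≠ 0 := fun h => hF (by rw [← hca, h, mul_zero])
    have hb : b ≠ 0 := fun h => hG (by rw [← hcb, h, mul_zero])
    set Z := {x : Fin 2 → ℝ | MvPolynomial.eval x F = 0 ∧ MvPolynomial.eval x G = 0} with hZ
    set Zc := {x : Fin 2 → ℝ | MvPolynomial.eval x c = 0} with hZc
    set Zab := {x : Fin 2 → ℝ | MvPolynomial.eval x a = 0 ∧ MvPolynomial.eval x b = 0} with hZab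
    have hZcsub : Zc ⊆ Z := by
      intro p hp
      rw [hZc, Set.mem_setOf_eq] at hp
      constructor
      · show MvPolynomial.eval p F = 0
        rw [← hca, map_mul, hp, zero_mul]
      · show MvPolynomial.eval p G = 0
        rw [← hcb, map_mul, hp, zero_mul]
    have hZcfin : Zc.Finite := hfin.subset hZcsub
    have hsub : Z ⊆ Zc ∪ Zab := by
      intro p hp
      obtain ⟨hpF, hpG⟩ := hp
      have h1 : MvPolynomial.eval p c * MvPolynomial.eval p a = 0 := by
        rw [← map_mul, hca]; exact hpF
      have h2 : MvPolynomial.eval p c * MvPolynomial.eval p b = 0 := by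
        rw [← map_mul, hcb]; exact hpG
      by_cases hcp : MvPolynomial.eval p c = 0
      · exact Or.inl hcp
      · right
        refine ⟨?_, ?_⟩
        · rcases mul_eq_zero.1 h1 with h | h
          · exact absurd h hcp
          · exact h
        · rcases mul_eq_zero.1 h2 with h | h
          · exact absurd h hcp
          · exact h
    have hZcbound : Zc.ncard ≤ c.totalDegree * c.totalDegree :=
      RB2.single_card c.totalDegree c hc le_rfl hZcfin
    obtain ⟨hZabfin, hZabbound⟩ := RB2.coprime_zero_set a b ha hb hab
    have htdF : c.totalDegree + a.totalDegree = m := by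
      rw [← hm, ← hca]; exact (RB.td_mul_eq hc ha).symm
    have htdG : c.totalDegree + b.totalDegree = n := by
      rw [← hn, ← hcb]; exact (RB.td_mul_eq hc hb).symm
    calc Z.ncard ≤ (Zc ∪ Zab).ncard := Set.ncard_le_ncard hsub (hZcfin.union hZabfin)
      _ ≤ Zc.ncard + Zab.ncard := Set.ncard_union_le _ _
      _ ≤ c.totalDegree * c.totalDegree + a.totalDegree * b.totalDegree :=
          Nat.add_le_add hZcbound hZabbound
      _ ≤ m * n := by nlinarith [htdF, htdG]
  · left; exact hinf
end

section
/- Let F and G be non-zero polynomials in ℝ[x₁, x₂] with deg_{x₁} F = m₁, deg_{x₂} F = m₂, deg_{x₁} G = n₁, deg_{x₂} G = n₂. Then the set of real solutions (x₁, x₂) ∈ ℝ² of the system F = G = 0 is either infinite or has at most m₁·n₂ + m₂·n₁ elements. -/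
noncomputable section RealBezoutAux
open Polynomial

namespace RealBezoutAux

abbrev RP := Polynomial ℝ
abbrev BP := Polynomial RP

/-- fiber polynomial: evaluate inner variable at `b`. -/
def fib (b : ℝ) (P : BP) : Polynomial ℝ := P.map (evalRingHom b)

/-- full evaluation -/
def evB (a b : ℝ) (P : BP) : ℝ := (fib b P).eval a

/-- common zero set -/
def Zs (P Q : BP) : Set (ℝ × ℝ) := {p | evB p.1 p.2 P = 0 ∧ evB p.1 p.2 Q = 0}

/-- inner degree -/
def d1 (P : BP) : ℕ := P.support.sup fun i => (P.coeff i).natDegree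

lemma fib_mul (b : ℝ) (P Q : BP) : fib b (P * Q) = fib b P * fib b Q :=
  Polynomial.map_mul _

lemma evB_mul (a b : ℝ) (P Q : BP) : evB a b (P * Q) = evB a b P * evB a b Q := by
  simp [evB, fib_mul]

lemma coeff_natDegree_le_d1 (P : BP) (i : ℕ) : (P.coeff i).natDegree ≤ d1 P := by
  by_cases h : i ∈ P.support
  · exact Finset.le_sup (f := fun i => (P.coeff i).natDegree) h
  · rw [Polynomial.notMem_support_iff.mp h]
    simp

lemma d1_derivative_le (P : BP) : d1 (derivative P) ≤ d1 P := by
  apply Finset.sup_le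
  intro i _
  rw [coeff_derivative]
  calc (P.coeff (i+1) * ((i:RP)+1)).natDegree ≤ (P.coeff (i+1)).natDegree + ((i:RP)+1).natDegree :=
        natDegree_mul_le
    _ ≤ d1 P + 0 := by
        refine Nat.add_le_add (coeff_natDegree_le_d1 P _) ?_
        have : ((i:RP)+1) = Polynomial.C ((i:ℝ)+1) := by
          simp only [map_add, map_natCast, map_one]
        rw [this, natDegree_C]
    _ = d1 P := by omega


lemma exists_max_d1 (P : BP) (hP : P ≠ 0) :
    ∃ i₀ ∈ P.support, (P.coeff i₀).natDegree = d1 P ∧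
      ∀ a ∈ P.support, i₀ < a → (P.coeff a).natDegree < d1 P := by
  classical
  set sP := P.support.filter (fun i => (P.coeff i).natDegree = d1 P) with hsP
  have hne : sP.Nonempty := by
    obtain ⟨i, hi, hisup⟩ := Finset.exists_mem_eq_sup P.support
      (Polynomial.support_nonempty.mpr hP) (fun i => (P.coeff i).natDegree)
    exact ⟨i, Finset.mem_filter.mpr ⟨hi, hisup.symm⟩⟩
  refine ⟨sP.max' hne, (Finset.mem_filter.mp (sP.max'_mem hne)).1,
    (Finset.mem_filter.mp (sP.max'_mem hne)).2, ?_⟩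
  intro a ha hlt
  rcases lt_or_eq_of_le (coeff_natDegree_le_d1 P a) with h | h
  · exact h
  · exact absurd (sP.le_max' a (Finset.mem_filter.mpr ⟨ha, h⟩)) (not_le.mpr hlt)

lemma le_d1_mul (P Q : BP) (hP : P ≠ 0) (hQ : Q ≠ 0) : d1 P + d1 Q ≤ d1 (P * Q) := by
  classical
  obtain ⟨i₀, hi₀s, hi₀d, hi₀max⟩ := exists_max_d1 P hP
  obtain ⟨j₀, hj₀s, hj₀d, hj₀max⟩ := exists_max_d1 Q hQ
  have hPc : P.coeff i₀ ≠ 0 := Polynomial.mem_support_iff.mp hi₀s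
  have hQc : Q.coeff j₀ ≠ 0 := Polynomial.mem_support_iff.mp hj₀s
  have hcoeff : ((P * Q).coeff (i₀ + j₀)).coeff (d1 P + d1 Q) =
      (P.coeff i₀).leadingCoeff * (Q.coeff j₀).leadingCoeff := by
    rw [Polynomial.coeff_mul, Polynomial.finset_sum_coeff]
    rw [Finset.sum_eq_single (i₀, j₀)]
    · rw [← hi₀d, ← hj₀d, Polynomial.coeff_mul_degree_add_degree]
    · rintro ⟨a, b⟩ hab hne
      have habs : a + b = i₀ + j₀ := Finset.HasAntidiagonal.mem_antidiagonal.mp hab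
      have : i₀ < a ∨ j₀ < b := by
        by_contra hcon
        push_neg at hcon
        have h1 : a = i₀ := by omega
        have h2 : b = j₀ := by omega
        exact hne (by rw [h1, h2])
      rcases this with h | h
      · by_cases hz : P.coeff a = 0
        · rw [hz, zero_mul, Polynomial.coeff_zero]
        · have hlt := hi₀max a (Polynomial.mem_support_iff.mpr hz) h
          apply Polynomial.coeff_eq_zero_of_natDegree_lt
          calc (P.coeff a * Q.coeff b).natDegree
              ≤ (P.coeff a).natDegree + (Q.coeff b).natDegree := natDegree_mul_le
            _ < d1 P + d1 Q := by
                have := coeff_natDegree_le_d1 Q b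
                omega
      · by_cases hz : Q.coeff b = 0
        · rw [hz, mul_zero, Polynomial.coeff_zero]
        · have hlt := hj₀max b (Polynomial.mem_support_iff.mpr hz) h
          apply Polynomial.coeff_eq_zero_of_natDegree_lt
          calc (P.coeff a * Q.coeff b).natDegree
              ≤ (P.coeff a).natDegree + (Q.coeff b).natDegree := natDegree_mul_le
            _ < d1 P + d1 Q := by
                have := coeff_natDegree_le_d1 P a
                omega
    · intro hnm
      simp at hnm
  have hne0 : ((P * Q).coeff (i₀ + j₀)).coeff (d1 P + d1 Q) ≠ 0 := by
    rw [hcoeff]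
    exact mul_ne_zero (Polynomial.leadingCoeff_ne_zero.mpr hPc)
      (Polynomial.leadingCoeff_ne_zero.mpr hQc)
  have h1 : d1 P + d1 Q ≤ ((P * Q).coeff (i₀ + j₀)).natDegree :=
    Polynomial.le_natDegree_of_ne_zero hne0
  exact h1.trans (coeff_natDegree_le_d1 _ _)


lemma evB_eq_sum (x y : ℝ) (g : BP) :
    evB x y g = ∑ i ∈ Finset.range (g.natDegree + 1), (g.coeff i).eval y * x ^ i := by
  rw [evB, fib, Polynomial.eval_eq_sum_range' (Nat.lt_succ_of_le natDegree_map_le)]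
  refine Finset.sum_congr rfl fun i _ => ?_
  rw [Polynomial.coeff_map, Polynomial.coe_evalRingHom]

lemma continuous_evB_snd (x : ℝ) (g : BP) : Continuous fun y => evB x y g := by
  have : (fun y => evB x y g) =
      fun y => ∑ i ∈ Finset.range (g.natDegree + 1), (g.coeff i).eval y * x ^ i := by
    funext y; exact evB_eq_sum x y g
  rw [this]
  exact continuous_finset_sum _ fun i _ =>
    ((g.coeff i).continuous_aeval.mul continuous_const)

lemma continuous_evB_fst (y : ℝ) (g : BP) : Continuous fun x => evB x y g :=
  (fib y g).continuous_aeval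

lemma infinite_of_line (P Q : BP) (b : ℝ) (hP : fib b P = 0) (hQ : fib b Q = 0) :
    (Zs P Q).Infinite := by
  refine Set.infinite_of_injective_forall_mem (f := fun a : ℝ => ((a, b) : ℝ × ℝ)) ?_ ?_
  · intro a a' h
    simpa using congrArg Prod.fst h
  · intro a
    exact ⟨by simp [evB, hP], by simp [evB, hQ]⟩

lemma infinite_of_simple_root (g : BP) (a b : ℝ) (h0 : evB a b g = 0)
    (h1 : evB a b (derivative g) ≠ 0) : (Zs g g).Infinite := by
  classical
  set q : Polynomial ℝ := fib b g with hq
  have hq0 : q.eval a = 0 := h0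
  have hqd : (derivative q).eval a ≠ 0 := by
    have : fib b (derivative g) = derivative q := by
      rw [hq, fib, fib, Polynomial.derivative_map]
    rw [evB, this] at h1
    exact h1
  set h : Polynomial ℝ := q / (X - C a) with hh
  have hfact : (X - C a) * h = q := Polynomial.mul_div_eq_iff_isRoot.mpr hq0
  have heval : ∀ t, q.eval t = (t - a) * h.eval t := by
    intro t
    rw [← hfact]
    simp
  have hha : h.eval a ≠ 0 := by
    have : derivative q = h + (X - C a) * derivative h := by
      rw [← hfact]
      rw [derivative_mul]
      simp [mul_comm]
    rw [this] at hqd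
    simpa using hqd
  -- find δ > 0 with h(a+δ)*h(a-δ) > 0
  have hφ : Continuous fun t : ℝ => h.eval (a + t) * h.eval (a - t) := by
    exact (h.continuous_aeval.comp (continuous_const.add continuous_id)).mul
      (h.continuous_aeval.comp (continuous_const.sub continuous_id))
  have h0mem : (0:ℝ) ∈ {t : ℝ | 0 < h.eval (a + t) * h.eval (a - t)} := by
    simp only [Set.mem_setOf_eq, add_zero, sub_zero]
    exact mul_pos_iff.mpr (by rcases hha.lt_or_gt with h' | h'
                              · exact Or.inr ⟨h', h'⟩
                              · exact Or.inl ⟨h', h'⟩)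
  have hopen : IsOpen {t : ℝ | 0 < h.eval (a + t) * h.eval (a - t)} :=
    isOpen_lt continuous_const hφ
  obtain ⟨ε, hε, hball⟩ := Metric.isOpen_iff.mp hopen 0 h0mem
  set δ := ε / 2 with hδ
  have hδpos : 0 < δ := by positivity
  have hδball : δ ∈ Metric.ball (0:ℝ) ε := by
    rw [Metric.mem_ball, Real.dist_eq, sub_zero, abs_of_pos hδpos]
    rw [hδ]; linarith
  have hδgood : 0 < h.eval (a + δ) * h.eval (a - δ) := hball hδball
  -- e y < 0 near b
  have hprod : evB (a + δ) b g * evB (a - δ) b g < 0 := by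
    have e1 : evB (a + δ) b g = q.eval (a + δ) := rfl
    have e2 : evB (a - δ) b g = q.eval (a - δ) := rfl
    rw [e1, e2, heval, heval]
    have : (a + δ - a) = δ := by ring
    rw [this]
    have : (a - δ - a) = -δ := by ring
    rw [this]
    nlinarith [mul_pos (mul_pos hδpos hδpos) hδgood]
  have hecont : Continuous fun y => evB (a + δ) y g * evB (a - δ) y g :=
    (continuous_evB_snd _ g).mul (continuous_evB_snd _ g)
  have hopen2 : IsOpen {y : ℝ | evB (a + δ) y g * evB (a - δ) y g < 0} :=
    isOpen_lt hecont continuous_const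
  obtain ⟨η, hη, hball2⟩ := Metric.isOpen_iff.mp hopen2 b hprod
  have hIoo : Set.Ioo (b - η) (b + η) ⊆ {y : ℝ | evB (a + δ) y g * evB (a - δ) y g < 0} := by
    rw [← Real.ball_eq_Ioo]
    exact hball2
  have hinfIoo : (Set.Ioo (b - η) (b + η)).Infinite :=
    Set.infinite_coe_iff.mp (Set.Ioo.infinite (by linarith))
  have H : ∀ y : ↥(Set.Ioo (b - η) (b + η)), ∃ x₀ : ℝ, evB x₀ (y:ℝ) g = 0 := by
    rintro ⟨y, hy⟩
    have hsign := hIoo hy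
    simp only [Set.mem_setOf_eq] at hsign
    have hle : a - δ ≤ a + δ := by linarith
    have hcont : ContinuousOn (fun x => evB x y g) (Set.Icc (a - δ) (a + δ)) :=
      (continuous_evB_fst y g).continuousOn
    rcases mul_neg_iff.mp hsign with ⟨hpos, hneg⟩ | ⟨hneg, hpos⟩
    · have : (0:ℝ) ∈ Set.Icc (evB (a-δ) (y:ℝ) g) (evB (a+δ) (y:ℝ) g) := ⟨hneg.le, hpos.le⟩
      obtain ⟨x₀, _, hx₀⟩ := intermediate_value_Icc hle hcont this
      exact ⟨x₀, hx₀⟩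
    · have : (0:ℝ) ∈ Set.Icc (evB (a+δ) (y:ℝ) g) (evB (a-δ) (y:ℝ) g) := ⟨hneg.le, hpos.le⟩
      obtain ⟨x₀, _, hx₀⟩ := intermediate_value_Icc' hle hcont this
      exact ⟨x₀, hx₀⟩
  choose φ hφ0 using H
  haveI : Infinite ↥(Set.Ioo (b - η) (b + η)) := Set.infinite_coe_iff.mpr hinfIoo
  refine Set.infinite_of_injective_forall_mem
    (f := fun y : ↥(Set.Ioo (b - η) (b + η)) => ((φ y, (y:ℝ)) : ℝ × ℝ)) ?_ ?_
  · intro y y' hyy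
    have := congrArg Prod.snd hyy
    simpa [Subtype.ext_iff] using this
  · intro y
    exact ⟨hφ0 y, hφ0 y⟩


/-! ### Sylvester matrix -/

def syl (P Q : BP) (n m : ℕ) : Matrix (Fin (n+m)) (Fin (n+m)) RP :=
  fun i j => if (i:ℕ) < n then (if (i:ℕ) ≤ (j:ℕ) then P.coeff ((j:ℕ) - (i:ℕ)) else 0)
             else (if (i:ℕ) - n ≤ (j:ℕ) then Q.coeff ((j:ℕ) - ((i:ℕ) - n)) else 0)

def detS (P Q : BP) (n m : ℕ) : RP := (syl P Q n m).det

lemma natDegree_syl_le (P Q : BP) (n m : ℕ) (i j : Fin (n+m)) :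
    (syl P Q n m i j).natDegree ≤ if (i:ℕ) < n then d1 P else d1 Q := by
  unfold syl
  split_ifs with h1 h2 h3
  · exact coeff_natDegree_le_d1 _ _
  · simp
  · exact coeff_natDegree_le_d1 _ _
  · simp

lemma natDegree_detS_le (P Q : BP) (n m : ℕ) :
    (detS P Q n m).natDegree ≤ n * d1 P + m * d1 Q := by
  classical
  rw [detS, Matrix.det_apply]
  apply Polynomial.natDegree_sum_le_of_forall_le
  intro σ _
  have hsm : ∀ (u : ℤˣ) (p : RP), (u • p).natDegree = p.natDegree := by
    intro u p
    rcases Int.units_eq_one_or u with h | h <;>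
      simp [h, Units.smul_def]
  rw [hsm]
  refine (Polynomial.natDegree_prod_le _ _).trans ?_
  have hb : ∀ i : Fin (n+m), (syl P Q n m (σ i) i).natDegree ≤
      (fun r : Fin (n+m) => if (r:ℕ) < n then d1 P else d1 Q) (σ i) :=
    fun i => natDegree_syl_le P Q n m (σ i) i
  refine (Finset.sum_le_sum fun i _ => hb i).trans ?_
  rw [Equiv.sum_comp σ (fun r : Fin (n+m) => if (r:ℕ) < n then d1 P else d1 Q)]
  rw [Fin.sum_univ_eq_sum_range (fun r => if r < n then d1 P else d1 Q)]
  rw [Finset.sum_range_add (fun r => if r < n then d1 P else d1 Q) n m]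
  have e1 : ∑ i ∈ Finset.range n, (if i < n then d1 P else d1 Q) = n * d1 P := by
    rw [Finset.sum_congr rfl (fun i hi => if_pos (Finset.mem_range.mp hi))]
    simp [mul_comm]
  have e2 : ∑ i ∈ Finset.range m, (if n + i < n then d1 P else d1 Q) = m * d1 Q := by
    rw [Finset.sum_congr rfl (fun i _ => if_neg (by omega))]
    simp [mul_comm]
  omega

lemma row_eval (p : Polynomial ℝ) (i N : ℕ) (hdeg : p.natDegree + i < N) (x : ℝ) :
    ∑ j ∈ Finset.range N, (if i ≤ j then p.coeff (j - i) else 0) * x ^ j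
      = x ^ i * p.eval x := by
  have hiN : i ≤ N := by omega
  rw [show N = i + (N - i) by omega,
    Finset.sum_range_add (fun j => (if i ≤ j then p.coeff (j - i) else 0) * x ^ j) i (N - i)]
  have h1 : ∑ j ∈ Finset.range i, (if i ≤ j then p.coeff (j - i) else 0) * x ^ j = 0 := by
    apply Finset.sum_eq_zero
    intro j hj
    have hji := Finset.mem_range.mp hj
    rw [if_neg (by omega : ¬ i ≤ j), zero_mul]
  rw [h1, zero_add]
  have h2 : ∀ j ∈ Finset.range (N - i),
      (if i ≤ i + j then p.coeff (i + j - i) else 0) * x ^ (i + j)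
        = x ^ i * (p.coeff j * x ^ j) := by
    intro j _
    rw [if_pos (by omega), show i + j - i = j by omega, pow_add]
    ring
  rw [Finset.sum_congr rfl h2, ← Finset.mul_sum]
  congr 1
  exact (Polynomial.eval_eq_sum_range' (by omega) x).symm

lemma syl_mulVec (P Q : BP) (n m : ℕ) (hPd : P.natDegree ≤ m) (hQd : Q.natDegree ≤ n)
    (b x : ℝ) (hPx : evB x b P = 0) (hQx : evB x b Q = 0) :
    Matrix.mulVec ((syl P Q n m).map (fun p => p.eval b)) (fun j : Fin (n+m) => x ^ (j:ℕ)) = 0 := by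
  funext i
  rw [Matrix.mulVec, dotProduct]
  simp only [Matrix.map_apply, Pi.zero_apply]
  by_cases hi : (i:ℕ) < n
  · have : ∀ j : Fin (n+m), (syl P Q n m i j).eval b * x ^ (j:ℕ)
        = (if (i:ℕ) ≤ (j:ℕ) then (fib b P).coeff ((j:ℕ) - (i:ℕ)) else 0) * x ^ (j:ℕ) := by
      intro j
      unfold syl
      rw [if_pos hi]
      split_ifs with h
      · rw [fib, Polynomial.coeff_map]; rfl
      · simp
    rw [Finset.sum_congr rfl (fun j _ => this j)]
    rw [Fin.sum_univ_eq_sum_range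
      (fun j => (if (i:ℕ) ≤ j then (fib b P).coeff (j - (i:ℕ)) else 0) * x ^ j)]
    rw [row_eval _ _ _ (by
      have := Polynomial.natDegree_map_le (f := evalRingHom b) (p := P)
      have : (fib b P).natDegree ≤ m := le_trans (by rw [fib]; exact natDegree_map_le) hPd
      omega) x]
    rw [show (fib b P).eval x = 0 from hPx, mul_zero]
  · have : ∀ j : Fin (n+m), (syl P Q n m i j).eval b * x ^ (j:ℕ)
        = (if (i:ℕ) - n ≤ (j:ℕ) then (fib b Q).coeff ((j:ℕ) - ((i:ℕ) - n)) else 0)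
            * x ^ (j:ℕ) := by
      intro j
      unfold syl
      rw [if_neg hi]
      split_ifs with h
      · rw [fib, Polynomial.coeff_map]; rfl
      · simp
    rw [Finset.sum_congr rfl (fun j _ => this j)]
    rw [Fin.sum_univ_eq_sum_range
      (fun j => (if (i:ℕ) - n ≤ j then (fib b Q).coeff (j - ((i:ℕ) - n)) else 0) * x ^ j)]
    rw [row_eval _ _ _ (by
      have h1 : (fib b Q).natDegree ≤ n := le_trans (by rw [fib]; exact natDegree_map_le) hQd
      have h2 : (i:ℕ) < n + m := i.isLt
      omega) x]
    rw [show (fib b Q).eval x = 0 from hQx, mul_zero]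

lemma det_dvd_of_cols {N : ℕ} (A : Matrix (Fin N) (Fin N) RP) (d : RP) (s : Finset (Fin N))
    (h : ∀ j ∈ s, ∀ i, d ∣ A i j) : d ^ s.card ∣ A.det := by
  classical
  induction s using Finset.induction_on generalizing A with
  | empty => simp
  | @insert j s hj IH =>
    have hw : ∀ i, ∃ w, A i j = d * w := fun i => h j (Finset.mem_insert_self _ _) i
    choose w hw using hw
    have hA : A.updateCol j (d • w) = A := by
      have hcol : (d • w) = fun i => A i j := funext fun i => by
        rw [Pi.smul_apply, smul_eq_mul, ← hw i]
      rw [hcol, Matrix.updateCol_eq_self]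
    have hdet : A.det = d * (A.updateCol j w).det := by
      calc A.det = (A.updateCol j (d • w)).det := congrArg Matrix.det hA.symm
        _ = d * (A.updateCol j w).det := Matrix.det_updateCol_smul _ _ _ _
    have hIH : d ^ s.card ∣ (A.updateCol j w).det := by
      apply IH
      intro j' hj' i
      rw [Matrix.updateCol_apply]
      split_ifs with he
      · exact absurd (he ▸ hj') hj
      · exact h j' (Finset.mem_insert_of_mem hj') i
    rw [Finset.card_insert_of_notMem hj, hdet, pow_succ, mul_comm (d ^ s.card) d]
    exact mul_dvd_mul_left d hIH


lemma pow_dvd_detS (P Q : BP) (n m : ℕ) (hPd : P.natDegree ≤ m) (hQd : Q.natDegree ≤ n)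
    (b : ℝ) (s : Finset ℝ) (hcard : s.card ≤ n + m)
    (hroots : ∀ x ∈ s, evB x b P = 0 ∧ evB x b Q = 0) :
    (X - C b) ^ s.card ∣ detS P Q n m := by
  classical
  obtain ⟨t, hst, htcard⟩ := Infinite.exists_superset_card_eq s (n + m) hcard
  set c : Fin (n + m) → ℝ := fun i => (t.equivFin.symm (finCongr htcard.symm i) : ℝ) with hc
  have hcinj : Function.Injective c := by
    intro i j hij
    have := Subtype.ext hij
    have := t.equivFin.symm.injective this
    simpa using congrArg (finCongr htcard) this
  have hrange : ∀ x ∈ t, ∃ i, c i = x := by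
    intro x hx
    exact ⟨finCongr htcard (t.equivFin ⟨x, hx⟩), by simp [hc]⟩
  set W : Matrix (Fin (n+m)) (Fin (n+m)) RP := fun i j => C ((c j) ^ (i:ℕ)) with hW
  have hWdet : W = ((Matrix.vandermonde c).transpose).map C := by
    funext i j
    simp [hW, Matrix.vandermonde]
  have hVdet : (Matrix.vandermonde c).det ≠ 0 := by
    rw [Matrix.det_vandermonde]
    apply Finset.prod_ne_zero_iff.mpr
    intro i _
    apply Finset.prod_ne_zero_iff.mpr
    intro j hj
    have : i < j := Finset.mem_Ioi.mp hj
    exact sub_ne_zero_of_ne fun hcc => (this.ne (hcinj hcc.symm)).elim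
  set A := syl P Q n m * W with hA
  set cols : Finset (Fin (n+m)) := Finset.univ.filter (fun j => c j ∈ s) with hcols
  have hcolscard : cols.card = s.card := by
    have himg : cols.image c = s := by
      apply Finset.Subset.antisymm
      · intro x hx
        obtain ⟨j, hj, rfl⟩ := Finset.mem_image.mp hx
        exact (Finset.mem_filter.mp hj).2
      · intro x hx
        obtain ⟨i, hi⟩ := hrange x (hst hx)
        exact Finset.mem_image.mpr ⟨i, Finset.mem_filter.mpr ⟨Finset.mem_univ _, hi ▸ hx⟩, hi⟩
    rw [← himg, Finset.card_image_of_injective _ hcinj]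
  have hdvd : ∀ j ∈ cols, ∀ i, (X - C b) ∣ A i j := by
    intro j hj i
    have hcjs : c j ∈ s := (Finset.mem_filter.mp hj).2
    rw [Polynomial.dvd_iff_isRoot]
    have hx := hroots (c j) hcjs
    have h0 := congrFun (syl_mulVec P Q n m hPd hQd b (c j) hx.1 hx.2) i
    simp only [Matrix.mulVec, dotProduct, Matrix.map_apply, Pi.zero_apply] at h0
    show (A i j).eval b = 0
    rw [hA, Matrix.mul_apply, Polynomial.eval_finset_sum, ← h0]
    refine Finset.sum_congr rfl fun k _ => ?_
    rw [Polynomial.eval_mul, hW]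
    simp
  have := det_dvd_of_cols A (X - C b) cols hdvd
  rw [hcolscard] at this
  have hdetA : A.det = detS P Q n m * C (Matrix.vandermonde c).det := by
    rw [hA, Matrix.det_mul, hWdet, detS]
    congr 1
    rw [← RingHom.mapMatrix_apply, ← RingHom.map_det, Matrix.det_transpose]
  rw [hdetA] at this
  have hunit : IsUnit (C (Matrix.vandermonde c).det) :=
    Polynomial.isUnit_C.mpr (isUnit_iff_ne_zero.mpr hVdet)
  exact (hunit.dvd_mul_right).mp this


lemma sum_range_eq_of_vanish (f : ℕ → RP) (n N : ℕ) (hn : ∀ i, n ≤ i → f i = 0)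
    (hN : ∀ i, N ≤ i → f i = 0) : ∑ i ∈ Finset.range n, f i = ∑ i ∈ Finset.range N, f i := by
  have h1 : ∑ i ∈ Finset.range n, f i = ∑ i ∈ Finset.range (max n N), f i :=
    Finset.sum_subset (Finset.range_subset_range.mpr (le_max_left _ _))
      (fun x hx hxn => hn x (by simpa using hxn))
  have h2 : ∑ i ∈ Finset.range N, f i = ∑ i ∈ Finset.range (max n N), f i :=
    Finset.sum_subset (Finset.range_subset_range.mpr (le_max_right _ _))
      (fun x hx hxn => hN x (by simpa using hxn))
  rw [h1, h2]

lemma detS_ne_zero (P Q : BP) (hP : P ≠ 0) (hQ : Q ≠ 0)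
    (hcf : ∀ d : BP, d ∣ P → d ∣ Q → d.natDegree = 0) (n m : ℕ)
    (hn : n = Q.natDegree) (hm : m = P.natDegree) :
    detS P Q n m ≠ 0 := by
  classical
  intro hdet
  obtain ⟨μ, hμ0, hμM⟩ := Matrix.exists_vecMul_eq_zero_iff.mpr hdet
  set μ' : ℕ → RP := (fun i => if h : i < n + m then μ ⟨i, h⟩ else 0) with hμ'
  set u : BP := ∑ i ∈ Finset.range n, Polynomial.C (μ' i) * X ^ i with hu'
  set v : BP := ∑ i ∈ Finset.range m, Polynomial.C (μ' (n + i)) * X ^ i with hv'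
  have hucoeff : ∀ k, u.coeff k = if k < n then μ' k else 0 := by
    intro k
    rw [hu', Polynomial.finset_sum_coeff]
    rw [Finset.sum_congr rfl (fun i _ => Polynomial.coeff_C_mul_X_pow (μ' i) i k)]
    rw [Finset.sum_ite_eq (Finset.range n) k μ']
    simp [Finset.mem_range]
  have hvcoeff : ∀ k, v.coeff k = if k < m then μ' (n + k) else 0 := by
    intro k
    rw [hv', Polynomial.finset_sum_coeff]
    rw [Finset.sum_congr rfl (fun i _ => Polynomial.coeff_C_mul_X_pow (μ' (n+i)) i k)]
    rw [Finset.sum_ite_eq (Finset.range m) k (fun i => μ' (n + i))]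
    simp [Finset.mem_range]
  -- the key identity
  have H : u * P + v * Q = 0 := by
    apply Polynomial.ext
    intro k
    rw [Polynomial.coeff_add, Polynomial.coeff_zero]
    by_cases hk : k < n + m
    · have hvm := congrFun hμM ⟨k, hk⟩
      rw [Matrix.vecMul, dotProduct] at hvm
      simp only [Pi.zero_apply] at hvm
      have hμcast : ∀ r : Fin (n+m), μ r = μ' (r:ℕ) := by
        intro r
        rw [hμ']
        simp [r.isLt]
      have key : ∀ r : Fin (n+m), μ r * syl P Q n m r ⟨k, hk⟩ =
          μ' (r:ℕ) * (if (r:ℕ) < n then (if (r:ℕ) ≤ k then P.coeff (k - (r:ℕ)) else 0)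
           else (if (r:ℕ) - n ≤ k then Q.coeff (k - ((r:ℕ) - n)) else 0)) := by
        intro r
        rw [hμcast r]
        rfl
      have hvm2 : ∑ r ∈ Finset.range (n+m), μ' r *
          (if r < n then (if r ≤ k then P.coeff (k - r) else 0)
           else (if r - n ≤ k then Q.coeff (k - (r - n)) else 0)) = 0 := by
        rw [← Fin.sum_univ_eq_sum_range (fun r => μ' r *
          (if r < n then (if r ≤ k then P.coeff (k - r) else 0)
           else (if r - n ≤ k then Q.coeff (k - (r - n)) else 0))) (n+m)]
        exact (Finset.sum_congr rfl fun r _ => (key r).symm).trans hvm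
      rw [Finset.sum_range_add (fun r => μ' r *
          (if r < n then (if r ≤ k then P.coeff (k - r) else 0)
           else (if r - n ≤ k then Q.coeff (k - (r - n)) else 0))) n m] at hvm2
      have e1 : ∑ r ∈ Finset.range n, μ' r *
          (if r < n then (if r ≤ k then P.coeff (k - r) else 0)
           else (if r - n ≤ k then Q.coeff (k - (r - n)) else 0))
          = (u * P).coeff k := by
        rw [Polynomial.coeff_mul, Finset.Nat.sum_antidiagonal_eq_sum_range_succ_mk]
        have lhs_eq : ∀ r ∈ Finset.range n, μ' r *
            (if r < n then (if r ≤ k then P.coeff (k - r) else 0)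
             else (if r - n ≤ k then Q.coeff (k - (r - n)) else 0))
            = (if r < n ∧ r ≤ k then μ' r * P.coeff (k - r) else 0) := by
          intro r hr
          have hrn := Finset.mem_range.mp hr
          rw [if_pos hrn]
          by_cases hrk : r ≤ k
          · rw [if_pos hrk, if_pos ⟨hrn, hrk⟩]
          · rw [if_neg hrk, if_neg (by tauto), mul_zero]
        have rhs_eq : ∀ a ∈ Finset.range (k+1), u.coeff a * P.coeff (k - a)
            = (if a < n ∧ a ≤ k then μ' a * P.coeff (k - a) else 0) := by
          intro a ha
          have hak := Finset.mem_range.mp ha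
          rw [hucoeff a]
          by_cases h1 : a < n
          · rw [if_pos h1, if_pos ⟨h1, by omega⟩]
          · rw [if_neg h1, if_neg (by tauto), zero_mul]
        rw [Finset.sum_congr rfl lhs_eq, Finset.sum_congr rfl rhs_eq]
        exact sum_range_eq_of_vanish _ n (k+1)
          (fun i hi => by rw [if_neg (by omega)])
          (fun i hi => by rw [if_neg (by omega)])
      have e2 : ∑ r ∈ Finset.range m, μ' (n + r) *
          (if n + r < n then (if n + r ≤ k then P.coeff (k - (n + r)) else 0)
           else (if (n + r) - n ≤ k then Q.coeff (k - ((n + r) - n)) else 0))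
          = (v * Q).coeff k := by
        rw [Polynomial.coeff_mul, Finset.Nat.sum_antidiagonal_eq_sum_range_succ_mk]
        have lhs_eq : ∀ r ∈ Finset.range m, μ' (n + r) *
            (if n + r < n then (if n + r ≤ k then P.coeff (k - (n + r)) else 0)
             else (if (n + r) - n ≤ k then Q.coeff (k - ((n + r) - n)) else 0))
            = (if r < m ∧ r ≤ k then μ' (n + r) * Q.coeff (k - r) else 0) := by
          intro r hr
          have hrm := Finset.mem_range.mp hr
          rw [if_neg (by omega), show (n + r) - n = r by omega]
          by_cases hrk : r ≤ k
          · rw [if_pos hrk, if_pos ⟨hrm, hrk⟩]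
          · rw [if_neg hrk, if_neg (by tauto), mul_zero]
        have rhs_eq : ∀ a ∈ Finset.range (k+1), v.coeff a * Q.coeff (k - a)
            = (if a < m ∧ a ≤ k then μ' (n + a) * Q.coeff (k - a) else 0) := by
          intro a ha
          have hak := Finset.mem_range.mp ha
          rw [hvcoeff a]
          by_cases h1 : a < m
          · rw [if_pos h1, if_pos ⟨h1, by omega⟩]
          · rw [if_neg h1, if_neg (by tauto), zero_mul]
        rw [Finset.sum_congr rfl lhs_eq, Finset.sum_congr rfl rhs_eq]
        exact sum_range_eq_of_vanish _ m (k+1)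
          (fun i hi => by rw [if_neg (by omega)])
          (fun i hi => by rw [if_neg (by omega)])
      rw [e1, e2] at hvm2
      exact hvm2
    · -- high coefficients vanish by degree reasons
      push_neg at hk
      have c1 : (u * P).coeff k = 0 := by
        rw [Polynomial.coeff_mul, Finset.Nat.sum_antidiagonal_eq_sum_range_succ_mk]
        apply Finset.sum_eq_zero
        intro a ha
        by_cases h1 : a < n
        · have : P.natDegree < k - a := by omega
          rw [Polynomial.coeff_eq_zero_of_natDegree_lt this, mul_zero]
        · rw [hucoeff a, if_neg h1, zero_mul]
      have c2 : (v * Q).coeff k = 0 := by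
        rw [Polynomial.coeff_mul, Finset.Nat.sum_antidiagonal_eq_sum_range_succ_mk]
        apply Finset.sum_eq_zero
        intro a ha
        by_cases h1 : a < m
        · have : Q.natDegree < k - a := by omega
          rw [Polynomial.coeff_eq_zero_of_natDegree_lt this, mul_zero]
        · rw [hvcoeff a, if_neg h1, zero_mul]
      rw [c1, c2, add_zero]
  -- nontriviality
  have huv : u ≠ 0 ∨ v ≠ 0 := by
    obtain ⟨i, hi⟩ := Function.ne_iff.mp hμ0
    simp only [Pi.zero_apply] at hi
    by_cases h1 : (i:ℕ) < n
    · left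
      intro hu0
      apply hi
      have := hucoeff (i:ℕ)
      rw [hu0, Polynomial.coeff_zero] at this
      rw [if_pos h1] at this
      rw [hμ'] at this
      simpa [i.isLt] using this.symm
    · right
      intro hv0
      apply hi
      have h2 : (i:ℕ) - n < m := by have := i.isLt; omega
      have := hvcoeff ((i:ℕ) - n)
      rw [hv0, Polynomial.coeff_zero] at this
      rw [if_pos h2, show n + ((i:ℕ) - n) = (i:ℕ) by omega] at this
      rw [hμ'] at this
      simpa [i.isLt] using this.symm
  have hu : u ≠ 0 := by
    rcases huv with h | h
    · exact h
    · intro hu0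
      rw [hu0, zero_mul, zero_add] at H
      rcases mul_eq_zero.mp H with h' | h'
      · exact h h'
      · exact hQ h'
  have hv : v ≠ 0 := by
    intro hv0
    rw [hv0, zero_mul, add_zero] at H
    rcases mul_eq_zero.mp H with h' | h'
    · exact hu h'
    · exact hP h'
  have hn1 : 1 ≤ n := by
    by_contra h
    push_neg at h
    have hn0 : n = 0 := by omega
    exact hu (by rw [hu', hn0]; simp)
  have hudeg : u.natDegree < n := by
    have : u.natDegree ≤ n - 1 := by
      rw [hu']
      apply Polynomial.natDegree_sum_le_of_forall_le
      intro i hi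
      exact (Polynomial.natDegree_C_mul_X_pow_le _ _).trans
        (by have := Finset.mem_range.mp hi; omega)
    omega
  -- UFD argument
  letI : NormalizationMonoid BP := UniqueFactorizationMonoid.normalizationMonoid.toNormalizationMonoid
  letI : GCDMonoid BP := UniqueFactorizationMonoid.toGCDMonoid BP
  set g := gcd P Q with hg
  have hg0 : g ≠ 0 := by
    intro h
    exact hP (zero_dvd_iff.mp (h ▸ gcd_dvd_left P Q))
  obtain ⟨P₁, hP₁⟩ := (show g ∣ P from hg ▸ gcd_dvd_left P Q)
  obtain ⟨Q₁, hQ₁⟩ := (show g ∣ Q from hg ▸ gcd_dvd_right P Q)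
  have hgdeg : g.natDegree = 0 := hcf g (gcd_dvd_left P Q) (gcd_dvd_right P Q)
  have hQ₁0 : Q₁ ≠ 0 := fun h => hQ (by rw [hQ₁, h, mul_zero])
  have hrel : IsRelPrime P₁ Q₁ := by
    intro d hd1 hd2
    have h1 : g * d ∣ P := by
      rw [hP₁]
      exact mul_dvd_mul_left g hd1
    have h2 : g * d ∣ Q := by
      rw [hQ₁]
      exact mul_dvd_mul_left g hd2
    have h3 : g * d ∣ g * 1 := by
      rw [mul_one]
      exact dvd_gcd h1 h2
    exact isUnit_of_dvd_one ((mul_dvd_mul_iff_left hg0).mp h3)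
  have hcanc : u * P₁ = -(v * Q₁) := by
    have h5 : g * (u * P₁) = g * (-(v * Q₁)) := by
      have h6 : u * P = -(v * Q) := eq_neg_of_add_eq_zero_left H
      rw [hP₁, hQ₁] at h6
      linear_combination h6
    exact mul_left_cancel₀ hg0 h5
  have hdvdu : Q₁ ∣ u := by
    refine (hrel.symm).dvd_of_dvd_mul_right ⟨-v, ?_⟩
    rw [hcanc]
    ring
  have hQ₁deg : Q₁.natDegree ≤ u.natDegree := Polynomial.natDegree_le_of_dvd hdvdu hu
  have hfinal : n = Q₁.natDegree := by
    rw [hn, hQ₁, Polynomial.natDegree_mul hg0 hQ₁0, hgdeg, zero_add]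
  omega


lemma count_lemma (P Q : BP) (hP : P ≠ 0) (hQ : Q ≠ 0) (n m : ℕ)
    (hn : n = Q.natDegree) (hm : m = P.natDegree)
    (hdet : detS P Q n m ≠ 0)
    (hfin : (Zs P Q).Finite) :
    (Zs P Q).ncard ≤ n * d1 P + m * d1 Q := by
  classical
  set D := detS P Q n m with hD
  set F := hfin.toFinset with hF
  have hc : (Zs P Q).ncard = F.card := Set.ncard_eq_toFinset_card _ hfin
  set Bs := F.image Prod.snd with hBs
  have hsplit : F.card = ∑ b ∈ Bs, (F.filter (fun p => p.2 = b)).card :=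
    Finset.card_eq_sum_card_fiberwise (fun p hp => Finset.mem_image_of_mem _ hp)
  set As : ℝ → Finset ℝ := fun b => (F.filter (fun p => p.2 = b)).image Prod.fst with hAs
  have hfibercard : ∀ b, (F.filter (fun p => p.2 = b)).card = (As b).card := by
    intro b
    rw [hAs]
    rw [Finset.card_image_of_injOn]
    intro p hp q hq hpq
    have hp2 := (Finset.mem_filter.mp hp).2
    have hq2 := (Finset.mem_filter.mp hq).2
    exact Prod.ext hpq (hp2.trans hq2.symm)
  have hmem : ∀ b, ∀ x ∈ As b, evB x b P = 0 ∧ evB x b Q = 0 := by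
    intro b x hx
    obtain ⟨p, hp, hpx⟩ := Finset.mem_image.mp hx
    have hp1 := (Finset.mem_filter.mp hp).1
    have hp2 := (Finset.mem_filter.mp hp).2
    have : p ∈ Zs P Q := hfin.mem_toFinset.mp hp1
    rw [← hpx, ← hp2]
    exact this
  have hcard_le : ∀ b ∈ Bs, (As b).card ≤ n + m := by
    intro b hb
    have hnotboth : fib b P ≠ 0 ∨ fib b Q ≠ 0 := by
      by_contra hcon
      push_neg at hcon
      exact hfin.not_infinite (infinite_of_line P Q b hcon.1 hcon.2)
    rcases hnotboth with h0 | h0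
    · have hsub : As b ⊆ (fib b P).roots.toFinset := by
        intro x hx
        rw [Multiset.mem_toFinset, Polynomial.mem_roots h0]
        exact (hmem b x hx).1
      calc (As b).card ≤ (fib b P).roots.toFinset.card := Finset.card_le_card hsub
        _ ≤ Multiset.card (fib b P).roots := Multiset.toFinset_card_le _
        _ ≤ (fib b P).natDegree := Polynomial.card_roots' _
        _ ≤ P.natDegree := natDegree_map_le
        _ ≤ n + m := by omega
    · have hsub : As b ⊆ (fib b Q).roots.toFinset := by
        intro x hx
        rw [Multiset.mem_toFinset, Polynomial.mem_roots h0]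
        exact (hmem b x hx).2
      calc (As b).card ≤ (fib b Q).roots.toFinset.card := Finset.card_le_card hsub
        _ ≤ Multiset.card (fib b Q).roots := Multiset.toFinset_card_le _
        _ ≤ (fib b Q).natDegree := Polynomial.card_roots' _
        _ ≤ Q.natDegree := natDegree_map_le
        _ ≤ n + m := by omega
  have hmult : ∀ b ∈ Bs, (As b).card ≤ Polynomial.rootMultiplicity b D := by
    intro b hb
    rw [Polynomial.le_rootMultiplicity_iff hdet]
    exact pow_dvd_detS P Q n m (le_of_eq hm.symm) (le_of_eq hn.symm) b (As b)
      (hcard_le b hb) (hmem b)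
  have hBsroots : Bs ⊆ D.roots.toFinset := by
    intro b hb
    have h1 : 1 ≤ (As b).card := by
      obtain ⟨p, hp⟩ := Finset.mem_image.mp hb
      refine Finset.card_pos.mpr ⟨p.1, ?_⟩
      exact Finset.mem_image_of_mem _ (Finset.mem_filter.mpr ⟨hp.1, hp.2⟩)
    have h2 : 1 ≤ Polynomial.rootMultiplicity b D := le_trans h1 (hmult b hb)
    rw [Multiset.mem_toFinset, Polynomial.mem_roots hdet]
    exact (Polynomial.rootMultiplicity_pos hdet).mp (by omega)
  calc (Zs P Q).ncard = F.card := hc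
    _ = ∑ b ∈ Bs, (F.filter (fun p => p.2 = b)).card := hsplit
    _ = ∑ b ∈ Bs, (As b).card := Finset.sum_congr rfl fun b _ => hfibercard b
    _ ≤ ∑ b ∈ Bs, Polynomial.rootMultiplicity b D := Finset.sum_le_sum hmult
    _ = ∑ b ∈ Bs, D.roots.count b := by
        refine Finset.sum_congr rfl fun b _ => ?_
        rw [Polynomial.count_roots]
    _ ≤ ∑ b ∈ D.roots.toFinset, D.roots.count b :=
        Finset.sum_le_sum_of_subset hBsroots
    _ = Multiset.card D.roots := Multiset.toFinset_sum_count_eq _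
    _ ≤ D.natDegree := Polynomial.card_roots' _
    _ ≤ n * d1 P + m * d1 Q := natDegree_detS_le P Q n m


lemma zs_left_subset (g P' Q' : BP) : Zs g g ⊆ Zs (g * P') (g * Q') := by
  rintro p ⟨h, -⟩
  exact ⟨by rw [evB_mul, h, zero_mul], by rw [evB_mul, h, zero_mul]⟩

lemma zs_right_subset (g P' Q' : BP) : Zs P' Q' ⊆ Zs (g * P') (g * Q') := by
  rintro p ⟨h1, h2⟩
  exact ⟨by rw [evB_mul, h1, mul_zero], by rw [evB_mul, h2, mul_zero]⟩

lemma zs_subset_union (g P' Q' : BP) : Zs (g * P') (g * Q') ⊆ Zs g g ∪ Zs P' Q' := by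
  rintro p ⟨h1, h2⟩
  rw [evB_mul] at h1 h2
  by_cases hg : evB p.1 p.2 g = 0
  · exact Or.inl ⟨hg, hg⟩
  · exact Or.inr ⟨(mul_eq_zero.mp h1).resolve_left hg, (mul_eq_zero.mp h2).resolve_left hg⟩

lemma single_of_master (M : ℕ)
    (hmaster : ∀ P Q : BP, P ≠ 0 → Q ≠ 0 → P.natDegree + Q.natDegree < 2 * M →
      (Zs P Q).Infinite ∨ (Zs P Q).ncard ≤ d1 P * Q.natDegree + P.natDegree * d1 Q)
    (g : BP) (hg : g ≠ 0) (hgM : g.natDegree ≤ M) :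
    (Zs g g).Infinite ∨ (Zs g g).ncard ≤ 2 * (d1 g * g.natDegree) := by
  classical
  by_cases hdeg0 : g.natDegree = 0
  · have hgc : g = Polynomial.C (g.coeff 0) := Polynomial.eq_C_of_natDegree_eq_zero hdeg0
    by_cases hroot : ∃ b : ℝ, (g.coeff 0).eval b = 0
    · left
      obtain ⟨b, hb⟩ := hroot
      have hfib : fib b g = 0 := by
        rw [hgc, fib, Polynomial.map_C]
        simp [hb]
      exact infinite_of_line g g b hfib hfib
    · right
      push_neg at hroot
      have hempty : Zs g g = ∅ := by
        ext p
        simp only [Zs, Set.mem_setOf_eq, Set.mem_empty_iff_false, iff_false, not_and]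
        intro h
        exfalso
        apply hroot p.2
        have : evB p.1 p.2 g = (g.coeff 0).eval p.2 := by
          rw [evB, hgc, fib, Polynomial.map_C]
          simp
        rw [this] at h
        exact h
      rw [hempty]
      simp
  · by_cases hline : ∃ b : ℝ, fib b g = 0
    · obtain ⟨b, hb⟩ := hline
      exact Or.inl (infinite_of_line g g b hb hb)
    · by_cases hsr : ∃ p : ℝ × ℝ, p ∈ Zs g g ∧ evB p.1 p.2 (derivative g) ≠ 0
      · obtain ⟨p, hp, hd⟩ := hsr
        exact Or.inl (infinite_of_simple_root g p.1 p.2 hp.1 hd)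
      · push_neg at hsr
        have hgder : derivative g ≠ 0 := by
          intro h
          exact hdeg0 (Polynomial.natDegree_eq_zero_of_derivative_eq_zero h)
        have hdlt : (derivative g).natDegree < g.natDegree :=
          Polynomial.natDegree_derivative_lt hdeg0
        have hseteq : Zs g g = Zs g (derivative g) := by
          apply Set.Subset.antisymm
          · intro p hp
            exact ⟨hp.1, hsr p hp⟩
          · intro p hp
            exact ⟨hp.1, hp.1⟩
        have hmain := hmaster g (derivative g) hg hgder (by omega)
        rw [hseteq]
        rcases hmain with h | h
        · exact Or.inl h
        · right
          refine h.trans ?_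
          have h1 : d1 (derivative g) ≤ d1 g := d1_derivative_le g
          have h3 : d1 g * (derivative g).natDegree ≤ d1 g * g.natDegree :=
            Nat.mul_le_mul_left _ (le_of_lt hdlt)
          have h4 : g.natDegree * d1 (derivative g) ≤ g.natDegree * d1 g :=
            Nat.mul_le_mul_left _ h1
          have h5 : g.natDegree * d1 g = d1 g * g.natDegree := mul_comm _ _
          omega

theorem master : ∀ N : ℕ, ∀ P Q : BP, P ≠ 0 → Q ≠ 0 → P.natDegree + Q.natDegree ≤ N →
    (Zs P Q).Infinite ∨ (Zs P Q).ncard ≤ d1 P * Q.natDegree + P.natDegree * d1 Q := by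
  intro N
  induction N using Nat.strong_induction_on with
  | _ N IH =>
  intro P Q hP hQ hN
  by_cases hcf : ∃ d : BP, d ∣ P ∧ d ∣ Q ∧ 1 ≤ d.natDegree
  · obtain ⟨d, ⟨P', hP'⟩, ⟨Q', hQ'⟩, hd1⟩ := hcf
    have hd0 : d ≠ 0 := by
      rintro rfl
      rw [zero_mul] at hP'
      exact hP hP'
    have hP'0 : P' ≠ 0 := fun h => hP (by rw [hP', h, mul_zero])
    have hQ'0 : Q' ≠ 0 := fun h => hQ (by rw [hQ', h, mul_zero])
    have edP : P.natDegree = d.natDegree + P'.natDegree := by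
      rw [hP', Polynomial.natDegree_mul hd0 hP'0]
    have edQ : Q.natDegree = d.natDegree + Q'.natDegree := by
      rw [hQ', Polynomial.natDegree_mul hd0 hQ'0]
    by_cases hinf : (Zs P Q).Infinite
    · exact Or.inl hinf
    · right
      have hfin : (Zs P Q).Finite := Set.not_infinite.mp hinf
      have hsingle := single_of_master d.natDegree
        (fun A B hA hB hAB => IH (A.natDegree + B.natDegree) (by omega) A B hA hB le_rfl)
        d hd0 le_rfl
      have hmain := IH (P'.natDegree + Q'.natDegree) (by omega) P' Q' hP'0 hQ'0 le_rfl
      have hsub1 : Zs d d ⊆ Zs P Q := by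
        rw [hP', hQ']
        exact zs_left_subset d P' Q'
      have hsub2 : Zs P' Q' ⊆ Zs P Q := by
        rw [hP', hQ']
        exact zs_right_subset d P' Q'
      rcases hsingle with hs | hs
      · exact absurd (Set.Infinite.mono hsub1 hs) hinf
      rcases hmain with hm | hm
      · exact absurd (Set.Infinite.mono hsub2 hm) hinf
      have hsub : Zs P Q ⊆ Zs d d ∪ Zs P' Q' := by
        rw [hP', hQ']
        exact zs_subset_union d P' Q'
      have hfin1 : (Zs d d).Finite := hfin.subset hsub1
      have hfin2 : (Zs P' Q').Finite := hfin.subset hsub2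
      calc (Zs P Q).ncard ≤ (Zs d d ∪ Zs P' Q').ncard :=
            Set.ncard_le_ncard hsub (hfin1.union hfin2)
        _ ≤ (Zs d d).ncard + (Zs P' Q').ncard := Set.ncard_union_le _ _
        _ ≤ 2 * (d1 d * d.natDegree) + (d1 P' * Q'.natDegree + P'.natDegree * d1 Q') :=
            Nat.add_le_add hs hm
        _ ≤ d1 P * Q.natDegree + P.natDegree * d1 Q := by
            have e1 : d1 d + d1 P' ≤ d1 P := by
              rw [hP']
              exact le_d1_mul d P' hd0 hP'0
            have e2 : d1 d + d1 Q' ≤ d1 Q := by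
              rw [hQ']
              exact le_d1_mul d Q' hd0 hQ'0
            have e3 : d1 P * Q.natDegree ≥
                (d1 d + d1 P') * (d.natDegree + Q'.natDegree) := by
              rw [← edQ]
              exact Nat.mul_le_mul_right _ e1
            have e4 : P.natDegree * d1 Q ≥
                (d.natDegree + P'.natDegree) * (d1 d + d1 Q') := by
              rw [← edP]
              exact Nat.mul_le_mul_left _ e2
            nlinarith [e3, e4]
  · push_neg at hcf
    by_cases hinf : (Zs P Q).Infinite
    · exact Or.inl hinf
    · right
      have hdet := detS_ne_zero P Q hP hQ
        (fun d h1 h2 => by have := hcf d h1 h2; omega)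
        Q.natDegree P.natDegree rfl rfl
      have hcount := count_lemma P Q hP hQ Q.natDegree P.natDegree rfl rfl hdet
        (Set.not_infinite.mp hinf)
      have hcomm1 : Q.natDegree * d1 P = d1 P * Q.natDegree := mul_comm _ _
      omega


/-! ### Bridge to MvPolynomial -/

def psi : MvPolynomial (Fin 1) ℝ →+* RP :=
  (Polynomial.mapRingHom (MvPolynomial.isEmptyAlgEquiv ℝ (Fin 0)).toRingEquiv.toRingHom).comp
    (MvPolynomial.finSuccEquiv ℝ 0).toRingEquiv.toRingHom

lemma psi_apply (s : MvPolynomial (Fin 1) ℝ) : psi s =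
    (MvPolynomial.finSuccEquiv ℝ 0 s).map
      (MvPolynomial.isEmptyAlgEquiv ℝ (Fin 0)).toRingEquiv.toRingHom := rfl

lemma inj_e0 : Function.Injective
    ⇑(MvPolynomial.isEmptyAlgEquiv ℝ (Fin 0)).toRingEquiv.toRingHom := by
  have h : ⇑(MvPolynomial.isEmptyAlgEquiv ℝ (Fin 0)).toRingEquiv.toRingHom =
      ⇑(MvPolynomial.isEmptyAlgEquiv ℝ (Fin 0)) := rfl
  rw [h]
  exact (MvPolynomial.isEmptyAlgEquiv ℝ (Fin 0)).injective

lemma psi_injective : Function.Injective psi := by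
  intro a b h
  rw [psi_apply, psi_apply] at h
  exact (MvPolynomial.finSuccEquiv ℝ 0).injective (Polynomial.map_injective _ inj_e0 h)

lemma natDegree_psi (s : MvPolynomial (Fin 1) ℝ) :
    (psi s).natDegree = MvPolynomial.degreeOf 0 s := by
  rw [psi_apply, Polynomial.natDegree_map_eq_of_injective inj_e0]
  exact MvPolynomial.natDegree_finSuccEquiv s

def toB (F : MvPolynomial (Fin 2) ℝ) : BP :=
  (MvPolynomial.finSuccEquiv ℝ 1 F).map psi

lemma toB_ne_zero (F : MvPolynomial (Fin 2) ℝ) (hF : F ≠ 0) : toB F ≠ 0 := by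
  intro h
  apply hF
  have h1 : MvPolynomial.finSuccEquiv ℝ 1 F = 0 :=
    Polynomial.map_injective _ psi_injective (by rw [Polynomial.map_zero]; exact h)
  simpa using (map_eq_zero_iff _ (MvPolynomial.finSuccEquiv ℝ 1).injective).mp h1

lemma natDegree_toB (F : MvPolynomial (Fin 2) ℝ) :
    (toB F).natDegree = MvPolynomial.degreeOf 0 F := by
  rw [toB, Polynomial.natDegree_map_eq_of_injective psi_injective]
  exact MvPolynomial.natDegree_finSuccEquiv F

lemma d1_toB_le (F : MvPolynomial (Fin 2) ℝ) : d1 (toB F) ≤ MvPolynomial.degreeOf 1 F := by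
  apply Finset.sup_le
  intro i _
  rw [toB, Polynomial.coeff_map, natDegree_psi]
  exact MvPolynomial.degreeOf_coeff_finSuccEquiv F (0 : Fin 1) i

lemma eval_toB (F : MvPolynomial (Fin 2) ℝ) (x : Fin 2 → ℝ) :
    MvPolynomial.eval x F = evB (x 0) (x 1) (toB F) := by
  have h1 : MvPolynomial.eval x F =
      Polynomial.eval (x 0) ((MvPolynomial.finSuccEquiv ℝ 1 F).map
        (MvPolynomial.eval (Fin.tail x))) := by
    conv_lhs => rw [← Fin.cons_self_tail x]
    exact MvPolynomial.eval_eq_eval_mv_eval' (Fin.tail x) (x 0) F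
  rw [h1, evB, fib, toB, Polynomial.map_map]
  congr 2
  apply MvPolynomial.ringHom_ext
  · intro r
    have hC : psi (MvPolynomial.C r) = Polynomial.C r := by
      rw [psi_apply]
      have h2 : MvPolynomial.finSuccEquiv ℝ 0 (MvPolynomial.C r)
          = Polynomial.C (MvPolynomial.C r) := by
        simp [MvPolynomial.finSuccEquiv_apply]
      rw [h2, Polynomial.map_C]
      simp
      exact MvPolynomial.coeff_zero_C r
    rw [RingHom.comp_apply]
    show _ = Polynomial.eval (x 1) (psi (MvPolynomial.C r))
    rw [hC]
    simp
  · intro i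
    have hi : i = 0 := Subsingleton.elim i 0
    subst hi
    have hX : psi (MvPolynomial.X 0) = Polynomial.X := by
      rw [psi_apply, MvPolynomial.finSuccEquiv_X_zero, Polynomial.map_X]
    rw [RingHom.comp_apply]
    show _ = Polynomial.eval (x 1) (psi (MvPolynomial.X 0))
    rw [hX, Polynomial.eval_X, MvPolynomial.eval_X]
    rfl

end RealBezoutAux

open RealBezoutAux in
theorem real_bezout_bihomogeneous (F G : MvPolynomial (Fin 2) ℝ) (hF : F ≠ 0) (hG : G ≠ 0)
    (m₁ m₂ n₁ n₂ : ℕ)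
    (hm₁ : F.degreeOf 0 = m₁) (hm₂ : F.degreeOf 1 = m₂)
    (hn₁ : G.degreeOf 0 = n₁) (hn₂ : G.degreeOf 1 = n₂) :
    {x : Fin 2 → ℝ | MvPolynomial.eval x F = 0 ∧ MvPolynomial.eval x G = 0}.Infinite ∨
    {x : Fin 2 → ℝ | MvPolynomial.eval x F = 0 ∧ MvPolynomial.eval x G = 0}.ncard ≤
      m₁ * n₂ + m₂ * n₁ := by
  classical
  set P := toB F with hP
  set Q := toB G with hQ
  have hP0 : P ≠ 0 := toB_ne_zero F hF
  have hQ0 : Q ≠ 0 := toB_ne_zero G hG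
  set S := {x : Fin 2 → ℝ | MvPolynomial.eval x F = 0 ∧ MvPolynomial.eval x G = 0} with hS
  set ι : ℝ × ℝ → (Fin 2 → ℝ) := fun p => ![p.1, p.2] with hι
  have hιinj : Function.Injective ι := by
    intro p q h
    have h0 := congrFun h 0
    have h1 := congrFun h 1
    simp [hι] at h0 h1
    exact Prod.ext h0 h1
  have himg : S = ι '' Zs P Q := by
    ext x
    constructor
    · intro hx
      refine ⟨(x 0, x 1), ?_, ?_⟩
      · constructor
        · rw [← eval_toB F x]
          exact hx.1
        · rw [← eval_toB G x]
          exact hx.2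
      · funext i
        fin_cases i <;> simp [hι]
    · rintro ⟨p, hp, rfl⟩
      constructor
      · rw [eval_toB F]
        have e0 : ι p 0 = p.1 := by simp [hι]
        have e1 : ι p 1 = p.2 := by simp [hι]
        rw [e0, e1]
        exact hp.1
      · rw [eval_toB G]
        have e0 : ι p 0 = p.1 := by simp [hι]
        have e1 : ι p 1 = p.2 := by simp [hι]
        rw [e0, e1]
        exact hp.2
  rcases master (P.natDegree + Q.natDegree) P Q hP0 hQ0 le_rfl with h | h
  · left
    rw [himg]
    exact Set.Infinite.image (hιinj.injOn) h
  · right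
    rw [himg, Set.ncard_image_of_injective _ hιinj]
    refine h.trans ?_
    have b1 : d1 P ≤ m₂ := hm₂ ▸ d1_toB_le F
    have b2 : d1 Q ≤ n₂ := hn₂ ▸ d1_toB_le G
    have b3 : P.natDegree = m₁ := by rw [hP, natDegree_toB, hm₁]
    have b4 : Q.natDegree = n₁ := by rw [hQ, natDegree_toB, hn₁]
    calc d1 P * Q.natDegree + P.natDegree * d1 Q ≤ m₂ * n₁ + m₁ * n₂ := by
          rw [b3, b4]
          exact Nat.add_le_add (Nat.mul_le_mul_right _ b1) (Nat.mul_le_mul_left _ b2)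
      _ = m₁ * n₂ + m₂ * n₁ := by omega
end RealBezoutAux
end

section
/- Let P₁ and P₂ be non-constant complex polynomials of degrees n₁ and n₂. The following three conditions are equivalent: (i) the lemniscates 𝔏_{P₁} and 𝔏_{P₂} have more than 2·n₁·n₂ common points; (ii) 𝔏_{P₁} ∩ 𝔏_{P₂} is infinite; (iii) there exist a complex polynomial P, positive integers m₁ and m₂, and a constant c ∈ ℂ with |c| = 1 such that P₁ = P^{m₁} and P₂ = c·P^{m₂}. -/
/-- The lemniscate of a polynomial `P`: the set of `z ∈ ℂ` with `|P(z)| = 1`. -/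
noncomputable def Polynomial.lemniscate (P : Polynomial ℂ) : Set ℂ :=
  {z : ℂ | ‖P.eval z‖ = 1}

open Polynomial
set_option maxHeartbeats 1000000
set_option synthInstance.maxHeartbeats 400000

namespace LemHelp

/-- lemniscate of a nonconstant polynomial is infinite -/
lemma lemniscate_infinite (P : ℂ[X]) (hP : 0 < P.natDegree) : P.lemniscate.Infinite := by
  have hroot : ∀ t : ℝ, ∃ z : ℂ, P.eval z = Complex.exp (t * Complex.I) := by
    intro t
    have : ∃ z, IsRoot (P - C (Complex.exp (t * Complex.I))) z := by
      apply Complex.exists_root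
      have : (P - C (Complex.exp (t * Complex.I))).natDegree = P.natDegree := by
        rw [natDegree_sub_C]
      rw [← natDegree_pos_iff_degree_pos, this]; exact hP
    obtain ⟨z, hz⟩ := this
    exact ⟨z, by have := hz; simp [IsRoot, eval_sub, eval_C, sub_eq_zero] at this; exact this⟩
  choose f hf using hroot
  have hinj : Function.Injective (fun t : Set.Ioo (0:ℝ) 1 => f t) := by
    rintro ⟨t, ht⟩ ⟨s, hs⟩ h
    have : Complex.exp (t * Complex.I) = Complex.exp (s * Complex.I) := by
      rw [← hf t, ← hf s]; simp only at h; rw [h]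
    rw [Complex.exp_eq_exp_iff_exists_int] at this
    obtain ⟨n, hn⟩ := this
    have hre : (t : ℝ) = s + n * (2 * Real.pi) := by
      have := congrArg (fun z => z.im) hn
      simp [Complex.add_im, Complex.mul_im] at this
      linarith [this]
    have hn0 : n = 0 := by
      rcases lt_trichotomy n 0 with h' | h' | h'
      · exfalso
        have : (n : ℝ) ≤ -1 := by exact_mod_cast (by omega : n ≤ -1)
        nlinarith [Real.pi_gt_three, ht.1, ht.2, hs.1, hs.2]
      · exact h'
      · exfalso
        have : (1 : ℝ) ≤ n := by exact_mod_cast h'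
        nlinarith [Real.pi_gt_three, ht.1, ht.2, hs.1, hs.2]
    apply Subtype.ext
    simp [hn0] at hre; exact hre
  have : Infinite (Set.Ioo (0:ℝ) 1) := Set.Ioo.infinite (by norm_num)
  apply Set.infinite_of_injective_forall_mem hinj
  intro t
  show ‖P.eval (f t)‖ = 1
  rw [hf t]; exact Complex.norm_exp_ofReal_mul_I _

lemma lemniscate_pow (P : ℂ[X]) (m : ℕ) (hm : 0 < m) (c : ℂ) (hc : ‖c‖ = 1) :
    (Polynomial.C c * P ^ m).lemniscate = P.lemniscate := by
  ext z
  simp only [Polynomial.lemniscate, Set.mem_setOf_eq, eval_mul, eval_C, eval_pow, norm_mul,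
    norm_pow, hc, one_mul]
  constructor
  · intro h
    have h0 : (0:ℝ) ≤ ‖P.eval z‖ := norm_nonneg _
    rcases pow_eq_one_iff_cases.mp h with h | h | h
    · omega
    · exact h
    · exfalso; nlinarith [h.1]
  · intro h; rw [h, one_pow]

lemma iii_implies_infinite (P₁ P₂ : ℂ[X]) (h₁ : 0 < P₁.natDegree)
    (h : ∃ (P : Polynomial ℂ) (m₁ m₂ : ℕ) (c : ℂ), 0 < m₁ ∧ 0 < m₂ ∧ ‖c‖ = 1 ∧
        P₁ = P ^ m₁ ∧ P₂ = Polynomial.C c * P ^ m₂) :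
    (P₁.lemniscate ∩ P₂.lemniscate).Infinite := by
  obtain ⟨P, m₁, m₂, c, hm₁, hm₂, hc, hP₁, hP₂⟩ := h
  have hPdeg : 0 < P.natDegree := by
    rcases Nat.eq_zero_or_pos P.natDegree with h' | h'
    · exfalso; rw [hP₁, natDegree_pow, h'] at h₁; omega
    · exact h'
  have e₁ : P₁.lemniscate = P.lemniscate := by
    have := lemniscate_pow P m₁ hm₁ 1 (by simp)
    simpa [hP₁] using this
  have e₂ : P₂.lemniscate = P.lemniscate := by
    rw [hP₂]; exact lemniscate_pow P m₂ hm₂ c hc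
  rw [e₁, e₂, Set.inter_self]
  exact lemniscate_infinite P hPdeg




/-- conjugate-coefficient polynomial -/
noncomputable def conjP (p : ℂ[X]) : ℂ[X] := p.map (starRingEnd ℂ)

lemma conjP_eval (p : ℂ[X]) (z : ℂ) :
    (conjP p).eval ((starRingEnd ℂ) z) = (starRingEnd ℂ) (p.eval z) := by
  rw [conjP, eval_map, eval₂_at_apply]

lemma conjP_natDegree (p : ℂ[X]) : (conjP p).natDegree = p.natDegree :=
  natDegree_map_eq_of_injective (RingHom.injective _) p

lemma conjP_coeff (p : ℂ[X]) (k : ℕ) : (conjP p).coeff k = (starRingEnd ℂ) (p.coeff k) :=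
  coeff_map _ _

/-- the bivariate polynomial P(X)·P̄(Y) - 1, presented as element of (ℂ[X])[Y] -/
noncomputable def biv (p : ℂ[X]) : (ℂ[X])[X] :=
  C p * (conjP p).map Polynomial.C - 1

lemma biv_eval₂ {S : Type*} [CommRing S] (p : ℂ[X]) (φ : ℂ[X] →+* S) (t : S) :
    eval₂ φ t (biv p) = φ p * eval₂ (φ.comp Polynomial.C) t (conjP p) - 1 := by
  rw [biv, eval₂_sub, eval₂_one, eval₂_mul, eval₂_C, eval₂_map]

lemma biv_coeff (p : ℂ[X]) (k : ℕ) :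
    (biv p).coeff k = p * Polynomial.C ((conjP p).coeff k) - if k = 0 then 1 else 0 := by
  rw [biv, coeff_sub, coeff_C_mul, coeff_map]
  congr 1
  simp [coeff_one, eq_comm]

lemma biv_coeff_natDegree_le (p : ℂ[X]) (k : ℕ) :
    ((biv p).coeff k).natDegree ≤ p.natDegree := by
  rw [biv_coeff]
  apply le_trans (natDegree_sub_le _ _)
  rw [max_le_iff]
  constructor
  · exact le_trans (natDegree_mul_le) (by simp)
  · split_ifs <;> simp

lemma biv_coeff_eq_zero (p : ℂ[X]) (k : ℕ) (hk : p.natDegree < k) : (biv p).coeff k = 0 := by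
  rw [biv_coeff, if_neg (by omega), coeff_eq_zero_of_natDegree_lt (by rw [conjP_natDegree]; omega)]
  simp

lemma biv_coeff_top (p : ℂ[X]) (hp : 0 < p.natDegree) :
    (biv p).coeff p.natDegree = p * Polynomial.C ((starRingEnd ℂ) p.leadingCoeff) := by
  rw [biv_coeff, if_neg (by omega), conjP_coeff, sub_zero, coeff_natDegree]

/-- evaluation of biv at a lemniscate point -/
lemma biv_eval_lemniscate (p : ℂ[X]) (z : ℂ) (hz : ‖p.eval z‖ = 1) :
    eval₂ (evalRingHom z) ((starRingEnd ℂ) z) (biv p) = 0 := by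
  rw [biv_eval₂]
  have h1 : (evalRingHom z).comp (Polynomial.C : ℂ →+* ℂ[X]) = RingHom.id ℂ := by
    ext c; simp
  rw [h1]
  show p.eval z * (conjP p).eval ((starRingEnd ℂ) z) - 1 = 0
  rw [conjP_eval, Complex.mul_conj]
  rw [Complex.normSq_eq_norm_sq, hz]
  norm_num




variable {R : Type*} [CommRing R]

/-- Sylvester-style matrix for f (degree ≤ m) and g (degree ≤ n); rows `i < n` hold
coefficients of `f * X^i`, rows `n ≤ i` hold coefficients of `g * X^(i-n)`. -/
noncomputable def syl (f g : R[X]) (m n : ℕ) : Matrix (Fin (n+m)) (Fin (n+m)) R :=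
  fun i j => if (i : ℕ) < n then (f * X ^ (i:ℕ)).coeff (j:ℕ) else (g * X ^ ((i:ℕ) - n)).coeff (j:ℕ)

lemma syl_map {S : Type*} [CommRing S] (φ : R →+* S) (f g : R[X]) (m n : ℕ) :
    (syl f g m n).map φ = syl (f.map φ) (g.map φ) m n := by
  ext i j
  simp only [syl, Matrix.map_apply, apply_ite φ]
  split_ifs <;>
    simp [← Polynomial.coeff_map, Polynomial.map_mul, Polynomial.map_pow]

lemma sum_fin_split {A : Type*} [AddCommMonoid A] (N₁ N₂ : ℕ) (f : ℕ → A) :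
    ∑ i : Fin (N₁ + N₂), f i = (∑ i ∈ Finset.range N₁, f i) +
      ∑ i ∈ Finset.range N₂, f (N₁ + i) := by
  rw [Fin.sum_univ_eq_sum_range]
  have h : ∑ i ∈ Finset.range (N₁ + N₂), f i
      = (∑ i ∈ Finset.range N₁, f i) + ∑ i ∈ Finset.Ico N₁ (N₁ + N₂), f i := by
    rw [Finset.range_eq_Ico, ← Finset.sum_Ico_consecutive _ (Nat.zero_le N₁)
      (Nat.le_add_right N₁ N₂), ← Finset.range_eq_Ico]
  rw [h, Finset.sum_Ico_eq_sum_range, Nat.add_sub_cancel_left]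

lemma coeff_sum_mul (u f : R[X]) (n : ℕ) (hu : u.natDegree < n) (j : ℕ) :
    ∑ i ∈ Finset.range n, u.coeff i * (f * X ^ i).coeff j = (u * f).coeff j := by
  conv_rhs => rw [Polynomial.as_sum_range' u n hu]
  rw [Finset.sum_mul, Polynomial.finset_sum_coeff]
  apply Finset.sum_congr rfl
  intro i _
  have h : (monomial i (u.coeff i)) * f = Polynomial.C (u.coeff i) * (f * X ^ i) := by
    rw [← C_mul_X_pow_eq_monomial]; ring
  rw [h, coeff_C_mul]

lemma natDegree_lt_of_degree_lt {p : R[X]} {n : ℕ} (hn : 0 < n) (h : p.degree < n) :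
    p.natDegree < n := by
  rcases eq_or_ne p 0 with rfl | hp
  · simpa using hn
  · rwa [Polynomial.natDegree_lt_iff_degree_lt hp]

lemma vecMul_syl (f g : R[X]) (m n : ℕ) (hm : 0 < m) (hn : 0 < n)
    (u v : R[X]) (hu : u.degree < n) (hv : v.degree < m) (j : Fin (n+m)) :
    (Matrix.vecMul
      (fun i : Fin (n+m) => if (i:ℕ) < n then u.coeff i else v.coeff ((i:ℕ) - n))
      (syl f g m n)) j = (u * f + v * g).coeff (j : ℕ) := by
  have hu' := natDegree_lt_of_degree_lt hn hu
  have hv' := natDegree_lt_of_degree_lt hm hv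
  have key : ∀ i : ℕ,
      (if i < n then u.coeff i else v.coeff (i - n)) *
        (if i < n then (f * X ^ i).coeff (j:ℕ) else (g * X ^ (i - n)).coeff (j:ℕ))
      = (fun i : ℕ => if i < n then u.coeff i * (f * X ^ i).coeff (j:ℕ)
        else v.coeff (i - n) * (g * X ^ (i - n)).coeff (j:ℕ)) i := by
    intro i; beta_reduce; split_ifs <;> rfl
  simp only [Matrix.vecMul, dotProduct, syl]
  calc ∑ i : Fin (n+m),
        (if (i:ℕ) < n then u.coeff (i:ℕ) else v.coeff ((i:ℕ) - n)) *
          (if (i:ℕ) < n then (f * X ^ (i:ℕ)).coeff (j:ℕ) else (g * X ^ ((i:ℕ) - n)).coeff (j:ℕ))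
      = ∑ i : Fin (n+m), (fun i : ℕ => if i < n then u.coeff i * (f * X ^ i).coeff (j:ℕ)
          else v.coeff (i - n) * (g * X ^ (i - n)).coeff (j:ℕ)) (i:ℕ) :=
        Finset.sum_congr rfl (fun i _ => key (i:ℕ))
    _ = (∑ i ∈ Finset.range n, (fun i : ℕ => if i < n then u.coeff i * (f * X ^ i).coeff (j:ℕ)
          else v.coeff (i - n) * (g * X ^ (i - n)).coeff (j:ℕ)) i)
        + ∑ i ∈ Finset.range m, (fun i : ℕ => if i < n then u.coeff i * (f * X ^ i).coeff (j:ℕ)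
          else v.coeff (i - n) * (g * X ^ (i - n)).coeff (j:ℕ)) (n + i) :=
        sum_fin_split n m (fun i : ℕ => if i < n then u.coeff i * (f * X ^ i).coeff (j:ℕ)
          else v.coeff (i - n) * (g * X ^ (i - n)).coeff (j:ℕ))
    _ = (u * f).coeff (j:ℕ) + (v * g).coeff (j:ℕ) := by
        congr 1
        · rw [← coeff_sum_mul u f n hu' j]
          apply Finset.sum_congr rfl
          intro i hi
          simp only [if_pos (Finset.mem_range.mp hi)]
        · rw [← coeff_sum_mul v g m hv' j]
          apply Finset.sum_congr rfl
          intro i _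
          simp only [if_neg (by omega : ¬ (n + i < n)), Nat.add_sub_cancel_left]
    _ = (u * f + v * g).coeff (j:ℕ) := (coeff_add _ _ _).symm

/-- If f and g share a root, the Sylvester determinant vanishes. -/
lemma syl_det_eq_zero_of_common_root {F : Type*} [Field F] (f g : F[X]) (m n : ℕ)
    (hm : 0 < m) (hn : 0 < n) (hf : f.natDegree ≤ m) (hg : g.natDegree ≤ n)
    (hf0 : f ≠ 0) (hg0 : g ≠ 0) (a : F) (hfa : f.eval a = 0) (hga : g.eval a = 0) :
    (syl f g m n).det = 0 := by
  obtain ⟨f₁, hf₁⟩ := (dvd_iff_isRoot (p := f) (a := a)).mpr hfa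
  obtain ⟨g₁, hg₁⟩ := (dvd_iff_isRoot (p := g) (a := a)).mpr hga
  have hXa : (X - Polynomial.C a) ≠ 0 := X_sub_C_ne_zero a
  have hf₁0 : f₁ ≠ 0 := fun h => hf0 (by rw [hf₁, h, mul_zero])
  have hg₁0 : g₁ ≠ 0 := fun h => hg0 (by rw [hg₁, h, mul_zero])
  have hdegf₁ : f₁.natDegree < m := by
    have h2 := Polynomial.natDegree_mul hXa hf₁0
    rw [← hf₁] at h2
    rw [natDegree_X_sub_C] at h2
    omega
  have hdegg₁ : g₁.natDegree < n := by
    have h2 := Polynomial.natDegree_mul hXa hg₁0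
    rw [← hg₁] at h2
    rw [natDegree_X_sub_C] at h2
    omega
  have hud : g₁.degree < n := by
    rw [← Polynomial.natDegree_lt_iff_degree_lt hg₁0]; exact hdegg₁
  have hvd : (-f₁).degree < m := by
    rw [degree_neg, ← Polynomial.natDegree_lt_iff_degree_lt hf₁0]; exact hdegf₁
  have hcomb : g₁ * f + (-f₁) * g = 0 := by
    rw [hf₁, hg₁]; ring
  rw [← Matrix.det_transpose, ← Matrix.exists_mulVec_eq_zero_iff]
  refine ⟨fun i : Fin (n+m) => if (i:ℕ) < n then g₁.coeff i else (-f₁).coeff ((i:ℕ) - n),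
    ?_, ?_⟩
  · intro h
    have hlt : g₁.natDegree < n + m := by omega
    have h2 := congrFun h ⟨g₁.natDegree, hlt⟩
    simp only [Pi.zero_apply] at h2
    rw [if_pos (show ((⟨g₁.natDegree, hlt⟩ : Fin (n+m)) : ℕ) < n from hdegg₁)] at h2
    exact Polynomial.leadingCoeff_ne_zero.mpr hg₁0 (by rw [← Polynomial.coeff_natDegree]; exact h2)
  · rw [Matrix.mulVec_transpose]
    funext j
    rw [vecMul_syl f g m n hm hn g₁ (-f₁) hud hvd j, hcomb]
    simp

/-- If the Sylvester determinant vanishes over a field, f and g have a common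
irreducible factor. -/
lemma common_factor_of_syl_det_eq_zero {F : Type*} [Field F] (f g : F[X]) (m n : ℕ)
    (hm : 0 < m) (hn : 0 < n) (hfm : f.natDegree = m) (hgn : g.natDegree ≤ n) (hg0 : g ≠ 0)
    (hdet : (syl f g m n).det = 0) :
    ∃ h : F[X], Irreducible h ∧ h ∣ f ∧ h ∣ g := by
  have hf0 : f ≠ 0 := fun h => by rw [h, natDegree_zero] at hfm; omega
  rw [← Matrix.det_transpose, ← Matrix.exists_mulVec_eq_zero_iff] at hdet
  obtain ⟨w, hw0, hker⟩ := hdet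
  rw [Matrix.mulVec_transpose] at hker
  set u : F[X] := ∑ i : Fin n, Polynomial.C (w (Fin.castAdd m i)) * X ^ (i:ℕ) with hu
  set v : F[X] := ∑ i : Fin m, Polynomial.C (w (Fin.natAdd n i)) * X ^ (i:ℕ) with hv
  have hucoeff : ∀ k : ℕ, (hk : k < n) → u.coeff k = w (⟨k, by omega⟩ : Fin (n+m)) := by
    intro k hk
    rw [hu, Polynomial.finset_sum_coeff]
    rw [Finset.sum_eq_single (⟨k, hk⟩ : Fin n)]
    · rw [coeff_C_mul, coeff_X_pow, if_pos rfl, mul_one]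
      exact congrArg w (by ext; simp)
    · intro i _ hik
      rw [coeff_C_mul, coeff_X_pow, if_neg (fun h => hik (Fin.ext (by simp [← h]))), mul_zero]
    · intro h; exact absurd (Finset.mem_univ _) h
  have hvcoeff : ∀ k : ℕ, (hk : k < m) → v.coeff k = w (⟨n + k, by omega⟩ : Fin (n+m)) := by
    intro k hk
    rw [hv, Polynomial.finset_sum_coeff]
    rw [Finset.sum_eq_single (⟨k, hk⟩ : Fin m)]
    · rw [coeff_C_mul, coeff_X_pow, if_pos rfl, mul_one]
      exact congrArg w (by ext; simp)
    · intro i _ hik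
      rw [coeff_C_mul, coeff_X_pow, if_neg (fun h => hik (Fin.ext (by simp [← h]))), mul_zero]
    · intro h; exact absurd (Finset.mem_univ _) h
  have hud : u.degree < n := by
    rw [hu]
    apply lt_of_le_of_lt (Polynomial.degree_sum_le _ _)
    rw [Finset.sup_lt_iff (show (⊥ : WithBot ℕ) < (n:ℕ) from WithBot.bot_lt_coe n)]
    intro i _
    apply lt_of_le_of_lt (degree_C_mul_X_pow_le _ _)
    exact_mod_cast Nat.cast_lt.mpr i.isLt
  have hvd : v.degree < m := by
    rw [hv]
    apply lt_of_le_of_lt (Polynomial.degree_sum_le _ _)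
    rw [Finset.sup_lt_iff (show (⊥ : WithBot ℕ) < (m:ℕ) from WithBot.bot_lt_coe m)]
    intro i _
    apply lt_of_le_of_lt (degree_C_mul_X_pow_le _ _)
    exact_mod_cast Nat.cast_lt.mpr i.isLt
  have hweq : (fun i : Fin (n+m) => if (i:ℕ) < n then u.coeff i else v.coeff ((i:ℕ) - n)) = w := by
    funext i
    by_cases hi : (i:ℕ) < n
    · rw [if_pos hi, hucoeff (i:ℕ) hi]
    · rw [if_neg hi, hvcoeff ((i:ℕ) - n) (by omega)]
      exact congrArg w (Fin.ext (by show n + ((i:ℕ) - n) = (i:ℕ); omega))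
  have hcomb : u * f + v * g = 0 := by
    have hund : u.natDegree ≤ n - 1 := by
      have := natDegree_lt_of_degree_lt hn hud; omega
    have hvnd : v.natDegree ≤ m - 1 := by
      have := natDegree_lt_of_degree_lt hm hvd; omega
    ext k
    rcases lt_or_ge k (n + m) with hk | hk
    · have h2 := congrFun hker ⟨k, hk⟩
      rw [← hweq, vecMul_syl f g m n hm hn u v hud hvd ⟨k, hk⟩] at h2
      simpa using h2
    · rw [coeff_add, coeff_zero]
      rw [coeff_eq_zero_of_natDegree_lt, coeff_eq_zero_of_natDegree_lt, add_zero]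
      · apply lt_of_le_of_lt (natDegree_mul_le)
        omega
      · apply lt_of_le_of_lt (natDegree_mul_le)
        omega
  have hu0 : u ≠ 0 := by
    intro h
    rcases eq_or_ne v 0 with hv0 | hv0
    · apply hw0
      rw [← hweq]
      funext i
      split_ifs <;> simp [h, hv0]
    · rw [h, zero_mul, zero_add] at hcomb
      exact hv0 ((mul_eq_zero.mp hcomb).resolve_right hg0)
  have hv0 : v ≠ 0 := by
    intro h
    rw [h, zero_mul, add_zero] at hcomb
    exact hu0 ((mul_eq_zero.mp hcomb).resolve_right hf0)
  have hnotco : ¬ IsCoprime f g := by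
    intro hco
    have hfdvd : f ∣ v * g := ⟨-u, by linear_combination hcomb⟩
    have hdvd := hco.dvd_of_dvd_mul_right hfdvd
    have hle := Polynomial.natDegree_le_of_dvd hdvd hv0
    have := natDegree_lt_of_degree_lt hm hvd
    omega
  classical
  have hgcd : ¬ IsUnit (EuclideanDomain.gcd f g) := fun h =>
    hnotco (EuclideanDomain.gcd_isUnit_iff.mp h)
  have hgcd0 : EuclideanDomain.gcd f g ≠ 0 := fun h =>
    hf0 (EuclideanDomain.gcd_eq_zero_iff.mp h).1
  obtain ⟨h, hirr, hdvd⟩ := WfDvdMonoid.exists_irreducible_factor hgcd hgcd0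
  exact ⟨h, hirr, hdvd.trans (EuclideanDomain.gcd_dvd_left f g),
    hdvd.trans (EuclideanDomain.gcd_dvd_right f g)⟩

lemma natDegree_det_le {N : ℕ} (M : Matrix (Fin N) (Fin N) ℂ[X]) (b : Fin N → ℕ)
    (hM : ∀ i j, (M i j).natDegree ≤ b i) : M.det.natDegree ≤ ∑ i, b i := by
  rw [Matrix.det_apply]
  apply Polynomial.natDegree_sum_le_of_forall_le
  intro σ _
  have h1 : (Equiv.Perm.sign σ • ∏ i, M (σ i) i).natDegree ≤ (∏ i, M (σ i) i).natDegree := by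
    rcases Int.units_eq_one_or (Equiv.Perm.sign σ) with h | h <;>
      rw [h] <;> simp [Units.smul_def]
  apply le_trans h1
  apply le_trans (Polynomial.natDegree_prod_le _ _)
  calc ∑ i, (M (σ i) i).natDegree ≤ ∑ i, b (σ i) :=
        Finset.sum_le_sum (fun i _ => hM (σ i) i)
    _ = ∑ i, b i := Equiv.sum_comp σ b



lemma biv_map_natDegree_le {S : Type*} [CommRing S] (p : ℂ[X]) (φ : ℂ[X] →+* S) :
    ((biv p).map φ).natDegree ≤ p.natDegree := by
  apply Polynomial.natDegree_le_iff_coeff_eq_zero.mpr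
  intro k hk
  rw [coeff_map, biv_coeff_eq_zero p k hk, map_zero]

lemma biv_map_coeff_top {S : Type*} [CommRing S] (p : ℂ[X]) (hp : 0 < p.natDegree)
    (φ : ℂ[X] →+* S) :
    ((biv p).map φ).coeff p.natDegree
      = φ (p * Polynomial.C ((starRingEnd ℂ) p.leadingCoeff)) := by
  rw [coeff_map, biv_coeff_top p hp]

lemma exists_common_factor (P₁ P₂ : ℂ[X]) (h₁ : 0 < P₁.natDegree) (h₂ : 0 < P₂.natDegree)
    (T : Finset ℂ)
    (hT : ∀ z ∈ T, ‖P₁.eval z‖ = 1 ∧ ‖P₂.eval z‖ = 1)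
    (hcard : 2 * P₁.natDegree * P₂.natDegree < T.card) :
    ∃ h : (FractionRing ℂ[X])[X], Irreducible h ∧
      h ∣ (biv P₁).map (algebraMap ℂ[X] (FractionRing ℂ[X])) ∧
      h ∣ (biv P₂).map (algebraMap ℂ[X] (FractionRing ℂ[X])) := by
  set n₁ := P₁.natDegree with hn₁
  set n₂ := P₂.natDegree with hn₂
  set M := syl (biv P₁) (biv P₂) n₁ n₂ with hM
  have hMdeg : ∀ (i j : Fin (n₂ + n₁)),
      (M i j).natDegree ≤ (fun i : Fin (n₂+n₁) => if (i:ℕ) < n₂ then n₁ else n₂) i := by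
    intro i j
    simp only [hM, syl]
    split_ifs with h
    · rw [coeff_mul_X_pow']
      split_ifs
      · exact biv_coeff_natDegree_le P₁ _
      · simp
    · rw [coeff_mul_X_pow']
      split_ifs
      · exact biv_coeff_natDegree_le P₂ _
      · simp
  have hsum : (∑ i : Fin (n₂+n₁), (fun i : Fin (n₂+n₁) => if (i:ℕ) < n₂ then n₁ else n₂) i)
      = 2 * n₁ * n₂ := by
    rw [show (∑ i : Fin (n₂+n₁), (fun i : Fin (n₂+n₁) => if (i:ℕ) < n₂ then n₁ else n₂) i)
        = ∑ i : Fin (n₂+n₁), (fun i : ℕ => if i < n₂ then n₁ else n₂) (i:ℕ) from rfl]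
    rw [sum_fin_split n₂ n₁ (fun i : ℕ => if i < n₂ then n₁ else n₂)]
    rw [Finset.sum_congr rfl (fun i hi => if_pos (Finset.mem_range.mp hi)),
      Finset.sum_congr rfl (fun i (hi : i ∈ Finset.range n₁) => if_neg (by omega : ¬ n₂ + i < n₂))]
    simp only [Finset.sum_const, Finset.card_range, smul_eq_mul]
    ring
  have hDdeg : M.det.natDegree ≤ 2 * n₁ * n₂ := by
    rw [← hsum]; exact natDegree_det_le M _ hMdeg
  have hP₁0 : P₁ ≠ 0 := fun h => by rw [hn₁, h] at h₁; simp at h₁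
  have hP₂0 : P₂ ≠ 0 := fun h => by rw [hn₂, h] at h₂; simp at h₂
  have hDzero : ∀ z ∈ T, eval z M.det = 0 := by
    intro z hz
    obtain ⟨hz1, hz2⟩ := hT z hz
    have hPz : P₁.eval z ≠ 0 := fun h => by rw [h] at hz1; simp at hz1
    have hQz : P₂.eval z ≠ 0 := fun h => by rw [h] at hz2; simp at hz2
    have hdet : eval z M.det = (M.map (evalRingHom z)).det := by
      rw [← RingHom.mapMatrix_apply, ← RingHom.map_det]; rfl
    rw [hdet, hM, syl_map]
    apply syl_det_eq_zero_of_common_root _ _ n₁ n₂ h₁ h₂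
      (biv_map_natDegree_le P₁ _) (biv_map_natDegree_le P₂ _) ?_ ?_ ((starRingEnd ℂ) z) ?_ ?_
    · intro h
      have := biv_map_coeff_top P₁ h₁ (evalRingHom z)
      rw [h, coeff_zero] at this
      apply hPz
      have h2 : P₁.eval z * ((starRingEnd ℂ) P₁.leadingCoeff) = 0 := by
        simpa using this.symm
      rcases mul_eq_zero.mp h2 with h3 | h3
      · exact h3
      · exact absurd h3 (by
          simp only [_root_.map_eq_zero]
          exact Polynomial.leadingCoeff_ne_zero.mpr hP₁0)
    · intro h
      have := biv_map_coeff_top P₂ h₂ (evalRingHom z)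
      rw [h, coeff_zero] at this
      apply hQz
      have h2 : P₂.eval z * ((starRingEnd ℂ) P₂.leadingCoeff) = 0 := by
        simpa using this.symm
      rcases mul_eq_zero.mp h2 with h3 | h3
      · exact h3
      · exact absurd h3 (by
          simp only [_root_.map_eq_zero]
          exact Polynomial.leadingCoeff_ne_zero.mpr hP₂0)
    · rw [eval_map]; exact biv_eval_lemniscate P₁ z hz1
    · rw [eval_map]; exact biv_eval_lemniscate P₂ z hz2
  have hD0 : M.det = 0 :=
    Polynomial.eq_zero_of_natDegree_lt_card_of_eval_eq_zero' M.det T hDzero (by omega)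
  -- move to the fraction field
  set K := FractionRing ℂ[X]
  set ψ := algebraMap ℂ[X] K with hψ
  have hψinj : Function.Injective ψ := IsFractionRing.injective ℂ[X] K
  have hdetK : (syl ((biv P₁).map ψ) ((biv P₂).map ψ) n₁ n₂).det = 0 := by
    rw [← syl_map, ← RingHom.mapMatrix_apply, ← RingHom.map_det, ← hM, hD0, map_zero]
  have hlc₁ : P₁ * Polynomial.C ((starRingEnd ℂ) P₁.leadingCoeff) ≠ 0 := by
    apply mul_ne_zero hP₁0
    simp only [Ne, Polynomial.C_eq_zero, _root_.map_eq_zero]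
    exact Polynomial.leadingCoeff_ne_zero.mpr hP₁0
  have hlc₂ : P₂ * Polynomial.C ((starRingEnd ℂ) P₂.leadingCoeff) ≠ 0 := by
    apply mul_ne_zero hP₂0
    simp only [Ne, Polynomial.C_eq_zero, _root_.map_eq_zero]
    exact Polynomial.leadingCoeff_ne_zero.mpr hP₂0
  have hfm : ((biv P₁).map ψ).natDegree = n₁ := by
    apply le_antisymm (biv_map_natDegree_le P₁ ψ)
    apply Polynomial.le_natDegree_of_ne_zero
    rw [biv_map_coeff_top P₁ h₁ ψ]
    exact fun h => hlc₁ (hψinj (h.trans (map_zero ψ).symm))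
  have hG0 : (biv P₂).map ψ ≠ 0 := by
    intro h
    have := biv_map_coeff_top P₂ h₂ ψ
    rw [h, coeff_zero] at this
    exact hlc₂ (hψinj (this.symm.trans (map_zero ψ).symm))
  exact common_factor_of_syl_det_eq_zero ((biv P₁).map ψ) ((biv P₂).map ψ) n₁ n₂ h₁ h₂
    hfm (biv_map_natDegree_le P₂ ψ) hG0 hdetK


open IsDedekindDomain

/-- Exponent injectivity in ℤₘ₀ for base < 1. -/
lemma zm0_pow_inj {π : WithZero (Multiplicative ℤ)} (h0 : π ≠ 0) (h1 : π < 1)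
    {a b : ℕ} (h : π ^ a = π ^ b) : a = b := by
  obtain ⟨g, rfl⟩ := WithZero.ne_zero_iff_exists.mp h0
  have hg1 : g < 1 := WithZero.coe_lt_one.mp h1
  have h2 : g ^ a = g ^ b := by
    have h' : ((g ^ a : Multiplicative ℤ) : WithZero (Multiplicative ℤ))
        = ((g ^ b : Multiplicative ℤ) : WithZero (Multiplicative ℤ)) := by
      push_cast at h ⊢
      exact h
    exact_mod_cast h'
  have h3 : (a : ℤ) * Multiplicative.toAdd g = (b : ℤ) * Multiplicative.toAdd g := by
    have h4 := congrArg Multiplicative.toAdd h2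
    rw [toAdd_pow, toAdd_pow, nsmul_eq_mul, nsmul_eq_mul] at h4
    exact_mod_cast h4
  have hgne : Multiplicative.toAdd g ≠ 0 := by
    intro hh
    have hg : g = 1 := by
      have h5 := congrArg Multiplicative.ofAdd hh
      simpa using h5
    rw [hg] at hg1
    exact lt_irrefl _ hg1
  have h6 : (a : ℤ) = b := mul_right_cancel₀ hgne h3
  exact_mod_cast h6

/-- The key multiplicity proportionality lemma. -/
lemma key_mult (P₁ P₂ : ℂ[X]) (h₁ : 0 < P₁.natDegree) (h₂ : 0 < P₂.natDegree)
    (h : (FractionRing ℂ[X])[X]) (hirr : Irreducible h)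
    (hF : h ∣ (biv P₁).map (algebraMap ℂ[X] (FractionRing ℂ[X])))
    (hG : h ∣ (biv P₂).map (algebraMap ℂ[X] (FractionRing ℂ[X])))
    (r : ℂ) (hr : P₁.eval r = 0) :
    P₂.natDegree * (P₁.rootMultiplicity r) = P₁.natDegree * (P₂.rootMultiplicity r) := by
  classical
  have hP₁0 : P₁ ≠ 0 := fun hh => by simp [hh] at h₁
  have hP₂0 : P₂ ≠ 0 := fun hh => by simp [hh] at h₂
  set K := FractionRing ℂ[X] with hK
  haveI : Fact (Irreducible h) := ⟨hirr⟩
  set L := AdjoinRoot h with hL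
  haveI : FiniteDimensional K L := PowerBasis.finite (AdjoinRoot.powerBasis hirr.ne_zero)
  haveI : CharZero K := charZero_of_injective_algebraMap (IsFractionRing.injective ℂ[X] K)
  haveI : CharZero L := charZero_of_injective_algebraMap (algebraMap K L).injective
  haveI : Algebra.IsSeparable K L := Algebra.IsSeparable.of_integral K L
  set B := integralClosure ℂ[X] L with hB
  haveI : IsFractionRing B L := integralClosure.isFractionRing_of_finite_extension K L
  haveI : IsDedekindDomain B := integralClosure.isDedekindDomain ℂ[X] K L
  -- the prime (X - C r) of ℂ[X] and a prime of B above it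
  set p : Ideal ℂ[X] := Ideal.span {X - Polynomial.C r} with hp
  haveI hpprime : p.IsPrime := (Ideal.span_singleton_prime (X_sub_C_ne_zero r)).mpr
    ((irreducible_X_sub_C r).prime)
  have hinjCL : Function.Injective (algebraMap ℂ[X] L) := by
    rw [IsScalarTower.algebraMap_eq ℂ[X] K L]
    exact (algebraMap K L).injective.comp (IsFractionRing.injective ℂ[X] K)
  have hinjCB : Function.Injective (algebraMap ℂ[X] B) := by
    intro a b hab
    apply hinjCL
    rw [IsScalarTower.algebraMap_apply ℂ[X] B L, IsScalarTower.algebraMap_apply ℂ[X] B L, hab]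
  have hker : RingHom.ker (algebraMap ℂ[X] B) ≤ p := by
    rw [(RingHom.injective_iff_ker_eq_bot _).mp hinjCB]
    exact bot_le
  obtain ⟨Q, hQprime, hQcomap⟩ :=
    Ideal.exists_ideal_over_prime_of_isIntegral_of_isDomain p hker
  have hQbot : Q ≠ ⊥ := by
    intro hh
    apply X_sub_C_ne_zero r
    have : (X - Polynomial.C r) ∈ p := Ideal.mem_span_singleton_self _
    rw [← hQcomap, hh] at this
    simp only [Ideal.mem_comap, Ideal.mem_bot] at this
    exact hinjCB (by rw [this, map_zero])
  set v : HeightOneSpectrum B := ⟨Q, hQprime, hQbot⟩ with hv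
  set w : Valuation L (WithZero (Multiplicative ℤ)) := v.valuation L with hw
  -- membership in Q detects divisibility by X - C r
  have hmem : ∀ q : ℂ[X], algebraMap ℂ[X] B q ∈ Q ↔ (X - Polynomial.C r) ∣ q := by
    intro q
    rw [← Ideal.mem_comap, hQcomap, hp, Ideal.mem_span_singleton]
  -- value of algebra map elements
  have hwle : ∀ q : ℂ[X], w (algebraMap ℂ[X] L q) ≤ 1 := by
    intro q
    rw [IsScalarTower.algebraMap_apply ℂ[X] B L]
    exact v.valuation_le_one _
  have hwlt : ∀ q : ℂ[X], w (algebraMap ℂ[X] L q) < 1 ↔ (X - Polynomial.C r) ∣ q := by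
    intro q
    rw [IsScalarTower.algebraMap_apply ℂ[X] B L, v.valuation_lt_one_iff_dvd,
      Ideal.dvd_span_singleton, hmem]
  set π : WithZero (Multiplicative ℤ) := w (algebraMap ℂ[X] L (X - Polynomial.C r)) with hπ
  have hπ1 : π < 1 := (hwlt _).mpr dvd_rfl
  have hπ0 : π ≠ 0 := by
    rw [hπ]
    rw [Valuation.ne_zero_iff]
    exact fun hh => X_sub_C_ne_zero r (hinjCL (by rw [hh, map_zero]))
  -- the valuation of a mapped polynomial is π ^ multiplicity
  have hwpoly : ∀ q : ℂ[X], q ≠ 0 →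
      w (algebraMap ℂ[X] L q) = π ^ (q.rootMultiplicity r) := by
    intro q hq
    set k := q.rootMultiplicity r with hk
    set q' := q /ₘ (X - Polynomial.C r) ^ k with hq'
    have hfac : (X - Polynomial.C r) ^ k * q' = q :=
      Polynomial.pow_mul_divByMonic_rootMultiplicity_eq q r
    have hq'root : q'.eval r ≠ 0 :=
      Polynomial.eval_divByMonic_pow_rootMultiplicity_ne_zero r hq
    have hq'1 : w (algebraMap ℂ[X] L q') = 1 := by
      rcases lt_or_eq_of_le (hwle q') with hlt | heq
      · exfalso
        obtain ⟨c, hc⟩ := (hwlt q').mp hlt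
        apply hq'root
        rw [hc]
        simp
      · exact heq
    calc w (algebraMap ℂ[X] L q) = w (algebraMap ℂ[X] L ((X - Polynomial.C r) ^ k * q')) := by
          rw [hfac]
      _ = π ^ k * w (algebraMap ℂ[X] L q') := by
          rw [map_mul, map_mul, map_pow, map_pow, hπ]
      _ = π ^ k := by rw [hq'1, mul_one]
  -- the relations p_i * q_i = 1 in L
  set y : L := AdjoinRoot.root h with hy
  set φc : ℂ →+* L := (algebraMap ℂ[X] L).comp Polynomial.C with hφc
  have hrel : ∀ q : ℂ[X], h ∣ (biv q).map (algebraMap ℂ[X] K) →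
      (algebraMap ℂ[X] L q) * (eval₂ φc y (conjP q)) = 1 := by
    intro q hdvd
    have h0 : aeval y ((biv q).map (algebraMap ℂ[X] K)) = 0 := by
      rw [hy, AdjoinRoot.aeval_eq, AdjoinRoot.mk_eq_zero]
      exact hdvd
    rw [Polynomial.aeval_def, Polynomial.eval₂_map,
      ← IsScalarTower.algebraMap_eq ℂ[X] K L] at h0
    rw [biv_eval₂ q (algebraMap ℂ[X] L) y] at h0
    rw [← hφc] at h0
    linear_combination h0
  -- scalar values
  have hwscalar : ∀ c : ℂ, c ≠ 0 → w (φc c) = 1 := by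
    intro c hc
    have h1 : w (φc c) ≤ 1 := hwle (Polynomial.C c)
    have h2 : w (φc c⁻¹) ≤ 1 := hwle (Polynomial.C c⁻¹)
    have h3 : w (φc c) * w (φc c⁻¹) = 1 := by
      rw [← map_mul, ← map_mul, mul_inv_cancel₀ hc, map_one, map_one]
    apply le_antisymm h1
    calc (1 : WithZero (Multiplicative ℤ)) = w (φc c) * w (φc c⁻¹) := h3.symm
      _ ≤ w (φc c) * 1 := mul_le_mul_right h2 _
      _ = w (φc c) := mul_one _
  set t : WithZero (Multiplicative ℤ) := w y with ht
  -- t > 1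
  have hrel₁ := hrel P₁ hF
  have hrel₂ := hrel P₂ hG
  have hk₁pos : 0 < P₁.rootMultiplicity r := (Polynomial.rootMultiplicity_pos hP₁0).mpr hr
  have hq₁big : 1 < w (eval₂ φc y (conjP P₁)) := by
    have hval : w (algebraMap ℂ[X] L P₁) * w (eval₂ φc y (conjP P₁)) = 1 := by
      rw [← map_mul, hrel₁, map_one]
    have hval1 : w (algebraMap ℂ[X] L P₁) < 1 := by
      rw [hwpoly P₁ hP₁0]
      exact pow_lt_one' hπ1 (by omega)
    by_contra hle
    push_neg at hle
    have : w (algebraMap ℂ[X] L P₁) * w (eval₂ φc y (conjP P₁)) < 1 :=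
      lt_of_le_of_lt (mul_le_of_le_one_right' hle) hval1
    rw [hval] at this
    exact lt_irrefl _ this
  have hwterm : ∀ (q : ℂ[X]) (i : ℕ), w (φc (q.coeff i) * y ^ i) ≤ t ^ i := by
    intro q i
    rw [map_mul, map_pow, ← ht]
    rcases eq_or_ne (q.coeff i) 0 with hc | hc
    · rw [hc, map_zero, Valuation.map_zero, zero_mul]
      exact zero_le'
    · rw [hwscalar _ hc, one_mul]
  have ht1 : 1 < t := by
    by_contra hle
    push_neg at hle
    apply absurd hq₁big
    simp only [not_lt]
    rw [Polynomial.eval₂_eq_sum_range]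
    apply Valuation.map_sum_le
    intro i _
    calc w (φc ((conjP P₁).coeff i) * y ^ i) ≤ t ^ i := hwterm (conjP P₁) i
      _ ≤ 1 := pow_le_one' hle i
  have ht0 : t ≠ 0 := fun hh => by rw [hh] at ht1; exact absurd ht1 (by simp)
  -- dominance: w q_i = t ^ natDegree
  have hdom : ∀ q : ℂ[X], 0 < q.natDegree → q ≠ 0 →
      w (eval₂ φc y (conjP q)) = t ^ q.natDegree := by
    intro q hqdeg hq0
    have hdeg : (conjP q).natDegree = q.natDegree := conjP_natDegree q
    rw [Polynomial.eval₂_eq_sum_range, hdeg, Finset.sum_range_succ]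
    have hlast : w (φc ((conjP q).coeff q.natDegree) * y ^ q.natDegree) = t ^ q.natDegree := by
      have hlcne : (conjP q).coeff q.natDegree ≠ 0 := by
        rw [← hdeg, Polynomial.coeff_natDegree]
        apply Polynomial.leadingCoeff_ne_zero.mpr
        rw [conjP]
        exact (Polynomial.map_ne_zero_iff (RingHom.injective _)).mpr hq0
      rw [map_mul, map_pow, ← ht, hwscalar _ hlcne, one_mul]
    have hrest : w (∑ i ∈ Finset.range q.natDegree, φc ((conjP q).coeff i) * y ^ i)
        < t ^ q.natDegree := by
      apply lt_of_le_of_lt (Valuation.map_sum_le w ?_)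
        (pow_lt_pow_right₀ ht1 (by omega : q.natDegree - 1 < q.natDegree))
      intro i hi
      calc w (φc ((conjP q).coeff i) * y ^ i) ≤ t ^ i := hwterm (conjP q) i
        _ ≤ t ^ (q.natDegree - 1) :=
          pow_le_pow_right' (le_of_lt ht1) (by have := Finset.mem_range.mp hi; omega)
    rw [Valuation.map_add_eq_of_lt_right w (lt_of_lt_of_le hrest (le_of_eq hlast.symm)), hlast]
  -- put it together
  have hkey : ∀ q : ℂ[X], 0 < q.natDegree → q ≠ 0 → h ∣ (biv q).map (algebraMap ℂ[X] K) →
      π ^ (q.rootMultiplicity r) * t ^ q.natDegree = 1 := by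
    intro q hqd hq0 hdvd
    have := hrel q hdvd
    have h2 : w (algebraMap ℂ[X] L q) * w (eval₂ φc y (conjP q)) = 1 := by
      rw [← map_mul, this, map_one]
    rw [hwpoly q hq0, hdom q hqd hq0] at h2
    exact h2
  have e₁ := hkey P₁ h₁ hP₁0 hF
  have e₂ := hkey P₂ h₂ hP₂0 hG
  have e₃ : π ^ (P₁.rootMultiplicity r * P₂.natDegree) * t ^ (P₁.natDegree * P₂.natDegree) = 1 := by
    have := congrArg (fun x => x ^ P₂.natDegree) e₁
    simpa [mul_pow, ← pow_mul] using this
  have e₄ : π ^ (P₂.rootMultiplicity r * P₁.natDegree) * t ^ (P₁.natDegree * P₂.natDegree) = 1 := by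
    have := congrArg (fun x => x ^ P₁.natDegree) e₂
    have h2 : π ^ (P₂.rootMultiplicity r * P₁.natDegree) * t ^ (P₂.natDegree * P₁.natDegree) = 1 := by
      simpa [mul_pow, ← pow_mul] using this
    rwa [Nat.mul_comm P₂.natDegree P₁.natDegree] at h2
  have e₅ : π ^ (P₁.rootMultiplicity r * P₂.natDegree)
      = π ^ (P₂.rootMultiplicity r * P₁.natDegree) := by
    have := e₃.trans e₄.symm
    exact mul_right_cancel₀ (pow_ne_zero _ ht0) this
  have h6 := zm0_pow_inj hπ0 hπ1 e₅
  rw [Nat.mul_comm P₂.natDegree (P₁.rootMultiplicity r),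
    Nat.mul_comm P₁.natDegree (P₂.rootMultiplicity r)]
  exact h6

lemma construct (P₁ P₂ : ℂ[X]) (h₁ : 0 < P₁.natDegree) (h₂ : 0 < P₂.natDegree)
    (hprop : ∀ r : ℂ, P₂.natDegree * P₁.rootMultiplicity r
      = P₁.natDegree * P₂.rootMultiplicity r)
    (z₀ : ℂ) (hz₁ : ‖P₁.eval z₀‖ = 1) (hz₂ : ‖P₂.eval z₀‖ = 1) :
    ∃ (P : ℂ[X]) (m₁ m₂ : ℕ) (c : ℂ), 0 < m₁ ∧ 0 < m₂ ∧ ‖c‖ = 1 ∧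
      P₁ = P ^ m₁ ∧ P₂ = Polynomial.C c * P ^ m₂ := by
  classical
  have hP₁0 : P₁ ≠ 0 := fun hh => by simp [hh] at h₁
  have hP₂0 : P₂ ≠ 0 := fun hh => by simp [hh] at h₂
  set n₁ := P₁.natDegree with hn₁
  set n₂ := P₂.natDegree with hn₂
  set v₁ : ℂ → ℕ := fun r => P₁.rootMultiplicity r with hv₁
  set v₂ : ℂ → ℕ := fun r => P₂.rootMultiplicity r with hv₂
  set d := Nat.gcd n₁ n₂ with hdd
  have hd : 0 < d := Nat.gcd_pos_of_pos_left _ h₁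
  set m₁ := n₁ / d with hm₁d
  set m₂ := n₂ / d with hm₂d
  have hdm₁ : d * m₁ = n₁ := Nat.mul_div_cancel' (Nat.gcd_dvd_left n₁ n₂)
  have hdm₂ : d * m₂ = n₂ := Nat.mul_div_cancel' (Nat.gcd_dvd_right n₁ n₂)
  have hm₁ : 0 < m₁ := by
    rcases Nat.eq_zero_or_pos m₁ with hh | hh
    · rw [hh, Nat.mul_zero] at hdm₁; omega
    · exact hh
  have hm₂ : 0 < m₂ := by
    rcases Nat.eq_zero_or_pos m₂ with hh | hh
    · rw [hh, Nat.mul_zero] at hdm₂; omega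
    · exact hh
  have hco : Nat.Coprime m₁ m₂ := Nat.coprime_div_gcd_div_gcd hd
  have hmr : ∀ r : ℂ, m₂ * v₁ r = m₁ * v₂ r := by
    intro r
    have hp := hprop r
    have h3 : d * (m₂ * v₁ r) = d * (m₁ * v₂ r) := by
      rw [← mul_assoc, ← mul_assoc, hdm₂, hdm₁]
      exact hp
    exact Nat.eq_of_mul_eq_mul_left hd h3
  have hm₁dvd : ∀ r : ℂ, m₁ ∣ v₁ r := by
    intro r
    apply hco.dvd_of_dvd_mul_left
    rw [hmr r]
    exact Dvd.intro _ rfl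
  set e : ℂ → ℕ := fun r => v₁ r / m₁ with he
  have hem : ∀ r : ℂ, m₁ * e r = v₁ r := fun r => Nat.mul_div_cancel' (hm₁dvd r)
  have hv₂e : ∀ r : ℂ, v₂ r = m₂ * e r := by
    intro r
    have h3 : m₁ * (m₂ * e r) = m₁ * v₂ r := by
      rw [show m₁ * (m₂ * e r) = m₂ * (m₁ * e r) by ring, hem r]
      exact hmr r
    exact (Nat.eq_of_mul_eq_mul_left hm₁ h3).symm
  set S := P₁.roots.toFinset with hS
  have hsplit : ∀ (q : ℂ[X]), q ≠ 0 →
      q = Polynomial.C q.leadingCoeff *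
        ∏ r ∈ q.roots.toFinset, (X - Polynomial.C r) ^ (q.rootMultiplicity r) := by
    intro q hq
    have h3 := (IsAlgClosed.splits q).eq_prod_roots
    rw [Finset.prod_multiset_map_count] at h3
    simp only [Polynomial.count_roots] at h3
    exact h3
  have hS₂ : P₂.roots.toFinset = S := by
    ext r
    rw [hS, Multiset.mem_toFinset, Multiset.mem_toFinset,
      Polynomial.mem_roots hP₂0, Polynomial.mem_roots hP₁0]
    constructor
    · rintro hroot
      have h4 : 0 < v₂ r := (Polynomial.rootMultiplicity_pos hP₂0).mpr hroot
      have h5 : 0 < v₁ r := by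
        rcases Nat.eq_zero_or_pos (v₁ r) with hz | hz
        · exfalso
          have h6 := hmr r
          rw [hz, Nat.mul_zero] at h6
          rcases Nat.mul_eq_zero.mp h6.symm with h7 | h7 <;> omega
        · exact hz
      exact (Polynomial.rootMultiplicity_pos hP₁0).mp h5
    · rintro hroot
      have h4 : 0 < v₁ r := (Polynomial.rootMultiplicity_pos hP₁0).mpr hroot
      have h5 : 0 < v₂ r := by
        rcases Nat.eq_zero_or_pos (v₂ r) with hz | hz
        · exfalso
          have h6 := hmr r
          rw [hz, Nat.mul_zero] at h6
          rcases Nat.mul_eq_zero.mp h6 with h7 | h7 <;> omega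
        · exact hz
      exact (Polynomial.rootMultiplicity_pos hP₂0).mp h5
  set Q₀ : ℂ[X] := ∏ r ∈ S, (X - Polynomial.C r) ^ (e r) with hQ₀
  have hQ₀m : ∀ m : ℕ, Q₀ ^ m = ∏ r ∈ S, (X - Polynomial.C r) ^ (m * e r) := by
    intro m
    rw [hQ₀, ← Finset.prod_pow]
    apply Finset.prod_congr rfl
    intro r _
    rw [← pow_mul, Nat.mul_comm]
  have hsplit₁ : P₁ = Polynomial.C P₁.leadingCoeff * Q₀ ^ m₁ := by
    rw [hQ₀m m₁]
    conv_lhs => rw [hsplit P₁ hP₁0]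
    congr 1
    apply Finset.prod_congr rfl
    intro r _
    rw [hem r]
  have hsplit₂ : P₂ = Polynomial.C P₂.leadingCoeff * Q₀ ^ m₂ := by
    rw [hQ₀m m₂]
    conv_lhs => rw [hsplit P₂ hP₂0]
    rw [hS₂]
    congr 1
    apply Finset.prod_congr rfl
    intro r _
    rw [show (m₂ * e r) = rootMultiplicity r P₂ from (hv₂e r).symm]
  have hlc₁ : P₁.leadingCoeff ≠ 0 := Polynomial.leadingCoeff_ne_zero.mpr hP₁0
  have hlc₂ : P₂.leadingCoeff ≠ 0 := Polynomial.leadingCoeff_ne_zero.mpr hP₂0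
  obtain ⟨γ, hγ⟩ : ∃ γ : ℂ, γ ^ m₁ = P₁.leadingCoeff := by
    obtain ⟨γ, hγ⟩ := Complex.exists_root (f := X ^ m₁ - Polynomial.C P₁.leadingCoeff)
      (by rw [Polynomial.degree_X_pow_sub_C hm₁]; exact_mod_cast hm₁)
    refine ⟨γ, ?_⟩
    have := hγ
    simp only [Polynomial.IsRoot, Polynomial.eval_sub, Polynomial.eval_pow, Polynomial.eval_X,
      Polynomial.eval_C, sub_eq_zero] at this
    exact this
  have hγ0 : γ ≠ 0 := by
    intro hh
    rw [hh, zero_pow (by omega)] at hγ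
    exact hlc₁ hγ.symm
  set P : ℂ[X] := Polynomial.C γ * Q₀ with hPdef
  set c : ℂ := P₂.leadingCoeff / γ ^ m₂ with hcdef
  have hPP₁ : P₁ = P ^ m₁ := by
    rw [hPdef, mul_pow, ← Polynomial.C_pow, hγ]
    exact hsplit₁
  have hPP₂ : P₂ = Polynomial.C c * P ^ m₂ := by
    rw [hPdef, mul_pow, ← Polynomial.C_pow, ← mul_assoc, ← Polynomial.C_mul, hcdef,
      div_mul_cancel₀ _ (pow_ne_zero m₂ hγ0)]
    exact hsplit₂
  have habs : ‖P.eval z₀‖ = 1 := by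
    rw [hPP₁] at hz₁
    rw [Polynomial.eval_pow, norm_pow] at hz₁
    rcases pow_eq_one_iff_cases.mp hz₁ with hh | hh | hh
    · omega
    · exact hh
    · exfalso; nlinarith [hh.1, norm_nonneg (P.eval z₀)]
  have hcabs : ‖c‖ = 1 := by
    rw [hPP₂] at hz₂
    rw [Polynomial.eval_mul, Polynomial.eval_C, Polynomial.eval_pow, norm_mul, norm_pow,
      habs, one_pow, mul_one] at hz₂
    exact hz₂
  exact ⟨P, m₁, m₂, c, hm₁, hm₂, hcabs, hPP₁, hPP₂⟩

lemma main_step (P₁ P₂ : ℂ[X]) (h₁ : 0 < P₁.natDegree) (h₂ : 0 < P₂.natDegree)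
    (T : Finset ℂ) (hT : ↑T ⊆ P₁.lemniscate ∩ P₂.lemniscate)
    (hcard : 2 * P₁.natDegree * P₂.natDegree < T.card) :
    ∃ (P : ℂ[X]) (m₁ m₂ : ℕ) (c : ℂ), 0 < m₁ ∧ 0 < m₂ ∧ ‖c‖ = 1 ∧
      P₁ = P ^ m₁ ∧ P₂ = Polynomial.C c * P ^ m₂ := by
  have hT' : ∀ z ∈ T, ‖P₁.eval z‖ = 1 ∧ ‖P₂.eval z‖ = 1 := by
    intro z hz
    have hmem := hT (Finset.mem_coe.mpr hz)
    exact ⟨hmem.1, hmem.2⟩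
  obtain ⟨h, hirr, hF, hG⟩ := exists_common_factor P₁ P₂ h₁ h₂ T hT' hcard
  have hprop : ∀ r : ℂ, P₂.natDegree * P₁.rootMultiplicity r
      = P₁.natDegree * P₂.rootMultiplicity r := by
    intro r
    rcases eq_or_ne (P₁.eval r) 0 with hr | hr
    · exact key_mult P₁ P₂ h₁ h₂ h hirr hF hG r hr
    rcases eq_or_ne (P₂.eval r) 0 with hr2 | hr2
    · exact (key_mult P₂ P₁ h₂ h₁ h hirr hG hF r hr2).symm
    · rw [Polynomial.rootMultiplicity_eq_zero hr, Polynomial.rootMultiplicity_eq_zero hr2]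
      simp
  have hTpos : 0 < T.card := by omega
  obtain ⟨z₀, hz₀⟩ := Finset.card_pos.mp hTpos
  obtain ⟨hz1, hz2⟩ := hT' z₀ hz₀
  exact construct P₁ P₂ h₁ h₂ hprop z₀ hz1 hz2

end LemHelp

theorem polynomial_lemniscate_intersection_tfae
    (P₁ P₂ : Polynomial ℂ) (n₁ n₂ : ℕ)
    (h₁ : 0 < P₁.natDegree) (h₂ : 0 < P₂.natDegree)
    (hd₁ : P₁.natDegree = n₁) (hd₂ : P₂.natDegree = n₂) :
    ((∃ T : Finset ℂ, ↑T ⊆ P₁.lemniscate ∩ P₂.lemniscate ∧ 2 * n₁ * n₂ < T.card) ↔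
      (P₁.lemniscate ∩ P₂.lemniscate).Infinite) ∧
    ((P₁.lemniscate ∩ P₂.lemniscate).Infinite ↔
      ∃ (P : Polynomial ℂ) (m₁ m₂ : ℕ) (c : ℂ), 0 < m₁ ∧ 0 < m₂ ∧ ‖c‖ = 1 ∧
        P₁ = P ^ m₁ ∧ P₂ = Polynomial.C c * P ^ m₂) := by
  subst hd₁
  subst hd₂
  constructor
  · constructor
    · rintro ⟨T, hT, hc⟩
      exact LemHelp.iii_implies_infinite P₁ P₂ h₁
        (LemHelp.main_step P₁ P₂ h₁ h₂ T hT hc)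
    · intro hinf
      obtain ⟨T, hT, hcard⟩ :=
        hinf.exists_subset_card_eq (2 * P₁.natDegree * P₂.natDegree + 1)
      exact ⟨T, hT, by omega⟩
  · constructor
    · intro hinf
      obtain ⟨T, hT, hcard⟩ :=
        hinf.exists_subset_card_eq (2 * P₁.natDegree * P₂.natDegree + 1)
      exact LemHelp.main_step P₁ P₂ h₁ h₂ T hT (by omega)
    · intro hiii
      exact LemHelp.iii_implies_infinite P₁ P₂ h₁ hiii
end

section
/- Let P and Q be non-constant complex polynomials. The bivariate polynomial P(x)·Q(y) − 1 is reducible over ℂ if and only if there exist an integer d > 1 and complex polynomials P₁ and Q₁ such that P = P₁^d and Q = Q₁^d. -/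
/-- A bivariate polynomial is reducible if it is a product of two non-constant
polynomials. -/
def MvPolynomial.IsReducibleOverC (F : MvPolynomial (Fin 2) ℂ) : Prop :=
  ∃ G H : MvPolynomial (Fin 2) ℂ, 0 < G.totalDegree ∧ 0 < H.totalDegree ∧ F = G * H

open Polynomial

set_option linter.unusedTactic false
set_option linter.unusedSectionVars false
set_option linter.unusedVariables false

noncomputable section
namespace PQAux


abbrev B := Polynomial (Polynomial ℂ)

def phi : Polynomial ℂ →+* B := eval₂RingHom (C.comp C) X

lemma phi_coeff (r : Polynomial ℂ) (i : ℕ) : (phi r).coeff i = Polynomial.C (r.coeff i) := by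
  induction r using Polynomial.induction_on' with
  | add p q hp hq => simp [phi, hp, hq, eval₂_add] at *
  | monomial n a =>
    simp only [phi, coe_eval₂RingHom, eval₂_monomial, RingHom.coe_comp, Function.comp_apply]
    rcases eq_or_ne n i with rfl | h
    · simp [coeff_C_mul, coeff_X_pow, coeff_monomial]
    · simp [coeff_C_mul, coeff_X_pow, coeff_monomial, h, Ne.symm h]

def sw : B →+* B := eval₂RingHom phi (Polynomial.C Polynomial.X)

lemma sw_coeff (A : B) (i j : ℕ) : ((sw A).coeff i).coeff j = ((A.coeff j).coeff i) := by
  induction A using Polynomial.induction_on' with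
  | add p q hp hq => simp [hp, hq] at *
  | monomial n a =>
    simp only [sw, coe_eval₂RingHom, eval₂_monomial]
    rw [show (Polynomial.C (Polynomial.X : Polynomial ℂ)) ^ n
        = Polynomial.C ((Polynomial.X : Polynomial ℂ) ^ n) by rw [Polynomial.C_pow],
      coeff_mul_C, phi_coeff, coeff_C_mul, coeff_X_pow, coeff_monomial]
    split_ifs with h1 h2 h2 <;> simp_all

lemma sw_sw (A : B) : sw (sw A) = A := by
  ext i j
  rw [sw_coeff, sw_coeff]

lemma sw_C_C (a : ℂ) : sw (Polynomial.C (Polynomial.C a)) = Polynomial.C (Polynomial.C a) := by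
  ext i j; rw [sw_coeff]
  rcases eq_or_ne i 0 with rfl | h <;> rcases eq_or_ne j 0 with rfl | h2 <;> simp_all [coeff_C]

lemma sw_constP (P : Polynomial ℂ) : sw (Polynomial.C P) = P.map Polynomial.C := by
  ext i j
  rw [sw_coeff]
  rcases eq_or_ne j 0 with rfl | h
  · simp [coeff_C, coeff_map]
  · simp [h, coeff_C, coeff_map]

lemma sw_mapP (P : Polynomial ℂ) : sw (P.map Polynomial.C) = Polynomial.C P := by
  have := congrArg sw (sw_constP P)
  rw [sw_sw] at this
  exact this.symm

lemma sw_inj : Function.Injective sw := Function.LeftInverse.injective sw_sw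

lemma natDegree_leadingCoeff_sw_le (A : B) :
    (sw A).leadingCoeff.natDegree ≤ A.natDegree := by
  rw [natDegree_le_iff_coeff_eq_zero]
  intro N hN
  rw [leadingCoeff, sw_coeff, coeff_eq_zero_of_natDegree_lt hN]
  simp




-- valuation helpers
lemma rm_eq_of_add_dvd {β : ℂ} {t D : Polynomial ℂ} (ht : t ≠ 0) (V : ℕ)
    (htV : rootMultiplicity β t = V) (hD : (X - C β) ^ (V + 1) ∣ D) :
    t + D ≠ 0 ∧ rootMultiplicity β (t + D) = V := by
  have hnd : ¬ (X - C β) ^ (V + 1) ∣ t := by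
    intro h
    have := (Polynomial.le_rootMultiplicity_iff ht).mpr h
    omega
  have hs : t + D ≠ 0 := by
    rintro h
    have : t = -D := by linear_combination h
    exact hnd (this ▸ hD.neg_right)
  constructor
  · exact hs
  · have h1 : (X - C β) ^ V ∣ t + D := by
      refine dvd_add (htV ▸ Polynomial.pow_rootMultiplicity_dvd t β) ?_
      exact dvd_trans (pow_dvd_pow _ (Nat.le_succ V)) hD
    have h2 : ¬ (X - C β) ^ (V + 1) ∣ t + D := by
      intro h
      exact hnd (by simpa using dvd_sub h hD)
    have hle : V ≤ rootMultiplicity β (t + D) := (Polynomial.le_rootMultiplicity_iff hs).mpr h1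
    have hlt : rootMultiplicity β (t + D) < V + 1 := by
      by_contra hc
      exact h2 ((pow_dvd_pow _ (not_lt.mp hc)).trans (Polynomial.pow_rootMultiplicity_dvd _ β))
    omega

/-- Key Gauss-type lemma: if the Newton data of the product G*H w.r.t. the
(X - β)-adic valuation lies above the segment through (0,0) of slope e/a,
with value 0 at index 0, then so does that of each factor. -/
lemma gauss_key (β : ℂ) (a e : ℕ) (ha : 0 < a) (G H : B) (hG : G ≠ 0) (hH : H ≠ 0)
    (hlo : ∀ i, (G * H).coeff i ≠ 0 →
      (i : ℤ) * e ≤ (a : ℤ) * rootMultiplicity β ((G * H).coeff i))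
    (h00 : (G * H).coeff 0 ≠ 0)
    (h0 : rootMultiplicity β ((G * H).coeff 0) = 0) :
    (∀ i, G.coeff i ≠ 0 → (i : ℤ) * e ≤ (a : ℤ) * rootMultiplicity β (G.coeff i)) ∧
    (∀ j, H.coeff j ≠ 0 → (j : ℤ) * e ≤ (a : ℤ) * rootMultiplicity β (H.coeff j)) := by
  classical
  have hg0 : G.coeff 0 ≠ 0 := fun h => h00 (by rw [Polynomial.mul_coeff_zero, h, zero_mul])
  have hh0 : H.coeff 0 ≠ 0 := fun h => h00 (by rw [Polynomial.mul_coeff_zero, h, mul_zero])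
  have hrm0 : rootMultiplicity β (G.coeff 0) = 0 ∧ rootMultiplicity β (H.coeff 0) = 0 := by
    have := Polynomial.rootMultiplicity_mul (x := β) (mul_ne_zero hg0 hh0)
    rw [← Polynomial.mul_coeff_zero, h0] at *
    omega
  set vG : ℕ → ℤ := fun i => (a : ℤ) * rootMultiplicity β (G.coeff i) - (i : ℤ) * e with hvG
  set vH : ℕ → ℤ := fun j => (a : ℤ) * rootMultiplicity β (H.coeff j) - (j : ℤ) * e with hvH
  have hGs : G.support.Nonempty := Polynomial.support_nonempty.mpr hG
  have hHs : H.support.Nonempty := Polynomial.support_nonempty.mpr hH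
  set WG := G.support.inf' hGs vG with hWG
  set WH := H.support.inf' hHs vH with hWH
  have hWGle : WG ≤ 0 := by
    have h1 : (0 : ℕ) ∈ G.support := Polynomial.mem_support_iff.mpr hg0
    have h2 := Finset.inf'_le vG h1
    have h3 : vG 0 = 0 := by simp [hvG, hrm0.1]
    rw [h3] at h2
    exact h2
  have hWHle : WH ≤ 0 := by
    have h1 : (0 : ℕ) ∈ H.support := Polynomial.mem_support_iff.mpr hh0
    have h2 := Finset.inf'_le vH h1
    have h3 : vH 0 = 0 := by simp [hvH, hrm0.2]
    rw [h3] at h2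
    exact h2
  -- choose extremal indices
  set SG := G.support.filter (fun i => vG i = WG) with hSG
  set SH := H.support.filter (fun j => vH j = WH) with hSH
  have hSGne : SG.Nonempty := by
    obtain ⟨i, hi, hval⟩ := Finset.exists_mem_eq_inf' hGs vG
    exact ⟨i, Finset.mem_filter.mpr ⟨hi, hval.symm⟩⟩
  have hSHne : SH.Nonempty := by
    obtain ⟨j, hj, hval⟩ := Finset.exists_mem_eq_inf' hHs vH
    exact ⟨j, Finset.mem_filter.mpr ⟨hj, hval.symm⟩⟩
  set i₀ := SG.max' hSGne with hi₀
  set j₀ := SH.max' hSHne with hj₀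
  have hi₀mem := SG.max'_mem hSGne
  have hj₀mem := SH.max'_mem hSHne
  have hi₀supp : i₀ ∈ G.support := (Finset.mem_filter.mp hi₀mem).1
  have hj₀supp : j₀ ∈ H.support := (Finset.mem_filter.mp hj₀mem).1
  have hi₀val : vG i₀ = WG := (Finset.mem_filter.mp hi₀mem).2
  have hj₀val : vH j₀ = WH := (Finset.mem_filter.mp hj₀mem).2
  have hgi₀ : G.coeff i₀ ≠ 0 := Polynomial.mem_support_iff.mp hi₀supp
  have hhj₀ : H.coeff j₀ ≠ 0 := Polynomial.mem_support_iff.mp hj₀supp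
  have hWGmin : ∀ i, G.coeff i ≠ 0 → WG ≤ vG i := fun i hi =>
    Finset.inf'_le vG (Polynomial.mem_support_iff.mpr hi)
  have hWHmin : ∀ j, H.coeff j ≠ 0 → WH ≤ vH j := fun j hj =>
    Finset.inf'_le vH (Polynomial.mem_support_iff.mpr hj)
  set V := rootMultiplicity β (G.coeff i₀) + rootMultiplicity β (H.coeff j₀) with hV
  -- the off-diagonal part is divisible by (X - β)^(V+1)
  set k := i₀ + j₀ with hk
  have hdvd : ∀ p : ℕ × ℕ, p ∈ Finset.HasAntidiagonal.antidiagonal k → p ≠ (i₀, j₀) →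
      (X - C β) ^ (V + 1) ∣ G.coeff p.1 * H.coeff p.2 := by
    rintro ⟨i, j⟩ hmem hne
    have hij : i + j = k := Finset.HasAntidiagonal.mem_antidiagonal.mp hmem
    rcases eq_or_ne (G.coeff i) 0 with h | hgi
    · simp [h]
    rcases eq_or_ne (H.coeff j) 0 with h | hhj
    · simp [h]
    have hVij : V + 1 ≤ rootMultiplicity β (G.coeff i) + rootMultiplicity β (H.coeff j) := by
      have h1 : WG ≤ vG i := hWGmin i hgi
      have h2 : WH ≤ vH j := hWHmin j hhj
      have hstrict : WG + 1 ≤ vG i ∨ WH + 1 ≤ vH j := by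
        rcases lt_trichotomy i i₀ with hlt | heqi | hgt
        · -- then j > j₀
          have hjgt : j₀ < j := by omega
          right
          rcases eq_or_lt_of_le h2 with heq | hlt2
          · exfalso
            have hjm : j ∈ SH := Finset.mem_filter.mpr ⟨Polynomial.mem_support_iff.mpr hhj, heq.symm⟩
            have hle := SH.le_max' j hjm
            rw [← hj₀] at hle
            omega
          · linarith
        · exfalso
          apply hne
          have hji : j = j₀ := by omega
          rw [heqi, hji]
        · left
          rcases eq_or_lt_of_le h1 with heq | hlt2
          · exfalso
            have him : i ∈ SG := Finset.mem_filter.mpr ⟨Polynomial.mem_support_iff.mpr hgi, heq.symm⟩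
            have hle := SG.le_max' i him
            rw [← hi₀] at hle
            omega
          · linarith
      -- from vG i + vH j ≥ WG + WH + 1 conclude
      have hsum : WG + WH + 1 ≤ vG i + vH j := by
        rcases hstrict with h | h
        · linarith
        · linarith
      have hVval : (a : ℤ) * V = WG + WH + (i₀ : ℤ) * e + (j₀ : ℤ) * e := by
        simp only [hvG, hvH] at hi₀val hj₀val
        push_cast [hV]
        linarith
      have : (a : ℤ) * V + 1 ≤ (a : ℤ) * (rootMultiplicity β (G.coeff i) +
          rootMultiplicity β (H.coeff j)) := by
        have := hsum
        simp only [hvG, hvH] at this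
        have hsum2 : i + j = i₀ + j₀ := by omega
        have hije0 : (i : ℤ) + (j : ℤ) = (i₀ : ℤ) + (j₀ : ℤ) := by exact_mod_cast hsum2
        have hije : (i : ℤ) * e + (j : ℤ) * e = (i₀ : ℤ) * e + (j₀ : ℤ) * e := by
          linear_combination (e : ℤ) * hije0
        push_cast
        push_cast at hVval
        linarith
      have haV : (V : ℤ) < (rootMultiplicity β (G.coeff i) + rootMultiplicity β (H.coeff j) : ℤ) := by
        by_contra hc
        push_neg at hc
        have : (a:ℤ) * (rootMultiplicity β (G.coeff i) + rootMultiplicity β (H.coeff j) : ℤ)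
            ≤ (a:ℤ) * V := by
          apply mul_le_mul_of_nonneg_left _ (by positivity)
          exact_mod_cast hc
        push_cast at this
        linarith
      exact_mod_cast haV
    calc (X - C β) ^ (V + 1) ∣ (X - C β) ^ (rootMultiplicity β (G.coeff i) +
          rootMultiplicity β (H.coeff j)) := pow_dvd_pow _ hVij
      _ ∣ G.coeff i * H.coeff j := by
          rw [pow_add]
          exact mul_dvd_mul (Polynomial.pow_rootMultiplicity_dvd _ β)
            (Polynomial.pow_rootMultiplicity_dvd _ β)
  -- hence the coefficient at k has valuation exactly V
  have hcoeffk : (G * H).coeff k = G.coeff i₀ * H.coeff j₀ +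
      ∑ p ∈ (Finset.HasAntidiagonal.antidiagonal k).erase (i₀, j₀), G.coeff p.1 * H.coeff p.2 := by
    rw [Polynomial.coeff_mul]
    exact (Finset.add_sum_erase (Finset.HasAntidiagonal.antidiagonal k)
      (fun p => G.coeff p.1 * H.coeff p.2) (a := (i₀, j₀))
      (Finset.HasAntidiagonal.mem_antidiagonal.mpr (by simp [hk]))).symm
  have hDdvd : (X - C β) ^ (V + 1) ∣
      ∑ p ∈ (Finset.HasAntidiagonal.antidiagonal k).erase (i₀, j₀), G.coeff p.1 * H.coeff p.2 := by
    refine Finset.dvd_sum ?_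
    intro p hp
    exact hdvd p (Finset.mem_of_mem_erase hp) (Finset.ne_of_mem_erase hp)
  have ht : G.coeff i₀ * H.coeff j₀ ≠ 0 := mul_ne_zero hgi₀ hhj₀
  have htV : rootMultiplicity β (G.coeff i₀ * H.coeff j₀) = V :=
    Polynomial.rootMultiplicity_mul ht
  obtain ⟨hknz, hkval⟩ := rm_eq_of_add_dvd ht V htV hDdvd
  rw [← hcoeffk] at hknz hkval
  -- apply the hypothesis at k
  have hmain := hlo k hknz
  rw [hkval] at hmain
  -- conclude WG + WH ≥ 0
  have hVval : (a : ℤ) * V = WG + WH + (i₀ : ℤ) * e + (j₀ : ℤ) * e := by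
    simp only [hvG, hvH] at hi₀val hj₀val
    push_cast [hV]
    linarith
  have hWGHnn : 0 ≤ WG + WH := by
    have hke : (k : ℤ) = (i₀ : ℤ) + (j₀ : ℤ) := by push_cast [hk]; ring
    rw [hke] at hmain
    push_cast at hmain
    push_cast at hVval
    linarith
  have hWG0 : WG = 0 := by omega
  have hWH0 : WH = 0 := by omega
  constructor
  · intro i hi
    have := hWGmin i hi
    rw [hWG0] at this
    simp only [hvG] at this
    omega
  · intro j hj
    have := hWHmin j hj
    rw [hWH0] at this
    simp only [hvH] at this
    omega


section LemASection




lemma sum_count_le_card {α : Type*} [DecidableEq α] (s : Finset α) (M : Multiset α) :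
    ∑ a ∈ s, M.count a ≤ Multiset.card M := by
  classical
  have h1 : ∑ a ∈ s ∩ M.toFinset, M.count a = ∑ a ∈ s, M.count a := by
    apply Finset.sum_subset (Finset.inter_subset_left)
    intro x hx hnx
    rw [Multiset.count_eq_zero]
    intro hmem
    exact hnx (Finset.mem_inter.mpr ⟨hx, Multiset.mem_toFinset.mpr hmem⟩)
  rw [← h1, ← Multiset.toFinset_sum_count_eq M]
  exact Finset.sum_le_sum_of_subset (Finset.inter_subset_right)

lemma sum_rootMult_le {r : Polynomial ℂ} (hr : r ≠ 0) (s : Finset ℂ) :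
    ∑ β ∈ s, rootMultiplicity β r ≤ r.natDegree := by
  calc ∑ β ∈ s, rootMultiplicity β r = ∑ β ∈ s, Multiset.count β r.roots :=
        Finset.sum_congr rfl (fun β _ => (Polynomial.count_roots _).symm)
    _ ≤ Multiset.card r.roots := sum_count_le_card s r.roots
    _ ≤ r.natDegree := Polynomial.card_roots' _

variable (A Bq : Polynomial ℂ)

/-- The bivariate polynomial A(z)·Bq(t) - 1, with z the outer variable. -/
def FF : B := Polynomial.map Polynomial.C A * Polynomial.C Bq - 1

lemma FF_coeff (i : ℕ) :
    (FF A Bq).coeff i = Polynomial.C (A.coeff i) * Bq - (if i = 0 then 1 else 0) := by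
  by_cases h : i = 0 <;>
    simp [FF, coeff_mul_C, coeff_map, Polynomial.coeff_one, h]

variable {A Bq} (hA : 0 < A.natDegree) (hB : 0 < Bq.natDegree)

lemma FF_coeff_ne (i : ℕ) (hi : i ≠ 0) :
    (FF A Bq).coeff i = Polynomial.C (A.coeff i) * Bq := by
  rw [FF_coeff]; simp [hi]

lemma FF_coeff_zero : (FF A Bq).coeff 0 = Polynomial.C (A.coeff 0) * Bq - 1 := by
  rw [FF_coeff]; simp

include hA hB

omit hA in
lemma Bq_ne : Bq ≠ 0 := fun h => by simp [h] at hB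

lemma FF_natDegree : (FF A Bq).natDegree = A.natDegree := by
  have hBne : Bq ≠ 0 := Bq_ne hB
  have hane : A.natDegree ≠ 0 := hA.ne'
  have hlcA : A.leadingCoeff ≠ 0 := leadingCoeff_ne_zero.mpr (ne_zero_of_natDegree_gt hA)
  have hcoeff : (FF A Bq).coeff A.natDegree ≠ 0 := by
    rw [FF_coeff_ne A.natDegree hane]
    exact mul_ne_zero (Polynomial.C_ne_zero.mpr hlcA) hBne
  apply le_antisymm
  · rw [natDegree_le_iff_coeff_eq_zero]
    intro N hN
    rw [FF_coeff_ne N (by omega), Polynomial.coeff_eq_zero_of_natDegree_lt hN]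
    simp
  · exact le_natDegree_of_ne_zero hcoeff

lemma FF_ne : FF A Bq ≠ 0 := by
  intro h
  have h2 := FF_natDegree hA hB
  rw [h] at h2
  simp at h2
  omega

lemma FF_leadingCoeff : (FF A Bq).leadingCoeff = Polynomial.C A.leadingCoeff * Bq := by
  rw [Polynomial.leadingCoeff, FF_natDegree hA hB,
    FF_coeff_ne A.natDegree (by omega)]
  rfl

/-- Main consequences of the Newton polygon argument for a factorization of FF. -/
lemma lemA {G H : B} (hGH : FF A Bq = G * H) :
    G ≠ 0 ∧ H ≠ 0 ∧
    G.natDegree + H.natDegree = A.natDegree ∧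
    (∀ β : ℂ, (A.natDegree) * rootMultiplicity β G.leadingCoeff
        = G.natDegree * rootMultiplicity β Bq) ∧
    (A.natDegree * G.leadingCoeff.natDegree = G.natDegree * Bq.natDegree) ∧
    (G.natDegree = 0 → ∃ c : ℂ, c ≠ 0 ∧ G = Polynomial.C (Polynomial.C c)) := by
  classical
  have hBne : Bq ≠ 0 := Bq_ne hB
  have hFne : FF A Bq ≠ 0 := FF_ne hA hB
  have hG : G ≠ 0 := fun h => hFne (by rw [hGH, h, zero_mul])
  have hH : H ≠ 0 := fun h => hFne (by rw [hGH, h, mul_zero])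
  set a := A.natDegree with hadef
  set k := G.natDegree with hkdef
  have hdeg : k + H.natDegree = a := by
    rw [hkdef, ← natDegree_mul hG hH, ← hGH, FF_natDegree hA hB]
  have hlc : G.leadingCoeff * H.leadingCoeff = Polynomial.C A.leadingCoeff * Bq := by
    rw [← leadingCoeff_mul, ← hGH, FF_leadingCoeff hA hB]
  have hlcG : G.leadingCoeff ≠ 0 := leadingCoeff_ne_zero.mpr hG
  have hlcH : H.leadingCoeff ≠ 0 := leadingCoeff_ne_zero.mpr hH
  have hlcA : A.leadingCoeff ≠ 0 := leadingCoeff_ne_zero.mpr (ne_zero_of_natDegree_gt hA)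
  have h00 : (G * H).coeff 0 ≠ 0 := by
    rw [← hGH, FF_coeff_zero]
    intro h
    have h1 : Polynomial.C (A.coeff 0) * Bq = 1 := by linear_combination h
    have h2 : IsUnit Bq := isUnit_of_mul_isUnit_right (h1 ▸ isUnit_one)
    have h3 := natDegree_eq_zero_of_isUnit h2
    omega
  -- key per-root statement
  have hroot : ∀ β : ℂ, a * rootMultiplicity β G.leadingCoeff
      = k * rootMultiplicity β Bq ∧ a * rootMultiplicity β H.leadingCoeff
      = H.natDegree * rootMultiplicity β Bq := by
    intro β
    set e := rootMultiplicity β Bq with hedef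
    have hsum : rootMultiplicity β G.leadingCoeff + rootMultiplicity β H.leadingCoeff = e := by
      have h1 : rootMultiplicity β (G.leadingCoeff * H.leadingCoeff) = e := by
        rw [hlc, Polynomial.rootMultiplicity_mul (mul_ne_zero (Polynomial.C_ne_zero.mpr hlcA) hBne),
          Polynomial.rootMultiplicity_C]
        omega
      rw [← h1, Polynomial.rootMultiplicity_mul (mul_ne_zero hlcG hlcH)]
    rcases Nat.eq_zero_or_pos e with he0 | hepos
    · have h1 : rootMultiplicity β G.leadingCoeff = 0 := by omega
      have h2 : rootMultiplicity β H.leadingCoeff = 0 := by omega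
      constructor
      · rw [h1, he0]; simp
      · rw [h2, he0]; simp
    have hBqβ : Bq.eval β = 0 := by
      by_contra hne
      rw [hedef, Polynomial.rootMultiplicity_eq_zero hne] at hepos
      omega
    have h0 : rootMultiplicity β ((G * H).coeff 0) = 0 := by
      rw [← hGH, FF_coeff_zero]
      apply Polynomial.rootMultiplicity_eq_zero
      simp [Polynomial.IsRoot, hBqβ]
    have hlo : ∀ i, (G * H).coeff i ≠ 0 →
        (i : ℤ) * e ≤ (a : ℤ) * rootMultiplicity β ((G * H).coeff i) := by
      intro i hi
      rcases eq_or_ne i 0 with rfl | hine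
      · simp
        positivity
      have hc : (G * H).coeff i = Polynomial.C (A.coeff i) * Bq := by
        rw [← hGH, FF_coeff_ne i hine]
      have hAi : A.coeff i ≠ 0 := by
        intro h
        rw [hc, h] at hi
        simp at hi
      have hile : i ≤ a := le_natDegree_of_ne_zero hAi
      have hrm : rootMultiplicity β ((G * H).coeff i) = e := by
        rw [hc, Polynomial.rootMultiplicity_mul
          (mul_ne_zero (Polynomial.C_ne_zero.mpr hAi) hBne), Polynomial.rootMultiplicity_C]
        omega
      rw [hrm]
      have hz : (i : ℤ) ≤ (a : ℤ) := by exact_mod_cast hile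
      nlinarith [Int.ofNat_nonneg e]
    obtain ⟨hGside, hHside⟩ := gauss_key β a e hA G H hG hH hlo h00 h0
    have hGlead := hGside k hlcG
    have hHlead := hHside H.natDegree hlcH
    have hsumZ : (rootMultiplicity β G.leadingCoeff : ℤ) +
        (rootMultiplicity β H.leadingCoeff : ℤ) = (e : ℤ) := by exact_mod_cast hsum
    have hdegZ : (k : ℤ) + (H.natDegree : ℤ) = (a : ℤ) := by exact_mod_cast hdeg
    have hGlead2 : (k : ℤ) * e ≤ (a : ℤ) * rootMultiplicity β G.leadingCoeff := hGlead
    have hHlead2 : (H.natDegree : ℤ) * e ≤ (a : ℤ) * rootMultiplicity β H.leadingCoeff := hHlead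
    have key : (a : ℤ) * rootMultiplicity β G.leadingCoeff
        + (a : ℤ) * rootMultiplicity β H.leadingCoeff = (a : ℤ) * e := by
      linear_combination (a : ℤ) * hsumZ
    have key2 : (k : ℤ) * e + (H.natDegree : ℤ) * e = (a : ℤ) * e := by
      linear_combination (e : ℤ) * hdegZ
    constructor
    · have hz : (a : ℤ) * rootMultiplicity β G.leadingCoeff = (k : ℤ) * e := by
        linarith [hGlead2, hHlead2]
      exact_mod_cast hz
    · have hz : (a : ℤ) * rootMultiplicity β H.leadingCoeff = (H.natDegree : ℤ) * e := by
        linarith [hGlead2, hHlead2]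
      exact_mod_cast hz
  -- degree identity
  have hsplits : Splits Bq := IsAlgClosed.splits Bq
  have hcard : Multiset.card Bq.roots = Bq.natDegree := splits_iff_card_roots.mp hsplits
  have hsumroots : ∑ β ∈ Bq.roots.toFinset, rootMultiplicity β Bq = Bq.natDegree := by
    rw [← hcard, ← Multiset.toFinset_sum_count_eq]
    exact Finset.sum_congr rfl (fun β _ => (Polynomial.count_roots Bq).symm)
  have hlowG : k * Bq.natDegree ≤ a * G.leadingCoeff.natDegree := by
    calc k * Bq.natDegree = ∑ β ∈ Bq.roots.toFinset, k * rootMultiplicity β Bq := by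
          rw [← Finset.mul_sum, hsumroots]
      _ = ∑ β ∈ Bq.roots.toFinset, a * rootMultiplicity β G.leadingCoeff :=
          Finset.sum_congr rfl (fun β _ => ((hroot β).1).symm)
      _ = a * ∑ β ∈ Bq.roots.toFinset, rootMultiplicity β G.leadingCoeff := by
          rw [Finset.mul_sum]
      _ ≤ a * G.leadingCoeff.natDegree :=
          Nat.mul_le_mul_left a (sum_rootMult_le hlcG _)
  have hlowH : H.natDegree * Bq.natDegree ≤ a * H.leadingCoeff.natDegree := by
    calc H.natDegree * Bq.natDegree
        = ∑ β ∈ Bq.roots.toFinset, H.natDegree * rootMultiplicity β Bq := by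
          rw [← Finset.mul_sum, hsumroots]
      _ = ∑ β ∈ Bq.roots.toFinset, a * rootMultiplicity β H.leadingCoeff :=
          Finset.sum_congr rfl (fun β _ => ((hroot β).2).symm)
      _ = a * ∑ β ∈ Bq.roots.toFinset, rootMultiplicity β H.leadingCoeff := by
          rw [Finset.mul_sum]
      _ ≤ a * H.leadingCoeff.natDegree :=
          Nat.mul_le_mul_left a (sum_rootMult_le hlcH _)
  have hlcdegsum : G.leadingCoeff.natDegree + H.leadingCoeff.natDegree = Bq.natDegree := by
    rw [← natDegree_mul hlcG hlcH, hlc]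
    exact natDegree_C_mul hlcA
  have hdegid : a * G.leadingCoeff.natDegree = k * Bq.natDegree := by
    have h1 : a * G.leadingCoeff.natDegree + a * H.leadingCoeff.natDegree
        = k * Bq.natDegree + H.natDegree * Bq.natDegree := by
      rw [← Nat.mul_add, hlcdegsum, ← Nat.add_mul, hdeg]
    omega
  -- degenerate factor
  have hudeg : k = 0 → ∃ c : ℂ, c ≠ 0 ∧ G = Polynomial.C (Polynomial.C c) := by
    intro hk0
    obtain ⟨g, hg⟩ := Polynomial.natDegree_eq_zero.mp hk0
    have hgne : g ≠ 0 := by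
      intro h
      rw [h] at hg
      exact hG (by rw [← hg]; simp)
    have hdvd : ∀ i, g ∣ (FF A Bq).coeff i := by
      intro i
      rw [hGH, ← hg]
      rw [show (Polynomial.C g * H).coeff i = g * H.coeff i from coeff_C_mul _]
      exact Dvd.intro _ rfl
    have hdvd1 : g ∣ Bq := by
      have h1 := hdvd a
      rw [FF_coeff_ne a hA.ne'] at h1
      have hu : IsUnit (Polynomial.C A.leadingCoeff) := Polynomial.isUnit_C.mpr hlcA.isUnit
      exact hu.dvd_mul_left.mp h1
    have hdvd0 := hdvd 0
    rw [FF_coeff_zero] at hdvd0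
    have hdvd2 : g ∣ Polynomial.C (A.coeff 0) * Bq := Dvd.dvd.mul_left hdvd1 _
    have hone : g ∣ 1 := by
      have h2 := dvd_sub hdvd2 hdvd0
      simpa using h2
    obtain ⟨c, hcu, hcg⟩ := Polynomial.isUnit_iff.mp (isUnit_of_dvd_one hone)
    exact ⟨c, hcu.ne_zero, by rw [← hg, ← hcg]⟩
  exact ⟨hG, hH, hdeg, fun β => (hroot β).1, hdegid, hudeg⟩


end LemASection


lemma nt_lemma {n m p k : ℕ} (hm : 0 < m) (hmn : m < n) (hp : 0 < p)
    (hmpnk : m * p = n * k) :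
    ∃ d, 1 < d ∧ (∀ f, n ∣ m * f → d ∣ f) ∧ (∀ e, p ∣ k * e → d ∣ e) := by
  have hn : 0 < n := lt_trans hm hmn
  set g := Nat.gcd n m with hg
  have hgpos : 0 < g := Nat.gcd_pos_of_pos_left m hn
  have hgn : g ∣ n := Nat.gcd_dvd_left n m
  have hgm : g ∣ m := Nat.gcd_dvd_right n m
  set n₁ := n / g with hn₁
  set m₁ := m / g with hm₁
  have hnval : n = g * n₁ := (Nat.mul_div_cancel' hgn).symm
  have hmval : m = g * m₁ := (Nat.mul_div_cancel' hgm).symm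
  have hcop : Nat.Coprime n₁ m₁ := Nat.coprime_div_gcd_div_gcd hgpos
  have hm₁pos : 0 < m₁ := by
    rcases Nat.eq_zero_or_pos m₁ with h | h
    · rw [h, mul_zero] at hmval; omega
    · exact h
  have hd1 : 1 < n₁ := by
    by_contra hle
    push_neg at hle
    have hgle : g ≤ m := Nat.le_of_dvd hm hgm
    interval_cases n₁
    · omega
    · omega
  have hdvdf : ∀ f, n ∣ m * f → n₁ ∣ f := by
    intro f hf
    have h1 : n₁ ∣ m₁ * f := by
      have h2 : g * n₁ ∣ g * (m₁ * f) := by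
        rw [← hnval, ← mul_assoc, ← hmval]
        exact hf
      exact (Nat.mul_dvd_mul_iff_left hgpos).mp h2
    exact hcop.dvd_of_dvd_mul_left h1
  -- p-side
  have hn₁p : n₁ ∣ p := by
    have h1 : n₁ ∣ m₁ * p := by
      have h2 : g * n₁ ∣ g * (m₁ * p) := by
        rw [← mul_assoc, ← hmval, ← hnval]
        exact Dvd.intro k hmpnk.symm |>.mul_left 1 |> (by simpa using ·)
      exact (Nat.mul_dvd_mul_iff_left hgpos).mp h2
    exact hcop.dvd_of_dvd_mul_left h1
  obtain ⟨s, hs⟩ := hn₁p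
  have hspos : 0 < s := by
    rcases Nat.eq_zero_or_pos s with h | h
    · rw [h, mul_zero] at hs; omega
    · exact h
  have hk : k = m₁ * s := by
    have h1 : m * p = n * (m₁ * s) := by
      rw [hmval, hs, hnval]
      ring
    have h2 : n * k = n * (m₁ * s) := by rw [← hmpnk, h1]
    exact Nat.eq_of_mul_eq_mul_left hn h2
  refine ⟨n₁, hd1, hdvdf, ?_⟩
  intro e he
  have h1 : n₁ ∣ m₁ * e := by
    have h2 : n₁ * s ∣ m₁ * s * e := by rw [← hs, ← hk]; exact he
    have h3 : n₁ * s ∣ m₁ * e * s := by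
      have : m₁ * s * e = m₁ * e * s := by ring
      rwa [this] at h2
    exact (Nat.mul_dvd_mul_iff_right hspos).mp h3
  exact hcop.dvd_of_dvd_mul_left h1

lemma pow_of_dvd_mults (R : Polynomial ℂ) (hR : R ≠ 0) (d : ℕ) (hd : 0 < d)
    (h : ∀ α : ℂ, d ∣ rootMultiplicity α R) : ∃ R₁, R = R₁ ^ d := by
  classical
  obtain ⟨c, hc⟩ : ∃ c : ℂ, c ^ d = R.leadingCoeff := by
    obtain ⟨z, hz⟩ := Complex.exists_root (f := X ^ d - Polynomial.C R.leadingCoeff)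
      (by rw [degree_X_pow_sub_C hd]; exact_mod_cast hd)
    refine ⟨z, ?_⟩
    have := hz
    simp only [Polynomial.IsRoot, Polynomial.eval_sub, Polynomial.eval_pow, Polynomial.eval_X,
      Polynomial.eval_C] at this
    linear_combination this
  refine ⟨Polynomial.C c * ∏ α ∈ R.roots.toFinset,
    (X - Polynomial.C α) ^ (rootMultiplicity α R / d), ?_⟩
  rw [mul_pow, ← Polynomial.C_pow, hc, ← Finset.prod_pow]
  have hsplit : R = Polynomial.C R.leadingCoeff *
      (Multiset.map (fun a => X - Polynomial.C a) R.roots).prod :=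
    (IsAlgClosed.splits R).eq_prod_roots
  rw [Finset.prod_multiset_map_count] at hsplit
  nth_rewrite 1 [hsplit]
  congr 1
  apply Finset.prod_congr rfl
  intro α hα
  rw [← pow_mul, Polynomial.count_roots, Nat.div_mul_cancel (h α)]




def T : MvPolynomial (Fin 2) ℂ ≃ₐ[ℂ] B :=
  (MvPolynomial.finSuccEquiv ℂ 1).trans (Polynomial.mapAlgEquiv
    ((MvPolynomial.finSuccEquiv ℂ 0).trans
      (Polynomial.mapAlgEquiv (MvPolynomial.isEmptyAlgEquiv ℂ (Fin 0)))))

lemma T_X0 : T (MvPolynomial.X 0) = Polynomial.X := by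
  simp [T, MvPolynomial.finSuccEquiv_X_zero, Polynomial.mapAlgEquiv]

lemma T_X1 : T (MvPolynomial.X 1) = Polynomial.C Polynomial.X := by
  have h : (1 : Fin 2) = Fin.succ 0 := rfl
  rw [T]
  simp only [AlgEquiv.trans_apply]
  rw [h, MvPolynomial.finSuccEquiv_X_succ]
  simp [Polynomial.mapAlgEquiv, MvPolynomial.finSuccEquiv_X_zero]

lemma algebraMap_B (c : ℂ) : algebraMap ℂ B c = Polynomial.C (Polynomial.C c) := by
  rw [Polynomial.algebraMap_apply, Polynomial.algebraMap_apply]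
  rfl

lemma aeval_X_outer (P : Polynomial ℂ) :
    Polynomial.aeval (Polynomial.X : B) P = Polynomial.map Polynomial.C P := by
  induction P using Polynomial.induction_on' with
  | add p q hp hq => simp [hp, hq]
  | monomial n a =>
    simp [Polynomial.aeval_monomial, Polynomial.map_monomial,
      ← Polynomial.C_mul_X_pow_eq_monomial]

lemma aeval_CX (Q : Polynomial ℂ) :
    Polynomial.aeval (Polynomial.C (Polynomial.X) : B) Q = Polynomial.C Q := by
  induction Q using Polynomial.induction_on' with
  | add p q hp hq => simp [hp, hq]
  | monomial n a =>
    rw [Polynomial.aeval_monomial, ← Polynomial.C_pow, algebraMap_B, ← Polynomial.C_mul,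
      Polynomial.C_mul_X_pow_eq_monomial]

lemma T_F (P Q : Polynomial ℂ) :
    T (Polynomial.aeval (MvPolynomial.X 0) P * Polynomial.aeval (MvPolynomial.X 1) Q - 1)
      = FF P Q := by
  rw [map_sub, map_mul, map_one, FF]
  rw [← Polynomial.aeval_algHom_apply, ← Polynomial.aeval_algHom_apply, T_X0, T_X1,
    aeval_X_outer, aeval_CX]

lemma eqC_of_td0 {p : MvPolynomial (Fin 2) ℂ} (h : p.totalDegree = 0) :
    ∃ c : ℂ, p = MvPolynomial.C c := by
  refine ⟨MvPolynomial.coeff 0 p, ?_⟩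
  ext m
  rw [MvPolynomial.coeff_C]
  rcases eq_or_ne (0 : Fin 2 →₀ ℕ) m with rfl | hm
  · simp
  · rw [if_neg hm]
    by_contra hc
    have hmem : m ∈ p.support := MvPolynomial.mem_support_iff.mpr hc
    have := (MvPolynomial.totalDegree_eq_zero_iff _ p).mp h m hmem
    apply hm
    ext x
    simp [this x]

lemma T_nonconst {p : MvPolynomial (Fin 2) ℂ} (h : 0 < p.totalDegree) (c : ℂ) :
    T p ≠ Polynomial.C (Polynomial.C c) := by
  intro hc
  have h2 : p = MvPolynomial.C c := by
    apply T.injective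
    rw [hc]
    rw [show (MvPolynomial.C c : MvPolynomial (Fin 2) ℂ) = algebraMap ℂ _ c from rfl]
    rw [AlgEquiv.commutes, algebraMap_B]
  rw [h2] at h
  simp [MvPolynomial.totalDegree_C] at h



lemma exists_eval_ne {R : Polynomial ℂ} (h : 0 < R.natDegree) :
    ∃ s t : ℂ, R.eval s ≠ R.eval t := by
  by_contra h'
  push_neg at h'
  have hR : R = Polynomial.C (R.eval 0) := by
    apply Polynomial.funext
    intro r
    rw [h' r 0]
    simp
  rw [hR] at h
  simp at h

lemma exists_eval_ne_zero {R : Polynomial ℂ} (hR : R ≠ 0) : ∃ s, R.eval s ≠ 0 := by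
  by_contra h'
  push_neg at h'
  apply hR
  apply Polynomial.funext
  intro r
  simp [h' r]

lemma eval_surj {R : Polynomial ℂ} (h : 0 < R.natDegree) (t : ℂ) : ∃ s, R.eval s = t := by
  have hdeg : 0 < (R - Polynomial.C t).degree := by
    have h1 : (R - Polynomial.C t).degree = R.degree := by
      apply Polynomial.degree_sub_C
      exact Polynomial.natDegree_pos_iff_degree_pos.mp h
    rw [h1]
    exact Polynomial.natDegree_pos_iff_degree_pos.mp h
  obtain ⟨z, hz⟩ := Complex.exists_root hdeg
  refine ⟨z, ?_⟩
  have := hz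
  simp only [Polynomial.IsRoot, Polynomial.eval_sub, Polynomial.eval_C] at this
  linear_combination this



abbrev Mv := MvPolynomial (Fin 2) ℂ

lemma aeval_pt (z : Fin 2 → ℂ) (R : Polynomial ℂ) (i : Fin 2) :
    MvPolynomial.aeval z (Polynomial.aeval (MvPolynomial.X i : Mv) R) = R.eval (z i) := by
  rw [← Polynomial.aeval_algHom_apply, MvPolynomial.aeval_X, Polynomial.coe_aeval_eq_eval]

lemma reverse_main (P Q P₁ Q₁ : Polynomial ℂ) (hP : 0 < P.natDegree) (hQ : 0 < Q.natDegree)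
    (d : ℕ) (hd : 1 < d) (hP1 : P = P₁ ^ d) (hQ1 : Q = Q₁ ^ d) :
    ∃ G H : Mv, 0 < G.totalDegree ∧ 0 < H.totalDegree ∧
      Polynomial.aeval (MvPolynomial.X 0 : Mv) P *
        Polynomial.aeval (MvPolynomial.X 1 : Mv) Q - 1 = G * H := by
  classical
  set A1 := Polynomial.aeval (MvPolynomial.X 0 : Mv) P₁ with hA1
  set B1 := Polynomial.aeval (MvPolynomial.X 1 : Mv) Q₁ with hB1
  set u := A1 * B1 with hu
  have hp1 : 0 < P₁.natDegree := by
    rw [hP1, Polynomial.natDegree_pow] at hP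
    exact Nat.pos_of_ne_zero (fun h => by simp [h] at hP)
  have hq1 : 0 < Q₁.natDegree := by
    rw [hQ1, Polynomial.natDegree_pow] at hQ
    exact Nat.pos_of_ne_zero (fun h => by simp [h] at hQ)
  have hP₁ne : P₁ ≠ 0 := ne_zero_of_natDegree_gt hp1
  have hQ₁ne : Q₁ ≠ 0 := ne_zero_of_natDegree_gt hq1
  have hevu : ∀ z : Fin 2 → ℂ, MvPolynomial.aeval z u = P₁.eval (z 0) * Q₁.eval (z 1) := by
    intro z
    rw [hu, map_mul, hA1, hB1, aeval_pt, aeval_pt]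
  -- the factorization
  refine ⟨∑ i ∈ Finset.range d, u ^ i, u - 1, ?_, ?_, ?_⟩
  · -- geometric sum factor is nonconstant
    by_contra hcon
    push_neg at hcon
    obtain ⟨c, hc⟩ := eqC_of_td0 (Nat.le_zero.mp hcon)
    -- evaluate: the one-variable geometric sum polynomial is constant as a function
    have hgeval : ∀ t : ℂ, (∑ i ∈ Finset.range d, (Polynomial.X : Polynomial ℂ) ^ i).eval t
        = c := by
      intro t
      obtain ⟨y₀, hy₀⟩ := exists_eval_ne_zero hQ₁ne
      obtain ⟨x, hx⟩ := eval_surj hp1 (t / Q₁.eval y₀)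
      set z : Fin 2 → ℂ := ![x, y₀] with hz
      have hz0 : z 0 = x := rfl
      have hz1 : z 1 = y₀ := rfl
      have hut : MvPolynomial.aeval z u = t := by
        rw [hevu z, hz0, hz1, hx, div_mul_cancel₀ _ hy₀]
      have h1 := congrArg (MvPolynomial.aeval z) hc
      rw [map_sum] at h1
      simp only [map_pow, hut] at h1
      rw [MvPolynomial.aeval_C] at h1
      rw [Polynomial.eval_finset_sum]
      simp only [Polynomial.eval_pow, Polynomial.eval_X]
      simpa using h1
    have hgpoly : (∑ i ∈ Finset.range d, (Polynomial.X : Polynomial ℂ) ^ i)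
        = Polynomial.C c := by
      apply Polynomial.funext
      intro r
      rw [hgeval r]
      simp
    have hcoeff := congrArg (fun p => Polynomial.coeff p (d - 1)) hgpoly
    simp only [Polynomial.finset_sum_coeff, Polynomial.coeff_X_pow, Polynomial.coeff_C] at hcoeff
    rw [Finset.sum_ite_eq (Finset.range d) (d - 1) (fun _ => (1 : ℂ))] at hcoeff
    have hmem : d - 1 ∈ Finset.range d := Finset.mem_range.mpr (by omega)
    rw [if_pos hmem, if_neg (by omega)] at hcoeff
    exact one_ne_zero hcoeff
  · -- u - 1 is nonconstant
    by_contra hcon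
    push_neg at hcon
    obtain ⟨c, hc⟩ := eqC_of_td0 (Nat.le_zero.mp hcon)
    obtain ⟨x₀, hx₀⟩ := exists_eval_ne_zero hP₁ne
    obtain ⟨y₁, y₂, hy⟩ := exists_eval_ne hq1
    have hval : ∀ z : Fin 2 → ℂ, P₁.eval (z 0) * Q₁.eval (z 1) - 1 = c := by
      intro z
      have h1 := congrArg (MvPolynomial.aeval z) hc
      rw [map_sub, map_one, hevu z, MvPolynomial.aeval_C] at h1
      simpa using h1
    have h1 := hval ![x₀, y₁]
    have h2 := hval ![x₀, y₂]
    simp only [Matrix.cons_val_zero, Matrix.cons_val_one, Matrix.head_cons] at h1 h2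
    apply hy
    have h3 : P₁.eval x₀ * Q₁.eval y₁ = P₁.eval x₀ * Q₁.eval y₂ := by
      linear_combination h1 - h2
    exact mul_left_cancel₀ hx₀ h3
  · -- the factorization identity
    rw [hP1, hQ1, map_pow, map_pow, ← hA1, ← hB1, ← mul_pow, ← hu, ← geom_sum_mul]






lemma main_B (P Q : Polynomial ℂ) (hP : 0 < P.natDegree) (hQ : 0 < Q.natDegree)
    (G H : B) (hGH : FF P Q = G * H)
    (hGnc : ∀ c : ℂ, G ≠ Polynomial.C (Polynomial.C c))
    (hHnc : ∀ c : ℂ, H ≠ Polynomial.C (Polynomial.C c)) :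
    ∃ d : ℕ, 1 < d ∧ ∃ P₁ Q₁ : Polynomial ℂ, P = P₁ ^ d ∧ Q = Q₁ ^ d := by
  obtain ⟨hG, hH, hdeg1, hroot1, _hdegid1, _hk0⟩ := lemA hP hQ hGH
  have hswF : FF Q P = sw G * sw H := by
    have h1 := congrArg sw hGH
    rw [map_mul] at h1
    rw [← h1, FF, FF, map_sub, map_mul, sw_mapP, sw_constP, map_one]
    ring
  have hswF' : FF Q P = sw H * sw G := by rw [hswF]; ring
  obtain ⟨hG', hH', hdeg2, hroot2, hdegid2, hm0⟩ := lemA hQ hP hswF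
  obtain ⟨_, _, _, _, hdegid2H, hm0H⟩ := lemA hQ hP hswF'
  set p := P.natDegree with hpdef
  set n := Q.natDegree with hndef
  set k := G.natDegree with hkdef
  set m := (sw G).natDegree with hmdef
  -- m > 0 and m < n
  have hmpos : 0 < m := by
    rcases Nat.eq_zero_or_pos m with h | h
    · exfalso
      obtain ⟨c, _hc0, hc⟩ := hm0 h
      apply hGnc c
      have h2 := congrArg sw hc
      rw [sw_sw, sw_C_C] at h2
      exact h2
    · exact h
  have hmHpos : 0 < (sw H).natDegree := by
    rcases Nat.eq_zero_or_pos (sw H).natDegree with h | h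
    · exfalso
      obtain ⟨c, _hc0, hc⟩ := hm0H h
      apply hHnc c
      have h2 := congrArg sw hc
      rw [sw_sw, sw_C_C] at h2
      exact h2
    · exact h
  have hmn : m < n := by omega
  -- the degree link  m * p = n * k
  have hle1 : (sw G).leadingCoeff.natDegree ≤ k := natDegree_leadingCoeff_sw_le G
  have hle2 : (sw H).leadingCoeff.natDegree ≤ H.natDegree := natDegree_leadingCoeff_sw_le H
  have h1 : m * p ≤ n * k := by
    rw [← hdegid2]
    exact Nat.mul_le_mul_left n hle1
  have h2 : (sw H).natDegree * p ≤ n * H.natDegree := by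
    rw [← hdegid2H]
    exact Nat.mul_le_mul_left n hle2
  have e1 : m * p + (sw H).natDegree * p = n * p := by rw [← Nat.add_mul, hdeg2]
  have e2 : n * k + n * H.natDegree = n * p := by rw [← Nat.mul_add, hdeg1]
  have hmp : m * p = n * k := by omega
  obtain ⟨d, hd1, hfa, hea⟩ := nt_lemma hmpos hmn hP hmp
  have hdvdP : ∀ α : ℂ, d ∣ rootMultiplicity α P := by
    intro α
    exact hfa _ ⟨_, (hroot2 α).symm⟩
  have hdvdQ : ∀ β : ℂ, d ∣ rootMultiplicity β Q := by
    intro β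
    exact hea _ ⟨_, (hroot1 β).symm⟩
  obtain ⟨P₁, hP₁⟩ := pow_of_dvd_mults P (ne_zero_of_natDegree_gt hP) d (by omega) hdvdP
  obtain ⟨Q₁, hQ₁⟩ := pow_of_dvd_mults Q (ne_zero_of_natDegree_gt hQ) d (by omega) hdvdQ
  exact ⟨d, hd1, P₁, Q₁, hP₁, hQ₁⟩


end PQAux
end

theorem prod_sub_one_reducible_iff (P Q : Polynomial ℂ)
    (hP : 0 < P.natDegree) (hQ : 0 < Q.natDegree) :
    (Polynomial.aeval (MvPolynomial.X 0 : MvPolynomial (Fin 2) ℂ) P *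
        Polynomial.aeval (MvPolynomial.X 1 : MvPolynomial (Fin 2) ℂ) Q -
        1).IsReducibleOverC ↔
    ∃ d : ℕ, 1 < d ∧ ∃ P₁ Q₁ : Polynomial ℂ, P = P₁ ^ d ∧ Q = Q₁ ^ d := by
  constructor
  · rintro ⟨G, H, hG, hH, hF⟩
    apply PQAux.main_B P Q hP hQ (PQAux.T G) (PQAux.T H)
    · rw [← PQAux.T_F, hF, map_mul]
    · intro c
      exact PQAux.T_nonconst hG c
    · intro c
      exact PQAux.T_nonconst hH c
  · rintro ⟨d, hd, P₁, Q₁, hP1, hQ1⟩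
    obtain ⟨G, H, h1, h2, h3⟩ := PQAux.reverse_main P Q P₁ Q₁ hP hQ d hd hP1 hQ1
    exact ⟨G, H, h1, h2, h3⟩
end
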